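/- arXiv:1404.1310 — 12 statements merged into one kernel-verified Lean document; each statement's English description precedes it below -/
import Mathlib

section
/- If $\Sigma: [0,a) \to \mathbb{R}^{n\times n}$ takes values in symmetric positive definite matrices, the limit $\Sigma^{-1}(a-) := \lim_{\rho \to a} \Sigma^{-1}(\rho)$ exists, and the kernel of $\Sigma^{-1}(a-)$ is spanned by a normalized vector $e$, then $\lambda_n^{-1}(\Sigma(\rho)) \Sigma(\rho) \to e e'$ as $\rho \to a$, where $\lambda_n(\Sigma(\rho))$ denotes the largest eigenvalue of $\Sigma(\rho)$. -/
open Matrix Filter Set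

namespace Stmt0Aux

variable {n : ℕ}

noncomputable def ray (B : Matrix (Fin n) (Fin n) ℝ) : ℝ :=
  ⨆ v : {v : Fin n → ℝ // ∑ i, v i ^ 2 = 1}, (v : Fin n → ℝ) ⬝ᵥ B *ᵥ (v : Fin n → ℝ)

lemma unit_abs_le {v : Fin n → ℝ} (hv : ∑ i, v i ^ 2 = 1) (i : Fin n) : |v i| ≤ 1 := by
  have h1 : v i ^ 2 ≤ 1 := by
    rw [← hv]
    exact Finset.single_le_sum (fun j _ => sq_nonneg (v j)) (Finset.mem_univ i)
  nlinarith [abs_nonneg (v i), sq_abs (v i)]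

lemma dot_expand (B : Matrix (Fin n) (Fin n) ℝ) (v : Fin n → ℝ) :
    v ⬝ᵥ B *ᵥ v = ∑ i, ∑ j, v i * B i j * v j := by
  simp [dotProduct, mulVec, Finset.mul_sum, mul_assoc]

lemma quad_bound (B : Matrix (Fin n) (Fin n) ℝ) {v : Fin n → ℝ} (hv : ∑ i, v i ^ 2 = 1) :
    |v ⬝ᵥ B *ᵥ v| ≤ ∑ i, ∑ j, |B i j| := by
  rw [dot_expand]
  refine (Finset.abs_sum_le_sum_abs _ _).trans (Finset.sum_le_sum fun i _ => ?_)
  refine (Finset.abs_sum_le_sum_abs _ _).trans (Finset.sum_le_sum fun j _ => ?_)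
  have h1 := unit_abs_le hv i
  have h2 := unit_abs_le hv j
  have hb := abs_nonneg (B i j)
  calc |v i * B i j * v j| = |v i| * |B i j| * |v j| := by rw [abs_mul, abs_mul]
  _ ≤ 1 * |B i j| * 1 := by
      apply mul_le_mul (mul_le_mul h1 le_rfl hb (by linarith)) h2 (abs_nonneg _)
      positivity
  _ = |B i j| := by ring

lemma bdd (B : Matrix (Fin n) (Fin n) ℝ) :
    BddAbove (Set.range fun v : {v : Fin n → ℝ // ∑ i, v i ^ 2 = 1} =>
      (v : Fin n → ℝ) ⬝ᵥ B *ᵥ (v : Fin n → ℝ)) := by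
  refine ⟨∑ i, ∑ j, |B i j|, ?_⟩
  rintro x ⟨v, rfl⟩
  exact (le_abs_self _).trans (quad_bound B v.2)

lemma le_ray (B : Matrix (Fin n) (Fin n) ℝ) {v : Fin n → ℝ} (hv : ∑ i, v i ^ 2 = 1) :
    v ⬝ᵥ B *ᵥ v ≤ ray B :=
  le_ciSup (bdd B) ⟨v, hv⟩

lemma ray_le [Nonempty {v : Fin n → ℝ // ∑ i, v i ^ 2 = 1}]
    (B : Matrix (Fin n) (Fin n) ℝ) {t : ℝ}
    (h : ∀ v : Fin n → ℝ, (∑ i, v i ^ 2 = 1) → v ⬝ᵥ B *ᵥ v ≤ t) : ray B ≤ t :=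
  ciSup_le fun v => h v v.2

lemma ray_sub [Nonempty {v : Fin n → ℝ // ∑ i, v i ^ 2 = 1}]
    (B C : Matrix (Fin n) (Fin n) ℝ) :
    ray B ≤ ray C + ∑ i, ∑ j, |B i j - C i j| := by
  apply ray_le
  intro v hv
  have key : v ⬝ᵥ B *ᵥ v = v ⬝ᵥ C *ᵥ v + v ⬝ᵥ (B - C) *ᵥ v := by
    rw [sub_mulVec, dotProduct_sub]; ring
  have h1 := le_ray C hv
  have h2 : v ⬝ᵥ (B - C) *ᵥ v ≤ ∑ i, ∑ j, |B i j - C i j| := by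
    refine (le_abs_self _).trans ((quad_bound _ hv).trans ?_)
    simp [Matrix.sub_apply]
  linarith

lemma ray_smul [Nonempty {v : Fin n → ℝ // ∑ i, v i ^ 2 = 1}]
    {c : ℝ} (hc : 0 ≤ c) (B : Matrix (Fin n) (Fin n) ℝ) :
    ray (c • B) = c * ray B := by
  unfold ray
  have h : ∀ v : {v : Fin n → ℝ // ∑ i, v i ^ 2 = 1},
      (v : Fin n → ℝ) ⬝ᵥ (c • B) *ᵥ (v : Fin n → ℝ)
        = c * ((v : Fin n → ℝ) ⬝ᵥ B *ᵥ (v : Fin n → ℝ)) := by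
    intro v
    rw [smul_mulVec, dotProduct_smul, smul_eq_mul]
  simp_rw [h]
  rw [Real.mul_iSup_of_nonneg hc]

lemma herm_smul_one_sub (L : ℝ) {B : Matrix (Fin n) (Fin n) ℝ} (h : B.IsHermitian) :
    (L • (1 : Matrix (Fin n) (Fin n) ℝ) - B).IsHermitian := by
  unfold Matrix.IsHermitian at *
  rw [conjTranspose_sub, h, conjTranspose_smul]
  simp

lemma greatest_pos {B : Matrix (Fin n) (Fin n) ℝ} (hpd : B.PosDef) {L : ℝ}
    (hgt : IsGreatest {t : ℝ | ∃ v ≠ 0, B *ᵥ v = t • v} L) : 0 < L := by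
  obtain ⟨v, hv0, hveq⟩ := hgt.1
  have h1 : 0 < v ⬝ᵥ B *ᵥ v := by simpa using (posDef_iff_dotProduct_mulVec.mp hpd).2 hv0
  have h2 : v ⬝ᵥ B *ᵥ v = L * (∑ i, v i ^ 2) := by
    rw [hveq, dotProduct_smul, smul_eq_mul]
    congr 1
    simp [dotProduct, sq]
  have h3 : 0 ≤ ∑ i, v i ^ 2 := Finset.sum_nonneg fun i _ => sq_nonneg _
  nlinarith

lemma psd_smul_one_sub {B : Matrix (Fin n) (Fin n) ℝ} (hB : B.IsHermitian) {L : ℝ}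
    (hgt : IsGreatest {t : ℝ | ∃ v ≠ 0, B *ᵥ v = t • v} L) :
    (L • (1 : Matrix (Fin n) (Fin n) ℝ) - B).PosSemidef := by
  classical
  have hM : (L • (1 : Matrix (Fin n) (Fin n) ℝ) - B).IsHermitian := herm_smul_one_sub L hB
  apply hM.posSemidef_iff_eigenvalues_nonneg.mpr
  intro i
  set u : Fin n → ℝ := ⇑(hM.eigenvectorBasis i) with hu
  have hmu : (L • (1 : Matrix (Fin n) (Fin n) ℝ) - B) *ᵥ u = hM.eigenvalues i • u :=
    hM.mulVec_eigenvectorBasis i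
  have hune : u ≠ 0 := by
    intro h0
    have := hM.eigenvectorBasis.orthonormal.ne_zero i
    apply this
    ext j
    exact congrFun h0 j
  have hBu : B *ᵥ u = (L - hM.eigenvalues i) • u := by
    have h : L • u - B *ᵥ u = hM.eigenvalues i • u := by
      rw [← hmu, sub_mulVec, smul_mulVec, one_mulVec]
    rw [sub_smul, ← h]
    abel
  have hmem : L - hM.eigenvalues i ∈ {t : ℝ | ∃ v ≠ 0, B *ᵥ v = t • v} := ⟨u, hune, hBu⟩
  have := hgt.2 hmem
  rw [Pi.zero_apply]
  linarith

lemma ray_eq_greatest [Nonempty {v : Fin n → ℝ // ∑ i, v i ^ 2 = 1}]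
    {B : Matrix (Fin n) (Fin n) ℝ} (hB : B.IsHermitian) {L : ℝ}
    (hgt : IsGreatest {t : ℝ | ∃ v ≠ 0, B *ᵥ v = t • v} L) : ray B = L := by
  have hpsd := psd_smul_one_sub hB hgt
  apply le_antisymm
  · apply ray_le
    intro v hv
    have h1 : 0 ≤ v ⬝ᵥ (L • (1 : Matrix (Fin n) (Fin n) ℝ) - B) *ᵥ v := by
      simpa using (posSemidef_iff_dotProduct_mulVec.mp hpsd).2 v
    have h2 : v ⬝ᵥ (L • (1 : Matrix (Fin n) (Fin n) ℝ) - B) *ᵥ v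
        = L * (∑ i, v i ^ 2) - v ⬝ᵥ B *ᵥ v := by
      rw [sub_mulVec, dotProduct_sub, smul_mulVec, one_mulVec, dotProduct_smul,
        smul_eq_mul]
      congr 2
      simp [dotProduct, sq]
    rw [hv] at h2
    linarith
  · obtain ⟨v, hv0, hveq⟩ := hgt.1
    set c : ℝ := ∑ i, v i ^ 2 with hc
    have hcpos : 0 < c := by
      have hex : ∃ i, v i ≠ 0 := by
        by_contra h
        push_neg at h
        exact hv0 (funext h)
      obtain ⟨i, hi⟩ := hex
      exact Finset.sum_pos' (fun j _ => sq_nonneg _)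
        ⟨i, Finset.mem_univ i, by positivity⟩
    set u : Fin n → ℝ := (Real.sqrt c)⁻¹ • v with hu
    have hsq : Real.sqrt c ^ 2 = c := Real.sq_sqrt hcpos.le
    have hsne : Real.sqrt c ≠ 0 := by positivity
    have hunit : ∑ i, u i ^ 2 = 1 := by
      simp only [hu, Pi.smul_apply, smul_eq_mul, mul_pow, ← Finset.mul_sum, ← hc]
      field_simp
      exact hsq.symm
    have hval : u ⬝ᵥ B *ᵥ u = L := by
      have hBu : B *ᵥ u = L • u := by
        rw [hu, mulVec_smul, hveq, smul_comm]
      rw [hBu, dotProduct_smul, smul_eq_mul]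
      have huu : u ⬝ᵥ u = 1 := by
        rw [← hunit]; simp [dotProduct, sq]
      rw [huu, mul_one]
    calc L = u ⬝ᵥ B *ᵥ u := hval.symm
    _ ≤ ray B := le_ray B hunit

lemma dot_vecMulVec (v w : Fin n → ℝ) (u : Fin n → ℝ) :
    u ⬝ᵥ (vecMulVec v w) *ᵥ u = (∑ i, u i * v i) * (∑ j, w j * u j) := by
  simp only [vecMulVec_apply, mulVec, dotProduct, Finset.mul_sum, Finset.sum_mul]
  rw [Finset.sum_comm]
  apply Finset.sum_congr rfl; intro j _
  apply Finset.sum_congr rfl; intro i _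
  ring

lemma ray_ee [Nonempty {v : Fin n → ℝ // ∑ i, v i ^ 2 = 1}]
    {e : Fin n → ℝ} (he : ∑ i, e i ^ 2 = 1) : ray (vecMulVec e e) = 1 := by
  apply le_antisymm
  · apply ray_le
    intro v hv
    rw [dot_vecMulVec]
    have h1 : (∑ j, e j * v j) = (∑ i, v i * e i) := by
      apply Finset.sum_congr rfl; intros; ring
    rw [h1, ← sq]
    have := Finset.sum_mul_sq_le_sq_mul_sq Finset.univ v e
    rw [hv, he] at this
    simpa using this
  · have hv : e ⬝ᵥ (vecMulVec e e) *ᵥ e = 1 := by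
      rw [dot_vecMulVec]
      have h1 : (∑ i, e i * e i) = 1 := by
        rw [← he]; apply Finset.sum_congr rfl; intros; rw [sq]
      rw [h1, one_mul]
    calc (1:ℝ) = e ⬝ᵥ (vecMulVec e e) *ᵥ e := hv.symm
    _ ≤ _ := le_ray _ he

lemma trace_adjugate_pos {S : Matrix (Fin n) (Fin n) ℝ}
    (hpsd : S.PosSemidef) {e : Fin n → ℝ} (he : ∑ i, e i ^ 2 = 1)
    (hker : ∀ v : Fin n → ℝ, S *ᵥ v = 0 ↔ ∃ t : ℝ, v = t • e) :
    0 < (adjugate S).trace := by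
  classical
  have hS : S.IsHermitian := hpsd.1
  have he0 : e ≠ 0 := by
    intro h; rw [h] at he; simp at he
  have hSe : S *ᵥ e = 0 := (hker e).mpr ⟨1, (one_smul _ _).symm⟩
  have hdetS : S.det = 0 := by
    rw [← Matrix.exists_mulVec_eq_zero_iff]; exact ⟨e, he0, hSe⟩
  set ν := hS.eigenvalues with hν
  have hν0 : ∀ i, 0 ≤ ν i := hpsd.eigenvalues_nonneg
  have hprod : ∏ i, ν i = 0 := by
    have := hS.det_eq_prod_eigenvalues
    rw [hdetS] at this
    exact_mod_cast this.symm
  obtain ⟨i0, -, hi0⟩ := Finset.prod_eq_zero_iff.mp hprod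
  have hzero_vec : ∀ i, ν i = 0 → ∃ t : ℝ, t ≠ 0 ∧ ⇑(hS.eigenvectorBasis i) = t • e := by
    intro i hi
    have hmv : S *ᵥ ⇑(hS.eigenvectorBasis i) = 0 := by
      rw [hS.mulVec_eigenvectorBasis, ← hν, hi, zero_smul]
    obtain ⟨t, ht⟩ := (hker _).mp hmv
    refine ⟨t, ?_, ht⟩
    intro ht0
    rw [ht0, zero_smul] at ht
    apply hS.eigenvectorBasis.orthonormal.ne_zero i
    ext j
    exact congrFun ht j
  have huniq : ∀ j, j ≠ i0 → ν j ≠ 0 := by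
    intro j hj hνj
    obtain ⟨t0, ht00, ht0⟩ := hzero_vec i0 hi0
    obtain ⟨t1, ht10, ht1⟩ := hzero_vec j hνj
    have horth : (inner ℝ (hS.eigenvectorBasis i0) (hS.eigenvectorBasis j) : ℝ) = 0 :=
      hS.eigenvectorBasis.orthonormal.2 (Ne.symm hj)
    rw [EuclideanSpace.inner_eq_star_dotProduct] at horth
    have this : (∑ i, (hS.eigenvectorBasis i0) i * (hS.eigenvectorBasis j) i) = 0 := by
      simpa [dotProduct, mul_comm] using horth
    have h0 : ∀ i, hS.eigenvectorBasis i0 i = t0 * e i := fun i => by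
      have h := congrFun ht0 i; simpa using h
    have h1 : ∀ i, hS.eigenvectorBasis j i = t1 * e i := fun i => by
      have h := congrFun ht1 i; simpa using h
    have hsum : t0 * t1 * (∑ i, e i ^ 2) = 0 := by
      rw [Finset.mul_sum, ← this]
      apply Finset.sum_congr rfl; intro i _
      rw [h0 i, h1 i]; ring
    rw [he, mul_one] at hsum
    rcases mul_eq_zero.mp hsum with h | h
    · exact ht00 h
    · exact ht10 h
  set U : Matrix (Fin n) (Fin n) ℝ := (hS.eigenvectorUnitary : Matrix (Fin n) (Fin n) ℝ) with hU
  have hUU : star U * U = 1 := (mem_unitaryGroup_iff'.mp hS.eigenvectorUnitary.2)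
  have hDcast : Matrix.diagonal ((RCLike.ofReal : ℝ → ℝ) ∘ ν) = Matrix.diagonal ν := by
    congr 1
  have hspec : S = U * Matrix.diagonal ν * star U := by
    have := hS.spectral_theorem
    rw [hDcast] at this
    exact this
  have htr : (adjugate S).trace = (adjugate (Matrix.diagonal ν)).trace := by
    rw [hspec, adjugate_mul_distrib, adjugate_mul_distrib, trace_mul_comm, mul_assoc,
      ← adjugate_mul_distrib, hUU, adjugate_one, mul_one]
  rw [htr, adjugate_diagonal, trace_diagonal]
  apply Finset.sum_pos'
  · intro i _
    exact Finset.prod_nonneg fun j _ => hν0 j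
  · refine ⟨i0, Finset.mem_univ _, ?_⟩
    apply Finset.prod_pos
    intro j hj
    have hj' := Finset.ne_of_mem_erase hj
    exact lt_of_le_of_ne (hν0 j) (Ne.symm (huniq j hj'))

lemma adjugate_structure {S : Matrix (Fin n) (Fin n) ℝ} (hS : S.IsHermitian)
    {e : Fin n → ℝ} (he : ∑ i, e i ^ 2 = 1) (hdetS : S.det = 0)
    (hker : ∀ v : Fin n → ℝ, S *ᵥ v = 0 ↔ ∃ t : ℝ, v = t • e) :
    adjugate S = (adjugate S).trace • vecMulVec e e := by
  classical
  have hSt : Sᵀ = S := by simpa using hS.eq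
  have colzero : ∀ j, S *ᵥ (fun i => adjugate S i j) = 0 := by
    intro j
    ext i
    show ∑ k, S i k * adjugate S k j = 0
    rw [← Matrix.mul_apply, Matrix.mul_adjugate, hdetS]
    simp
  have ht : ∀ j, ∃ t : ℝ, (fun i => adjugate S i j) = t • e :=
    fun j => (hker _).mp (colzero j)
  choose t ht using ht
  have hadj : ∀ i j, adjugate S i j = t j * e i := by
    intro i j
    have := congrFun (ht j) i
    simpa using this
  have hsymm : ∀ i j, adjugate S i j = adjugate S j i := by
    intro i j
    conv_lhs => rw [← hSt, ← Matrix.adjugate_transpose]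
    rfl
  have hte : ∀ i j, t j * e i = t i * e j := by
    intro i j
    rw [← hadj i j, hsymm, hadj]
  set c : ℝ := ∑ i, t i * e i with hc
  have htc : ∀ j, t j = e j * c := by
    intro j
    calc t j = t j * ∑ i, e i ^ 2 := by rw [he, mul_one]
    _ = ∑ i, (t j * e i) * e i := by
        rw [Finset.mul_sum]; apply Finset.sum_congr rfl; intros; ring
    _ = ∑ i, (t i * e j) * e i := by
        apply Finset.sum_congr rfl; intro i _; rw [hte i j]
    _ = e j * c := by
        rw [hc, Finset.mul_sum]; apply Finset.sum_congr rfl; intros; ring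
  have htr : (adjugate S).trace = c := by
    rw [hc]
    simp only [Matrix.trace, Matrix.diag_apply]
    exact Finset.sum_congr rfl fun i _ => by rw [hadj i i]
  ext i j
  rw [hadj i j, htc j, htr]
  simp [vecMulVec_apply]
  ring

lemma adjugate_eq_det_smul_inv {M : Matrix (Fin n) (Fin n) ℝ} (h : M.det ≠ 0) :
    adjugate M = M.det • M⁻¹ := by
  rw [Matrix.inv_def, smul_smul, Ring.inverse_eq_inv, mul_inv_cancel₀ h, one_smul]

end Stmt0Aux

open Stmt0Aux

/-- If the inverse covariance matrices converge and the kernel of the limit is spanned by the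
normalized vector `e`, then the covariance matrices, scaled by their largest eigenvalue,
converge to `e eᵀ`. -/
theorem stmt0 {n : ℕ} (hn : 2 ≤ n) (a : ℝ) (ha : 0 < a)
    (Sig : ℝ → Matrix (Fin n) (Fin n) ℝ)
    (hpd : ∀ ρ ∈ Set.Ico (0:ℝ) a, (Sig ρ).PosDef)
    (S : Matrix (Fin n) (Fin n) ℝ)
    (hlim : Tendsto (fun ρ => (Sig ρ)⁻¹) (nhdsWithin a (Set.Ico 0 a)) (nhds S))
    (e : Fin n → ℝ) (he : ∑ i, e i ^ 2 = 1)
    (hker : ∀ v : Fin n → ℝ, S.mulVec v = 0 ↔ ∃ t : ℝ, v = t • e)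
    (lam : ℝ → ℝ)
    (hlam : ∀ ρ ∈ Set.Ico (0:ℝ) a,
      IsGreatest {t : ℝ | ∃ v ≠ 0, (Sig ρ).mulVec v = t • v} (lam ρ)) :
    Tendsto (fun ρ => (lam ρ)⁻¹ • Sig ρ) (nhdsWithin a (Set.Ico 0 a))
      (nhds (Matrix.vecMulVec e e)) := by
  classical
  haveI hne : Nonempty {v : Fin n → ℝ // ∑ i, v i ^ 2 = 1} := ⟨⟨e, he⟩⟩
  set l := nhdsWithin a (Set.Ico 0 a) with hldef
  haveI hlb : l.NeBot := by
    rw [hldef]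
    refine mem_closure_iff_nhdsWithin_neBot.mp ?_
    rw [closure_Ico ha.ne]
    exact ⟨ha.le, le_rfl⟩
  have hev : ∀ᶠ ρ in l, ρ ∈ Set.Ico (0:ℝ) a := eventually_mem_nhdsWithin
  -- pointwise facts on Ico
  have hfacts : ∀ ρ ∈ Set.Ico (0:ℝ) a,
      ((Sig ρ)⁻¹).PosDef ∧ adjugate ((Sig ρ)⁻¹) = ((Sig ρ)⁻¹).det • Sig ρ
        ∧ 0 < ((Sig ρ)⁻¹).det := by
    intro ρ hρ
    have hpdρ := hpd ρ hρ
    have hdu : IsUnit (Sig ρ).det := isUnit_iff_ne_zero.mpr hpdρ.det_pos.ne'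
    have hApd : ((Sig ρ)⁻¹).PosDef := hpdρ.inv
    have hdA : 0 < ((Sig ρ)⁻¹).det := hApd.det_pos
    have hAinv : ((Sig ρ)⁻¹)⁻¹ = Sig ρ := Matrix.nonsing_inv_nonsing_inv _ hdu
    have hadj : adjugate ((Sig ρ)⁻¹) = ((Sig ρ)⁻¹).det • Sig ρ := by
      rw [adjugate_eq_det_smul_inv hdA.ne', hAinv]
    exact ⟨hApd, hadj, hdA⟩
  -- S is hermitian
  have hSt : Sᵀ = S := by
    have h1 : Tendsto (fun ρ => ((Sig ρ)⁻¹)ᵀ) l (nhds Sᵀ) :=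
      ((continuous_id.matrix_transpose).tendsto S).comp hlim
    have h2 : (fun ρ => ((Sig ρ)⁻¹)ᵀ) =ᶠ[l] (fun ρ => (Sig ρ)⁻¹) := by
      filter_upwards [hev] with ρ hρ
      have := (hfacts ρ hρ).1.1
      simpa using this.eq
    exact tendsto_nhds_unique (h1.congr' h2) hlim
  have hSherm : S.IsHermitian := by
    show Sᴴ = S
    have : Sᴴ = Sᵀ := by
      ext i j
      simp [conjTranspose_apply]
    rw [this, hSt]
  -- quadratic form continuity
  have hquadcont : ∀ v : Fin n → ℝ,
      Continuous fun M : Matrix (Fin n) (Fin n) ℝ => v ⬝ᵥ M *ᵥ v := by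
    intro v
    simp only [dot_expand]
    apply continuous_finset_sum
    intro i _
    apply continuous_finset_sum
    intro j _
    exact (continuous_const.mul (continuous_id.matrix_elem i j)).mul continuous_const
  -- S is positive semidefinite
  have hSpsd : S.PosSemidef := by
    refine posSemidef_iff_dotProduct_mulVec.mpr ⟨hSherm, fun v => ?_⟩
    have h1 : Tendsto (fun ρ => v ⬝ᵥ ((Sig ρ)⁻¹) *ᵥ v) l (nhds (v ⬝ᵥ S *ᵥ v)) :=
      ((hquadcont v).tendsto S).comp hlim
    have h2 : ∀ᶠ ρ in l, 0 ≤ v ⬝ᵥ ((Sig ρ)⁻¹) *ᵥ v := by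
      filter_upwards [hev] with ρ hρ
      have := (posSemidef_iff_dotProduct_mulVec.mp (hfacts ρ hρ).1.posSemidef).2 v
      simpa using this
    have h3 : 0 ≤ v ⬝ᵥ S *ᵥ v := ge_of_tendsto h1 h2
    simpa using h3
  -- determinant of S is zero
  have he0 : e ≠ 0 := by
    intro h; rw [h] at he; simp at he
  have hSe : S *ᵥ e = 0 := (hker e).mpr ⟨1, (one_smul _ _).symm⟩
  have hdetS : S.det = 0 := by
    rw [← Matrix.exists_mulVec_eq_zero_iff]; exact ⟨e, he0, hSe⟩
  -- structure of adjugate S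
  have hstruct := adjugate_structure hSherm he hdetS hker
  set c : ℝ := (adjugate S).trace with hcdef
  have hcpos : 0 < c := trace_adjugate_pos hSpsd he hker
  have hrayS : ray (adjugate S) = c := by
    rw [hstruct, ray_smul hcpos.le, ray_ee he, mul_one]
  -- adjugate converges
  have hadjT : Tendsto (fun ρ => adjugate ((Sig ρ)⁻¹)) l (nhds (adjugate S)) :=
    ((continuous_id.matrix_adjugate).tendsto S).comp hlim
  -- entrywise absolute differences converge to zero
  have hD : Tendsto (fun ρ => ∑ i, ∑ j, |adjugate ((Sig ρ)⁻¹) i j - adjugate S i j|)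
      l (nhds 0) := by
    have h0 : (0:ℝ) = ∑ i : Fin n, ∑ j : Fin n, (0:ℝ) := by simp
    rw [h0]
    apply tendsto_finset_sum
    intro i _
    apply tendsto_finset_sum
    intro j _
    have hentry : Tendsto (fun ρ => adjugate ((Sig ρ)⁻¹) i j) l (nhds (adjugate S i j)) :=
      ((continuous_id.matrix_elem i j).tendsto (adjugate S)).comp hadjT
    have := (hentry.sub_const (adjugate S i j)).abs
    simpa using this
  -- ray converges to c
  have hray : Tendsto (fun ρ => ray (adjugate ((Sig ρ)⁻¹))) l (nhds c) := by
    have hub : ∀ ρ, ray (adjugate ((Sig ρ)⁻¹))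
        ≤ c + ∑ i, ∑ j, |adjugate ((Sig ρ)⁻¹) i j - adjugate S i j| := by
      intro ρ
      have := ray_sub (adjugate ((Sig ρ)⁻¹)) (adjugate S)
      rw [hrayS] at this
      exact this
    have hlbb : ∀ ρ, c - ∑ i, ∑ j, |adjugate ((Sig ρ)⁻¹) i j - adjugate S i j|
        ≤ ray (adjugate ((Sig ρ)⁻¹)) := by
      intro ρ
      have h1 := ray_sub (adjugate S) (adjugate ((Sig ρ)⁻¹))
      rw [hrayS] at h1
      have h2 : ∑ i, ∑ j, |adjugate S i j - adjugate ((Sig ρ)⁻¹) i j|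
          = ∑ i, ∑ j, |adjugate ((Sig ρ)⁻¹) i j - adjugate S i j| := by
        apply Finset.sum_congr rfl; intro i _
        apply Finset.sum_congr rfl; intro j _
        exact abs_sub_comm _ _
      rw [h2] at h1
      linarith
    have hg : Tendsto (fun ρ => c - ∑ i, ∑ j,
        |adjugate ((Sig ρ)⁻¹) i j - adjugate S i j|) l (nhds c) := by
      have := (tendsto_const_nhds (x := c) (f := l)).sub hD
      simpa using this
    have hh : Tendsto (fun ρ => c + ∑ i, ∑ j,
        |adjugate ((Sig ρ)⁻¹) i j - adjugate S i j|) l (nhds c) := by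
      have := (tendsto_const_nhds (x := c) (f := l)).add hD
      simpa using this
    exact tendsto_of_tendsto_of_tendsto_of_le_of_le hg hh
      (fun ρ => hlbb ρ) (fun ρ => hub ρ)
  -- the scaled adjugate converges to e eᵀ
  have hfinal : Tendsto (fun ρ => (ray (adjugate ((Sig ρ)⁻¹)))⁻¹ • adjugate ((Sig ρ)⁻¹))
      l (nhds (c⁻¹ • adjugate S)) :=
    (hray.inv₀ hcpos.ne').smul hadjT
  have hlimval : c⁻¹ • adjugate S = vecMulVec e e := by
    rw [hstruct, smul_smul, inv_mul_cancel₀ hcpos.ne', one_smul]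
  rw [hlimval] at hfinal
  -- eventual equality of the two functions
  have heq : (fun ρ => (ray (adjugate ((Sig ρ)⁻¹)))⁻¹ • adjugate ((Sig ρ)⁻¹))
      =ᶠ[l] (fun ρ => (lam ρ)⁻¹ • Sig ρ) := by
    filter_upwards [hev] with ρ hρ
    obtain ⟨hApd, hadj, hdA⟩ := hfacts ρ hρ
    have hlamρ := hlam ρ hρ
    have hlampos : 0 < lam ρ := greatest_pos (hpd ρ hρ) hlamρ
    have hraySig : ray (Sig ρ) = lam ρ := ray_eq_greatest (hpd ρ hρ).1 hlamρ
    have hrayadj : ray (adjugate ((Sig ρ)⁻¹)) = ((Sig ρ)⁻¹).det * lam ρ := by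
      rw [hadj, ray_smul hdA.le, hraySig]
    show (ray (adjugate ((Sig ρ)⁻¹)))⁻¹ • adjugate ((Sig ρ)⁻¹) = (lam ρ)⁻¹ • Sig ρ
    rw [hrayadj, hadj, smul_smul]
    have harith : (((Sig ρ)⁻¹).det * lam ρ)⁻¹ * ((Sig ρ)⁻¹).det = (lam ρ)⁻¹ := by
      rw [_root_.mul_inv_rev, mul_assoc, inv_mul_cancel₀ hdA.ne', mul_one]
    rw [harith]
  exact hfinal.congr' heq
end

section
/- Let $\Phi \subseteq \mathbb{R}^n$ be a Borel set invariant under the group $G_X = \{y \mapsto \gamma y + X\theta : \gamma \in \mathbb{R} \setminus \{0\}, \theta \in \mathbb{R}^k\}$ and satisfying $\emptyset \neq \Phi \neq \mathbb{R}^n$. Then $\mathrm{span}(X) \subseteq \mathrm{bd}(\Phi)$, where $\mathrm{bd}$ denotes the topological boundary. -/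
open Set

/-- A `G_X`-invariant rejection region `Φ` with `∅ ≠ Φ ≠ ℝⁿ` contains `span(X)` in its
topological boundary. -/
theorem stmt2 {n k : ℕ} (hn : 2 ≤ n) (hk : k < n)
    (X : Matrix (Fin n) (Fin k) ℝ)
    (Φ : Set (Fin n → ℝ)) (hmeas : MeasurableSet Φ)
    (hinv : ∀ γ : ℝ, γ ≠ 0 → ∀ θ : Fin k → ℝ, ∀ y ∈ Φ, γ • y + X.mulVec θ ∈ Φ)
    (hne : Φ.Nonempty) (hne' : Φ ≠ Set.univ) :
    Set.range X.mulVec ⊆ frontier Φ := by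
  rintro v ⟨θ, rfl⟩
  have key : ∀ (S : Set (Fin n → ℝ)), S.Nonempty →
      (∀ γ : ℝ, γ ≠ 0 → ∀ y ∈ S, γ • y + X.mulVec θ ∈ S) →
      X.mulVec θ ∈ closure S := by
    rintro S ⟨y, hy⟩ hS
    have htend : Filter.Tendsto (fun γ : ℝ => γ • y + X.mulVec θ)
        (nhdsWithin 0 {(0:ℝ)}ᶜ) (nhds (X.mulVec θ)) := by
      have hc : Continuous (fun γ : ℝ => γ • y + X.mulVec θ) :=
        (continuous_id.smul continuous_const).add continuous_const
      have := hc.tendsto' 0 (X.mulVec θ) (by simp)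
      exact this.mono_left nhdsWithin_le_nhds
    refine mem_closure_of_tendsto htend ?_
    exact Filter.eventually_of_mem self_mem_nhdsWithin (fun γ hγ => hS γ hγ y hy)
  have h1 : X.mulVec θ ∈ closure Φ := key Φ hne (fun γ hγ y hy => hinv γ hγ θ y hy)
  have h2 : X.mulVec θ ∈ closure Φᶜ := by
    refine key Φᶜ (Set.nonempty_compl.mpr hne') ?_
    intro γ hγ y hy hmem
    apply hy
    have := hinv γ⁻¹ (inv_ne_zero hγ) ((-γ⁻¹) • θ) _ hmem
    have heq : γ⁻¹ • (γ • y + X.mulVec θ) + X.mulVec ((-γ⁻¹) • θ) = y := by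
      rw [Matrix.mulVec_smul]
      rw [smul_add, smul_smul, inv_mul_cancel₀ hγ, one_smul]
      module
    rwa [heq] at this
  rw [frontier_eq_closure_inter_closure]
  exact ⟨h1, h2⟩
end

section
/- Let $C_X \in \mathbb{R}^{(n-k)\times n}$ satisfy $C_X C_X' = I_{n-k}$ and $C_X' C_X = \Pi_{\mathrm{span}(X)^{\perp}}$, let $B \in \mathbb{R}^{(n-k)\times(n-k)}$ be symmetric, and define $T_B(y) = y' C_X' B C_X y / \|C_X y\|^2$ for $y \notin \mathrm{span}(X)$ and $T_B(y) = \lambda_1(B)$ for $y \in \mathrm{span}(X)$. Let $\Phi_{B,\kappa} = \{y : T_B(y) > \kappa\}$. If $\emptyset \neq \Phi_{B,\kappa} \neq \mathbb{R}^n$, then $\mathrm{bd}(\Phi_{B,\kappa}) = \mathrm{span}(X) \cup \{y \in \mathbb{R}^n : T_B(y) = \kappa\}$. -/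
open Matrix Set

lemma rayleigh_lb {m : ℕ} (B : Matrix (Fin m) (Fin m) ℝ) (hB : B.IsSymm)
    (lam1 : ℝ) (hlam1 : IsLeast {t : ℝ | ∃ v ≠ 0, B.mulVec v = t • v} lam1)
    (z : Fin m → ℝ) : lam1 * (z ⬝ᵥ z) ≤ z ⬝ᵥ B.mulVec z := by
  classical
  have hH : B.IsHermitian := by
    rw [Matrix.IsHermitian, conjTranspose_eq_transpose_of_trivial]; exact hB
  set V : Matrix (Fin m) (Fin m) ℝ := (Matrix.IsHermitian.eigenvectorUnitary hH : Matrix (Fin m) (Fin m) ℝ) with hV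
  have hspec : B = V * diagonal hH.eigenvalues * star V := by
    have := hH.spectral_theorem
    simpa using this
  have hunit : V * star V = 1 := (Matrix.mem_unitaryGroup_iff).mp (Matrix.IsHermitian.eigenvectorUnitary hH).2
  set w : Fin m → ℝ := (star V) *ᵥ z with hw
  have hdot : ∀ u : Fin m → ℝ, z ⬝ᵥ (V *ᵥ u) = w ⬝ᵥ u := by
    intro u
    rw [Matrix.dotProduct_mulVec, hw]
    congr 1
    rw [Matrix.star_eq_conjTranspose, conjTranspose_eq_transpose_of_trivial, ← Matrix.vecMul_transpose, Matrix.transpose_transpose]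
  have h2 : z ⬝ᵥ z = ∑ i, w i ^ 2 := by
    have : z ⬝ᵥ z = z ⬝ᵥ ((V * star V) *ᵥ z) := by rw [hunit, Matrix.one_mulVec]
    rw [this, ← Matrix.mulVec_mulVec, hdot]
    simp [dotProduct, sq, ← hw]
  have h1 : z ⬝ᵥ B.mulVec z = ∑ i, hH.eigenvalues i * w i ^ 2 := by
    conv_lhs => rw [hspec]
    rw [← Matrix.mulVec_mulVec, ← Matrix.mulVec_mulVec, hdot]
    simp only [dotProduct, Matrix.mulVec_diagonal, sq]
    exact Finset.sum_congr rfl fun i _ => by ring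
  have hev : ∀ i, lam1 ≤ hH.eigenvalues i := by
    intro i
    refine hlam1.2 ⟨(hH.eigenvectorBasis i : EuclideanSpace ℝ (Fin m)), ?_, hH.mulVec_eigenvectorBasis i⟩
    exact fun h => (hH.eigenvectorBasis).toBasis.ne_zero i (by simpa using congrArg (WithLp.toLp 2) h)
  rw [h1, h2, Finset.mul_sum]
  refine Finset.sum_le_sum fun i _ => ?_
  exact mul_le_mul_of_nonneg_right (hev i) (sq_nonneg _)

/-- For the test statistic `T_B` (a ratio of quadratic forms, set equal to `λ₁(B)` on `span(X)`),
the boundary of a nontrivial rejection region `{T_B > κ}` equals `span(X) ∪ {T_B = κ}`. -/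
theorem stmt4 {n k : ℕ} (hn : 2 ≤ n) (hk : k < n)
    (X : Matrix (Fin n) (Fin k) ℝ) (hX : X.rank = k)
    (C : Matrix (Fin (n - k)) (Fin n) ℝ)
    (hC1 : C * Cᵀ = 1)
    (hC2 : ∀ v : Fin n → ℝ, (Cᵀ * C).mulVec v = 0 ↔ v ∈ Set.range X.mulVec)
    (B : Matrix (Fin (n - k)) (Fin (n - k)) ℝ) (hB : B.IsSymm)
    (lam1 : ℝ) (hlam1 : IsLeast {t : ℝ | ∃ v ≠ 0, B.mulVec v = t • v} lam1)
    (T : (Fin n → ℝ) → ℝ)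
    (hT1 : ∀ y ∉ Set.range X.mulVec,
      T y = (y ⬝ᵥ (Cᵀ * B * C).mulVec y) / (∑ i, (C.mulVec y) i ^ 2))
    (hT2 : ∀ y ∈ Set.range X.mulVec, T y = lam1)
    (κ : ℝ)
    (hne : {y : Fin n → ℝ | κ < T y}.Nonempty)
    (hne' : {y : Fin n → ℝ | κ < T y} ≠ Set.univ) :
    frontier {y : Fin n → ℝ | κ < T y}
      = Set.range X.mulVec ∪ {y : Fin n → ℝ | T y = κ} := by
  classical
  set S : Set (Fin n → ℝ) := Set.range X.mulVec with hSdef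
  -- dot product transfer through Cᵀ
  have hdotC : ∀ (y : Fin n → ℝ) (u : Fin (n - k) → ℝ),
      y ⬝ᵥ (Cᵀ *ᵥ u) = (C *ᵥ y) ⬝ᵥ u := by
    intro y u
    rw [Matrix.dotProduct_mulVec, Matrix.vecMul_transpose]
  -- membership characterization
  have hmem : ∀ y : Fin n → ℝ, y ∈ S ↔ C *ᵥ y = 0 := by
    intro y
    constructor
    · intro hy
      have h0 : (Cᵀ * C) *ᵥ y = 0 := (hC2 y).2 hy
      have h1 : (C *ᵥ y) ⬝ᵥ (C *ᵥ y) = 0 := by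
        have := congrArg (fun v => y ⬝ᵥ v) h0
        simpa [← Matrix.mulVec_mulVec, hdotC] using this
      exact dotProduct_self_eq_zero.mp h1
    · intro hy
      exact (hC2 y).mp (by rw [← Matrix.mulVec_mulVec, hy, Matrix.mulVec_zero])
  -- the quadratic form g
  set g : (Fin n → ℝ) → ℝ :=
    fun y => (C *ᵥ y) ⬝ᵥ (B *ᵥ (C *ᵥ y)) - κ * ((C *ᵥ y) ⬝ᵥ (C *ᵥ y)) with hgdef
  have hCcont : Continuous fun y : Fin n → ℝ => C *ᵥ y :=
    LinearMap.continuous_of_finiteDimensional (Matrix.mulVecLin C)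
  have hBcont : Continuous fun u : Fin (n - k) → ℝ => B *ᵥ u :=
    LinearMap.continuous_of_finiteDimensional (Matrix.mulVecLin B)
  have hgcont : Continuous g := by
    apply Continuous.sub
    · exact continuous_finset_sum _ fun i _ =>
        (((continuous_apply i).comp hCcont).mul
          ((continuous_apply i).comp (hBcont.comp hCcont)))
    · exact continuous_const.mul (continuous_finset_sum _ fun i _ =>
        (((continuous_apply i).comp hCcont).mul ((continuous_apply i).comp hCcont)))
  -- numerator rewriting
  have hnum : ∀ y : Fin n → ℝ, y ⬝ᵥ (Cᵀ * B * C) *ᵥ y = (C *ᵥ y) ⬝ᵥ (B *ᵥ (C *ᵥ y)) := by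
    intro y
    rw [← Matrix.mulVec_mulVec, ← Matrix.mulVec_mulVec, hdotC]
  have hden : ∀ y : Fin n → ℝ, (∑ i, (C *ᵥ y) i ^ 2) = (C *ᵥ y) ⬝ᵥ (C *ᵥ y) := by
    intro y; simp [dotProduct, sq]
  have hdenpos : ∀ y : Fin n → ℝ, y ∉ S → 0 < (C *ᵥ y) ⬝ᵥ (C *ᵥ y) := by
    intro y hy
    have hne0 : C *ᵥ y ≠ 0 := fun h => hy ((hmem y).mpr h)
    have h0 : (C *ᵥ y) ⬝ᵥ (C *ᵥ y) ≠ 0 := fun h => hne0 (dotProduct_self_eq_zero.mp h)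
    have hnn : 0 ≤ (C *ᵥ y) ⬝ᵥ (C *ᵥ y) := Finset.sum_nonneg fun i _ => mul_self_nonneg _
    exact lt_of_le_of_ne hnn (Ne.symm h0)
  -- lam1 ≤ κ
  have hlk : lam1 ≤ κ := by
    by_contra hcon
    push_neg at hcon
    apply hne'
    ext y
    simp only [Set.mem_setOf_eq, Set.mem_univ, iff_true]
    by_cases hy : y ∈ S
    · rw [hT2 y hy]; exact hcon
    · rw [hT1 y hy, hden]
      have hd := hdenpos y hy
      rw [lt_div_iff₀ hd, hnum]
      calc κ * ((C *ᵥ y) ⬝ᵥ (C *ᵥ y)) < lam1 * ((C *ᵥ y) ⬝ᵥ (C *ᵥ y)) :=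
            mul_lt_mul_of_pos_right hcon hd
        _ ≤ _ := rayleigh_lb B hB lam1 hlam1 _
  -- Φ = {g > 0}
  have hPhi : {y : Fin n → ℝ | κ < T y} = {y | 0 < g y} := by
    ext y
    simp only [Set.mem_setOf_eq, hgdef]
    by_cases hy : y ∈ S
    · have hz : C *ᵥ y = 0 := (hmem y).mp hy
      rw [hT2 y hy, hz]
      simp [not_lt.mpr hlk]
    · rw [hT1 y hy, hden, hnum]
      have hd := hdenpos y hy
      rw [lt_div_iff₀ hd]
      constructor <;> intro h <;> nlinarith
  -- {g = 0} = S ∪ {T = κ}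
  have hzero : {y : Fin n → ℝ | g y = 0} = S ∪ {y | T y = κ} := by
    ext y
    simp only [Set.mem_setOf_eq, Set.mem_union, hgdef]
    by_cases hy : y ∈ S
    · have hz : C *ᵥ y = 0 := (hmem y).mp hy
      simp [hz, hy]
    · have hd := hdenpos y hy
      rw [hT1 y hy, hden, hnum, div_eq_iff (ne_of_gt hd)]
      constructor
      · intro h; right; linarith
      · rintro (h | h)
        · exact absurd h hy
        · linarith
  -- symmetry of the bilinear form
  have hsymm : ∀ u v : Fin (n - k) → ℝ, u ⬝ᵥ (B *ᵥ v) = v ⬝ᵥ (B *ᵥ u) := by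
    intro u v
    conv_lhs => rw [← hB.eq]
    rw [Matrix.dotProduct_mulVec, Matrix.vecMul_transpose, dotProduct_comm]
  -- every zero of g is in the closure of {g > 0}
  obtain ⟨y₀, hy₀⟩ := hne
  have hy₀g : 0 < g y₀ := by rw [hPhi] at hy₀; exact hy₀
  have hy₀ne : y₀ ≠ 0 := by
    intro h
    rw [h] at hy₀g
    simp [hgdef, Matrix.mulVec_zero] at hy₀g
  have hclos : ∀ y : Fin n → ℝ, g y = 0 → y ∈ closure {y | 0 < g y} := by
    intro y hy
    set c : ℝ := (C *ᵥ y) ⬝ᵥ (B *ᵥ (C *ᵥ y₀)) - κ * ((C *ᵥ y) ⬝ᵥ (C *ᵥ y₀)) with hc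
    have hexp : ∀ t : ℝ, g (y + t • y₀) = 2 * t * c + t ^ 2 * g y₀ := by
      intro t
      have e1 : C *ᵥ (y + t • y₀) = C *ᵥ y + t • (C *ᵥ y₀) := by
        rw [Matrix.mulVec_add, Matrix.mulVec_smul]
      simp only [hgdef, e1, Matrix.mulVec_add, Matrix.mulVec_smul,
        add_dotProduct, dotProduct_add, smul_dotProduct,
        dotProduct_smul, smul_eq_mul]
      have s1 : (C *ᵥ y₀) ⬝ᵥ (B *ᵥ (C *ᵥ y)) = (C *ᵥ y) ⬝ᵥ (B *ᵥ (C *ᵥ y₀)) := hsymm _ _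
      have s2 : (C *ᵥ y₀) ⬝ᵥ (C *ᵥ y) = (C *ᵥ y) ⬝ᵥ (C *ᵥ y₀) := dotProduct_comm _ _
      have hy' : (C *ᵥ y) ⬝ᵥ (B *ᵥ (C *ᵥ y)) - κ * ((C *ᵥ y) ⬝ᵥ (C *ᵥ y)) = 0 := hy
      rw [s1, s2]
      linear_combination hy'
    rw [Metric.mem_closure_iff]
    intro ε hε
    have hn0 : 0 < ‖y₀‖ := norm_pos_iff.mpr hy₀ne
    set s : ℝ := if 0 ≤ c then 1 else -1 with hs
    set t : ℝ := s * (ε / (2 * ‖y₀‖)) with ht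
    have habs : |t| = ε / (2 * ‖y₀‖) := by
      have h1 : 0 < ε / (2 * ‖y₀‖) := by positivity
      rw [ht, abs_mul, abs_of_pos h1]
      rcases le_or_gt 0 c with h | h
      · simp [hs, h]
      · simp [hs, not_le.mpr h]
    have htne : t ≠ 0 := by
      intro h
      rw [h] at habs
      simp at habs
      have : 0 < ε / (2 * ‖y₀‖) := by positivity
      linarith [habs.symm ▸ this]
    have htc : 0 ≤ t * c := by
      rcases le_or_gt 0 c with h | h
      · have hspos : s = 1 := by simp [hs, h]
        have htpos : 0 < t := by rw [ht, hspos, one_mul]; positivity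
        exact mul_nonneg htpos.le h
      · have hsneg : s = -1 := by simp [hs, not_le.mpr h]
        have htneg : t < 0 := by
          rw [ht, hsneg]
          have : 0 < ε / (2 * ‖y₀‖) := by positivity
          linarith
        exact le_of_lt (mul_pos_of_neg_of_neg htneg h)
    refine ⟨y + t • y₀, ?_, ?_⟩
    · show 0 < g (y + t • y₀)
      rw [hexp t]
      have ht2 : 0 < t ^ 2 := lt_of_le_of_ne (sq_nonneg t) (Ne.symm (pow_ne_zero 2 htne))
      have h2 : 0 < t ^ 2 * g y₀ := mul_pos ht2 hy₀g
      nlinarith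
    · rw [dist_eq_norm]
      have : y - (y + t • y₀) = -(t • y₀) := by abel
      rw [this, norm_neg, norm_smul, Real.norm_eq_abs, habs]
      rw [div_mul_eq_mul_div, mul_comm]
      rw [div_lt_iff₀ (by positivity)]
      nlinarith
  -- assemble
  have hopen : IsOpen {y : Fin n → ℝ | 0 < g y} := isOpen_lt continuous_const hgcont
  have hclosub : closure {y : Fin n → ℝ | 0 < g y} ⊆ {y | 0 ≤ g y} :=
    closure_minimal (by intro y hy; exact le_of_lt (show (0:ℝ) < g y from hy)) (isClosed_le continuous_const hgcont)
  rw [hPhi, ← hzero]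
  ext y
  constructor
  · intro hy
    rw [frontier, hopen.interior_eq] at hy
    have h1 : 0 ≤ g y := hclosub hy.1
    have h2 : ¬ 0 < g y := hy.2
    show g y = 0
    exact le_antisymm (not_lt.mp h2) h1
  · intro hy
    have hy' : g y = 0 := hy
    rw [frontier, hopen.interior_eq]
    exact ⟨hclos y hy', by simp [Set.mem_setOf_eq, hy']⟩
end

section
/- Let $c: [0,a) \to (0,\infty)$ and a normalized vector $e \in \mathbb{R}^n$ be given, and let $\Sigma(\cdot)$ take values in symmetric positive definite $n\times n$ matrices. Then there exists a square root $L_*(\cdot)$ of $\Sigma(\cdot)$ (i.e., $L_*(\rho) L_*(\rho)' = \Sigma(\rho)$) such that $\Lambda := \lim_{\rho \to a} c(\rho) \Pi_{\mathrm{span}(e)^{\perp}} L_*(\rho)$ exists and is injective on $\mathrm{span}(e)^{\perp}$, if and only if $V := \lim_{\rho \to a} c^2(\rho) \Pi_{\mathrm{span}(e)^{\perp}} \Sigma(\rho) \Pi_{\mathrm{span}(e)^{\perp}}$ exists and is injective on $\mathrm{span}(e)^{\perp}$. -/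
open Matrix Filter Set

namespace Stmt6Aux

variable {n : ℕ}

/-- real conjTranspose is transpose -/
lemma ctr (M : Matrix (Fin n) (Fin n) ℝ) : Mᴴ = Mᵀ :=
  Matrix.ext fun _ _ => star_trivial _

open scoped Classical MatrixOrder in
noncomputable def msqrt (M : Matrix (Fin n) (Fin n) ℝ) : Matrix (Fin n) (Fin n) ℝ :=
  if h : M.PosSemidef then CFC.sqrt M else 0

open scoped MatrixOrder in
lemma msqrt_eq {M : Matrix (Fin n) (Fin n) ℝ} (h : M.PosSemidef) : msqrt M = CFC.sqrt M := dif_pos h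

open scoped MatrixOrder in
lemma msqrt_posSemidef {M : Matrix (Fin n) (Fin n) ℝ} (h : M.PosSemidef) :
    (msqrt M).PosSemidef := by rw [msqrt_eq h]; exact (CFC.sqrt_nonneg M).posSemidef

open scoped MatrixOrder in
lemma msqrt_mul_self {M : Matrix (Fin n) (Fin n) ℝ} (h : M.PosSemidef) :
    msqrt M * msqrt M = M := by rw [msqrt_eq h]; exact CFC.sqrt_mul_sqrt_self M h.nonneg

open scoped MatrixOrder in
lemma eq_msqrt {S M : Matrix (Fin n) (Fin n) ℝ} (hS : S.PosSemidef) (hM : M.PosSemidef)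
    (h : S * S = M) : S = msqrt M := by
  rw [msqrt_eq hM]; exact (CFC.sqrt_unique h hS.nonneg).symm

lemma msqrt_transpose {M : Matrix (Fin n) (Fin n) ℝ} (h : M.PosSemidef) :
    (msqrt M)ᵀ = msqrt M := by
  rw [← ctr]; exact (msqrt_posSemidef h).1

-- vecMulVec algebra
lemma mul_vecMulVec (M : Matrix (Fin n) (Fin n) ℝ) (v w : Fin n → ℝ) :
    M * vecMulVec v w = vecMulVec (M *ᵥ v) w := by
  ext i j
  simp [Matrix.mul_apply, vecMulVec_apply, Matrix.mulVec, dotProduct, Finset.sum_mul, mul_assoc]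

lemma vecMulVec_mul (v w : Fin n → ℝ) (M : Matrix (Fin n) (Fin n) ℝ) :
    vecMulVec v w * M = vecMulVec v (Mᵀ *ᵥ w) := by
  ext i j
  simp only [Matrix.mul_apply, vecMulVec_apply, Matrix.mulVec, dotProduct, transpose_apply,
    Finset.mul_sum]
  exact Finset.sum_congr rfl fun k _ => by ring

lemma vecMulVec_mul_vecMulVec (v w p q : Fin n → ℝ) :
    vecMulVec v w * vecMulVec p q = (w ⬝ᵥ p) • vecMulVec v q := by
  ext i j
  simp only [Matrix.mul_apply, vecMulVec_apply, Matrix.smul_apply, dotProduct, smul_eq_mul,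
    Finset.sum_mul, Finset.mul_sum]
  exact Finset.sum_congr rfl fun k _ => by ring

lemma vecMulVec_transpose (v w : Fin n → ℝ) : (vecMulVec v w)ᵀ = vecMulVec w v := by
  ext i j; simp [vecMulVec_apply, mul_comm]

lemma vecMulVec_mulVec (v w x : Fin n → ℝ) :
    vecMulVec v w *ᵥ x = (w ⬝ᵥ x) • v := by
  ext i
  simp only [Matrix.mulVec, vecMulVec_apply, dotProduct, Pi.smul_apply, smul_eq_mul,
    Finset.mul_sum, Finset.sum_mul]
  exact Finset.sum_congr rfl fun k _ => by ring

lemma smul_vecMulVec (r : ℝ) (v w : Fin n → ℝ) :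
    vecMulVec (r • v) w = r • vecMulVec v w := by
  ext i j; simp [vecMulVec_apply, mul_assoc]

variable {e : Fin n → ℝ}


section Proj
variable (he1 : e ⬝ᵥ e = 1)

local notation "P" => (1 : Matrix (Fin n) (Fin n) ℝ) - vecMulVec e e

lemma P_mulVec (x : Fin n → ℝ) : P *ᵥ x = x - (e ⬝ᵥ x) • e := by
  rw [sub_mulVec, one_mulVec, vecMulVec_mulVec]

lemma P_transpose : (P)ᵀ = P := by
  rw [transpose_sub, transpose_one, vecMulVec_transpose]

lemma P_vecMul (x : Fin n → ℝ) : x ᵥ* P = P *ᵥ x := by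
  rw [← mulVec_transpose, P_transpose]

include he1

lemma P_mulVec_e : P *ᵥ e = 0 := by
  rw [P_mulVec, he1, one_smul, sub_self]

lemma P_dot (x : Fin n → ℝ) : (P *ᵥ x) ⬝ᵥ e = 0 := by
  rw [P_mulVec, sub_dotProduct, smul_dotProduct, he1, smul_eq_mul, mul_one, dotProduct_comm,
    sub_self]

omit he1 in
lemma P_fix {x : Fin n → ℝ} (hx : x ⬝ᵥ e = 0) : P *ᵥ x = x := by
  rw [P_mulVec, dotProduct_comm e x, hx, zero_smul, sub_zero]

lemma P_mul_P : P * P = P := by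
  rw [sub_mul, one_mul, mul_sub, mul_one, vecMulVec_mul_vecMulVec, he1, one_smul]
  abel

omit he1 in
lemma dot_P_mulVec (x y : Fin n → ℝ) (hx : x ⬝ᵥ e = 0) : x ⬝ᵥ (P *ᵥ y) = x ⬝ᵥ y := by
  rw [dotProduct_mulVec, P_vecMul, P_fix hx]

end Proj

/-- surjectivity on the hyperplane from injectivity -/
lemma surj_on_perp (e : Fin n → ℝ) (M : Matrix (Fin n) (Fin n) ℝ)
    (hrange : ∀ x : Fin n → ℝ, x ⬝ᵥ e = 0 → (M *ᵥ x) ⬝ᵥ e = 0)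
    (hinj : ∀ x : Fin n → ℝ, x ⬝ᵥ e = 0 → M *ᵥ x = 0 → x = 0)
    {y : Fin n → ℝ} (hy : y ⬝ᵥ e = 0) : ∃ x, x ⬝ᵥ e = 0 ∧ M *ᵥ x = y := by
  classical
  let φ : (Fin n → ℝ) →ₗ[ℝ] ℝ :=
    { toFun := fun x => x ⬝ᵥ e
      map_add' := fun x y => add_dotProduct x y e
      map_smul' := fun r x => smul_dotProduct r x e }
  set W := LinearMap.ker φ with hW
  have hmem : ∀ x ∈ W, M.mulVecLin x ∈ W := by
    intro x hx
    simpa [W, φ, LinearMap.mem_ker] using hrange x (by simpa [W, φ, LinearMap.mem_ker] using hx)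
  let f : W →ₗ[ℝ] W := (M.mulVecLin).restrict hmem
  have hfinj : Function.Injective f := by
    rw [injective_iff_map_eq_zero]
    intro ⟨x, hx⟩ hfx
    have hx' : x ⬝ᵥ e = 0 := by simpa [W, φ, LinearMap.mem_ker] using hx
    have : M *ᵥ x = 0 := by
      have := congrArg Subtype.val hfx
      simpa [f, LinearMap.restrict_apply] using this
    exact Subtype.ext (hinj x hx' this)
  have hfsurj : Function.Surjective f := LinearMap.injective_iff_surjective.mp hfinj
  obtain ⟨⟨x, hx⟩, hfx⟩ := hfsurj ⟨y, by simpa [W, φ, LinearMap.mem_ker] using hy⟩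
  refine ⟨x, by simpa [W, φ, LinearMap.mem_ker] using hx, ?_⟩
  have := congrArg Subtype.val hfx
  simpa [f, LinearMap.restrict_apply] using this

section Exists
variable {Sg : Matrix (Fin n) (Fin n) ℝ}

local notation "P" => (1 : Matrix (Fin n) (Fin n) ℝ) - vecMulVec e e

lemma psd_smul {M : Matrix (Fin n) (Fin n) ℝ} (h : M.PosSemidef) {r : ℝ} (hr : 0 ≤ r) :
    (r • M).PosSemidef := by
  refine .of_dotProduct_mulVec_nonneg ?_ fun x => ?_
  · show (r • M)ᴴ = r • M
    rw [conjTranspose_smul, h.1]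
    congr 1
  · rw [smul_mulVec, dotProduct_smul]
    exact smul_nonneg hr (h.dotProduct_mulVec_nonneg x)

lemma N_posSemidef (hS : Sg.PosDef) {r : ℝ} (hr : 0 ≤ r) :
    (r • (P * Sg * P)).PosSemidef := by
  have h1 : (P * Sg * (P)ᴴ).PosSemidef := hS.posSemidef.mul_mul_conjTranspose_same P
  rw [ctr, P_transpose] at h1
  exact psd_smul h1 hr

lemma vecMulVec_zero_right (v : Fin n → ℝ) : vecMulVec v (0 : Fin n → ℝ) = 0 := by
  ext i j; simp [vecMulVec_apply]

lemma vecMulVec_zero_left (v : Fin n → ℝ) : vecMulVec (0 : Fin n → ℝ) v = 0 := by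
  ext i j; simp [vecMulVec_apply]

lemma smul_vecMulVec_right (r : ℝ) (v w : Fin n → ℝ) :
    vecMulVec v (r • w) = r • vecMulVec v w := by
  ext i j; simp [vecMulVec_apply, mul_left_comm]

lemma sigma_decomp (he1 : e ⬝ᵥ e = 1) (hsym : Sgᵀ = Sg) :
    P * Sg * P + vecMulVec (P *ᵥ (Sg *ᵥ e)) e + vecMulVec e (P *ᵥ (Sg *ᵥ e))
      + (e ⬝ᵥ (Sg *ᵥ e)) • vecMulVec e e = Sg := by
  set Q : Matrix (Fin n) (Fin n) ℝ := vecMulVec e e with hQ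
  have hPQ : (P : Matrix (Fin n) (Fin n) ℝ) + Q = 1 := sub_add_cancel 1 Q
  have h1 : P * Sg * Q = vecMulVec (P *ᵥ (Sg *ᵥ e)) e := by
    rw [hQ, mul_vecMulVec, mulVec_mulVec]
  have h2 : Q * Sg * P = vecMulVec e (P *ᵥ (Sg *ᵥ e)) := by
    rw [mul_assoc, hQ, vecMulVec_mul, transpose_mul, P_transpose, hsym, mulVec_mulVec]
  have h3 : Q * Sg * Q = (e ⬝ᵥ (Sg *ᵥ e)) • vecMulVec e e := by
    rw [hQ, vecMulVec_mul, hsym, vecMulVec_mul_vecMulVec, dotProduct_comm]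
  calc P * Sg * P + vecMulVec (P *ᵥ (Sg *ᵥ e)) e + vecMulVec e (P *ᵥ (Sg *ᵥ e))
      + (e ⬝ᵥ (Sg *ᵥ e)) • vecMulVec e e
      = P * Sg * P + P * Sg * Q + (Q * Sg * P + Q * Sg * Q) := by
        rw [h1, h2, h3, add_assoc]
    _ = (P + Q) * Sg * (P + Q) := by
        rw [add_mul, add_mul, mul_add, mul_add, add_assoc]
    _ = Sg := by rw [hPQ, one_mul, mul_one]

lemma exists_sqrt_factor (he1 : e ⬝ᵥ e = 1) (hS : Sg.PosDef) {c : ℝ} (hc : 0 < c) :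
    ∃ L : Matrix (Fin n) (Fin n) ℝ,
      L * Lᵀ = Sg ∧ c • (P * L) = msqrt (c ^ 2 • (P * Sg * P)) := by
  have hc2 : (0:ℝ) ≤ c ^ 2 := sq_nonneg c
  set N : Matrix (Fin n) (Fin n) ℝ := c ^ 2 • (P * Sg * P) with hN
  have hNpsd : N.PosSemidef := N_posSemidef hS hc2
  set S := msqrt N with hSdef
  have hSpsd : S.PosSemidef := msqrt_posSemidef hNpsd
  have hSS : S * S = N := msqrt_mul_self hNpsd
  have hSt : Sᵀ = S := msqrt_transpose hNpsd
  have hSsym : ∀ x, x ᵥ* S = S *ᵥ x := fun x => by rw [← mulVec_transpose, hSt]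
  have hSgt : Sgᵀ = Sg := by rw [← ctr]; exact hS.1
  have hSgsym : ∀ x, x ᵥ* Sg = Sg *ᵥ x := fun x => by rw [← mulVec_transpose, hSgt]
  have hNe : N *ᵥ e = 0 := by
    rw [hN, smul_mulVec, ← mulVec_mulVec, P_mulVec_e he1, mulVec_zero, smul_zero]
  have hSe : S *ᵥ e = 0 := by
    have h0 : (S *ᵥ e) ⬝ᵥ (S *ᵥ e) = 0 := by
      calc (S *ᵥ e) ⬝ᵥ (S *ᵥ e) = (e ᵥ* S) ⬝ᵥ (S *ᵥ e) := by rw [hSsym]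
        _ = e ⬝ᵥ (S *ᵥ (S *ᵥ e)) := (dotProduct_mulVec e S (S *ᵥ e)).symm
        _ = e ⬝ᵥ (N *ᵥ e) := by rw [mulVec_mulVec, hSS]
        _ = 0 := by rw [hNe, dotProduct_zero]
    exact dotProduct_self_eq_zero.mp h0
  have hSrange : ∀ x : Fin n → ℝ, (S *ᵥ x) ⬝ᵥ e = 0 := fun x => by
    rw [dotProduct_comm, dotProduct_mulVec, hSsym, hSe, zero_dotProduct]
  have hquad : ∀ x : Fin n → ℝ, x ⬝ᵥ e = 0 → x ⬝ᵥ (N *ᵥ x) = c ^ 2 * (x ⬝ᵥ (Sg *ᵥ x)) := by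
    intro x hx
    rw [hN, smul_mulVec, dotProduct_smul, smul_eq_mul]
    congr 1
    rw [← mulVec_mulVec, ← mulVec_mulVec, P_fix hx, dot_P_mulVec _ _ hx]
  have hSinj : ∀ x : Fin n → ℝ, x ⬝ᵥ e = 0 → S *ᵥ x = 0 → x = 0 := by
    intro x hx hSx
    by_contra hne
    have h1 : x ⬝ᵥ (N *ᵥ x) = 0 := by
      rw [← hSS, ← mulVec_mulVec, hSx, mulVec_zero, dotProduct_zero]
    have h2 : 0 < x ⬝ᵥ (Sg *ᵥ x) := by simpa using hS.dotProduct_mulVec_pos hne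
    have h3 := hquad x hx
    nlinarith [pow_pos hc 2]
  obtain ⟨w, hw, hSw⟩ := surj_on_perp e S (fun x _ => hSrange x) hSinj
    (y := c • (P *ᵥ (Sg *ᵥ e)))
    (by rw [smul_dotProduct, P_dot he1, smul_zero])
  obtain ⟨z, hz, hSz⟩ := surj_on_perp e S (fun x _ => hSrange x) hSinj (y := c • w)
    (by rw [smul_dotProduct, hw, smul_zero])
  -- scalar quantities
  set γ : ℝ := e ⬝ᵥ (Sg *ᵥ e) with hγ
  set ww : ℝ := w ⬝ᵥ w with hww
  have hcne : c ≠ 0 := hc.ne'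
  have hzSge : z ⬝ᵥ (Sg *ᵥ e) = ww := by
    have h1 : z ⬝ᵥ (Sg *ᵥ e) = z ⬝ᵥ (P *ᵥ (Sg *ᵥ e)) := (dot_P_mulVec _ _ hz).symm
    have h2 : z ⬝ᵥ (c • (P *ᵥ (Sg *ᵥ e))) = z ⬝ᵥ (S *ᵥ w) := by rw [← hSw]
    rw [dotProduct_smul, ← h1, smul_eq_mul] at h2
    have h3 : z ⬝ᵥ (S *ᵥ w) = (S *ᵥ z) ⬝ᵥ w := by rw [dotProduct_mulVec, hSsym]
    rw [h3, hSz, smul_dotProduct, smul_eq_mul, ← hww] at h2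
    exact mul_left_cancel₀ hcne h2
  have heSgz : e ⬝ᵥ (Sg *ᵥ z) = ww := by
    rw [dotProduct_mulVec, hSgsym, dotProduct_comm, hzSge]
  have hzSgz : z ⬝ᵥ (Sg *ᵥ z) = ww := by
    have h1 : z ⬝ᵥ (N *ᵥ z) = c ^ 2 * (z ⬝ᵥ (Sg *ᵥ z)) := hquad z hz
    have h2 : z ⬝ᵥ (N *ᵥ z) = c ^ 2 * ww := by
      rw [← hSS, ← mulVec_mulVec, dotProduct_mulVec, hSsym, hSz, smul_dotProduct,
        dotProduct_smul, smul_eq_mul, smul_eq_mul, ← hww]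
      ring
    have := h2.symm.trans h1
    field_simp at this
    linarith
  have hpos : 0 < γ - ww := by
    have hzene : z - e ≠ 0 := by
      intro h
      have : z = e := sub_eq_zero.mp h
      rw [this, he1] at hz
      norm_num at hz
    have h2 : 0 < (z - e) ⬝ᵥ (Sg *ᵥ (z - e)) := by simpa using hS.dotProduct_mulVec_pos hzene
    have hexp : (z - e) ⬝ᵥ (Sg *ᵥ (z - e)) = γ - ww := by
      rw [mulVec_sub, dotProduct_sub, sub_dotProduct, sub_dotProduct, hzSgz, hzSge, heSgz, hγ]
      ring
    linarith [hexp ▸ h2]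
  set β : ℝ := Real.sqrt (γ - ww) with hβ
  have hβ2 : β * β = γ - ww := Real.mul_self_sqrt hpos.le
  set u : Fin n → ℝ := w + β • e with hu
  have hSu : S *ᵥ u = c • (P *ᵥ (Sg *ᵥ e)) := by
    rw [hu, mulVec_add, hSw, mulVec_smul, hSe, smul_zero, add_zero]
  have huu : u ⬝ᵥ u = γ := by
    rw [hu, add_dotProduct, dotProduct_add, dotProduct_add, dotProduct_smul, smul_dotProduct,
      smul_dotProduct, dotProduct_smul, he1, dotProduct_comm e w, hw]
    simp only [smul_eq_mul]
    rw [← hww]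
    nlinarith [hβ2]
  refine ⟨c⁻¹ • S + vecMulVec e u, ?_, ?_⟩
  · -- L * Lᵀ = Sg
    have hLt : (c⁻¹ • S + vecMulVec e u)ᵀ = c⁻¹ • S + vecMulVec u e := by
      rw [transpose_add, transpose_smul, hSt, vecMulVec_transpose]
    rw [hLt, add_mul, mul_add, mul_add]
    have t1 : (c⁻¹ • S) * (c⁻¹ • S) = P * Sg * P := by
      rw [smul_mul_assoc, mul_smul_comm, smul_smul, hSS, hN, smul_smul]
      rw [show c⁻¹ * c⁻¹ * c ^ 2 = 1 by field_simp]
      rw [one_smul]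
    have t2 : (c⁻¹ • S) * vecMulVec u e = vecMulVec (P *ᵥ (Sg *ᵥ e)) e := by
      rw [smul_mul_assoc, mul_vecMulVec, hSu, smul_vecMulVec, smul_smul,
        inv_mul_cancel₀ hcne, one_smul]
    have t3 : vecMulVec e u * (c⁻¹ • S) = vecMulVec e (P *ᵥ (Sg *ᵥ e)) := by
      rw [mul_smul_comm, vecMulVec_mul, hSt, hSu, smul_vecMulVec_right, smul_smul,
        inv_mul_cancel₀ hcne, one_smul]
    have t4 : vecMulVec e u * vecMulVec u e = γ • vecMulVec e e := by
      rw [vecMulVec_mul_vecMulVec, huu]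
    rw [t1, t2, t3, t4, ← add_assoc]
    exact sigma_decomp he1 hSgt
  · -- c • (P * L) = msqrt N
    have hPS : P * S = S := by
      rw [sub_mul, one_mul, vecMulVec_mul, hSt, hSe, vecMulVec_zero_right, sub_zero]
    rw [mul_add, mul_smul_comm, hPS, mul_vecMulVec, P_mulVec_e he1, vecMulVec_zero_left,
      add_zero, smul_smul, mul_inv_cancel₀ hcne, one_smul]


end Exists

lemma psd_diag_nonneg {M : Matrix (Fin n) (Fin n) ℝ} (h : M.PosSemidef) (i : Fin n) :
    0 ≤ M i i := by
  exact h.diag_nonneg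

lemma tendsto_msqrt {l : Filter ℝ} [l.NeBot] {N : ℝ → Matrix (Fin n) (Fin n) ℝ}
    {V : Matrix (Fin n) (Fin n) ℝ} (hNpsd : ∀ᶠ ρ in l, (N ρ).PosSemidef)
    (hNV : Tendsto N l (nhds V)) (hV : V.PosSemidef) :
    Tendsto (fun ρ => msqrt (N ρ)) l (nhds (msqrt V)) := by
  set C : ℝ := Real.sqrt (∑ i, (V i i + 1)) with hC
  -- eventual entrywise bound on msqrt (N ρ)
  have hdiag : ∀ᶠ ρ in l, ∀ i : Fin n, N ρ i i < V i i + 1 := by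
    rw [eventually_all]
    intro i
    have hcont : Continuous (fun M : Matrix (Fin n) (Fin n) ℝ => M i i) :=
      (continuous_apply i).comp (continuous_apply i)
    have h1 : Tendsto (fun ρ => N ρ i i) l (nhds (V i i)) := (hcont.tendsto V).comp hNV
    exact h1.eventually_lt_const (lt_add_one _)
  have hbound : ∀ᶠ ρ in l, ∀ i j, msqrt (N ρ) i j ∈ Set.Icc (-C) C := by
    filter_upwards [hNpsd, hdiag] with ρ hψ hd
    intro i j
    have hSt : (msqrt (N ρ))ᵀ = msqrt (N ρ) := msqrt_transpose hψ
    have hsq : (msqrt (N ρ) * msqrt (N ρ)) i i = N ρ i i := by rw [msqrt_mul_self hψ]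
    have hsym : ∀ p q : Fin n, msqrt (N ρ) p q = msqrt (N ρ) q p :=
      fun p q => (congrFun (congrFun hSt p) q).symm
    have hsum : ∑ k, msqrt (N ρ) i k * msqrt (N ρ) i k = N ρ i i := by
      rw [← hsq, Matrix.mul_apply]
      exact Finset.sum_congr rfl fun k _ => by rw [hsym i k]
    have h1 : msqrt (N ρ) i j ^ 2 ≤ N ρ i i := by
      rw [← hsum, pow_two]
      exact Finset.single_le_sum (f := fun k => msqrt (N ρ) i k * msqrt (N ρ) i k)
        (fun k _ => mul_self_nonneg _) (Finset.mem_univ j)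
    have h2 : N ρ i i ≤ ∑ k, (V k k + 1) := by
      calc N ρ i i ≤ V i i + 1 := (hd i).le
        _ ≤ ∑ k, (V k k + 1) := Finset.single_le_sum (f := fun k => V k k + 1)
            (fun k _ => show (0:ℝ) ≤ V k k + 1 by linarith [psd_diag_nonneg hV k])
            (Finset.mem_univ i)
    have habs : |msqrt (N ρ) i j| ≤ C := Real.abs_le_sqrt (h1.trans h2)
    exact abs_le.mp habs
  -- compact box
  have hK : IsCompact {M : Matrix (Fin n) (Fin n) ℝ | ∀ i j, M i j ∈ Set.Icc (-C) C} := by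
    have : {M : Matrix (Fin n) (Fin n) ℝ | ∀ i j, M i j ∈ Set.Icc (-C) C}
        = Set.pi Set.univ (fun _ : Fin n => Set.pi Set.univ
            (fun _ : Fin n => Set.Icc (-C) C)) := by
      ext M
      constructor
      · intro h i _ j _
        exact h i j
      · intro h i j
        exact h i (Set.mem_univ i) j (Set.mem_univ j)
    rw [this]
    exact isCompact_univ_pi fun _ => isCompact_univ_pi fun _ => isCompact_Icc
  rw [tendsto_iff_ultrafilter]
  intro u hu
  have huNpsd : ∀ᶠ ρ in (u : Filter ℝ), (N ρ).PosSemidef := hu hNpsd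
  have huB : ∀ᶠ ρ in (u : Filter ℝ), ∀ i j, msqrt (N ρ) i j ∈ Set.Icc (-C) C := hu hbound
  obtain ⟨S, _, hS⟩ := hK.ultrafilter_le_nhds' (u.map fun ρ => msqrt (N ρ))
    (Ultrafilter.mem_map.mpr huB)
  have hS' : Tendsto (fun ρ => msqrt (N ρ)) (u : Filter ℝ) (nhds S) := by
    rwa [Ultrafilter.coe_map] at hS
  -- S is psd
  have hSpsd : S.PosSemidef := by
    refine .of_dotProduct_mulVec_nonneg ?_ ?_
    · show Sᴴ = S
      rw [ctr]
      have h1 : Tendsto (fun ρ => (msqrt (N ρ))ᵀ) (u : Filter ℝ) (nhds Sᵀ) :=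
        ((continuous_id.matrix_transpose).tendsto S).comp hS'
      have h2 : Tendsto (fun ρ => (msqrt (N ρ))ᵀ) (u : Filter ℝ) (nhds S) := by
        refine hS'.congr' ?_
        filter_upwards [huNpsd] with ρ hψ
        exact (msqrt_transpose hψ).symm
      exact tendsto_nhds_unique h1 h2
    · intro x
      have h1 : Tendsto (fun ρ => star x ⬝ᵥ (msqrt (N ρ)) *ᵥ x) (u : Filter ℝ)
          (nhds (star x ⬝ᵥ S *ᵥ x)) := by
        have hcont : Continuous (fun M : Matrix (Fin n) (Fin n) ℝ => star x ⬝ᵥ M *ᵥ x) :=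
          (continuous_const).dotProduct ((continuous_id.matrix_mulVec continuous_const))
        exact (hcont.tendsto S).comp hS'
      refine ge_of_tendsto h1 ?_
      filter_upwards [huNpsd] with ρ hψ
      exact (msqrt_posSemidef hψ).dotProduct_mulVec_nonneg x
  -- S * S = V
  have hSS : S * S = V := by
    have h1 : Tendsto (fun ρ => msqrt (N ρ) * msqrt (N ρ)) (u : Filter ℝ) (nhds (S * S)) :=
      hS'.mul hS'
    have h2 : Tendsto (fun ρ => msqrt (N ρ) * msqrt (N ρ)) (u : Filter ℝ) (nhds V) := by
      refine (hNV.mono_left hu).congr' ?_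
      filter_upwards [huNpsd] with ρ hψ
      exact (msqrt_mul_self hψ).symm
    exact tendsto_nhds_unique h1 h2
  rw [← eq_msqrt hSpsd hV hSS]
  exact hS'

end Stmt6Aux

open Stmt6Aux in
/-- Lemma on Assumption ASCII: there exists a square root `L⋆` of `Σ(·)` with
`c(ρ) Π_{e⊥} L⋆(ρ)` converging to a matrix injective on `span(e)⊥`, if and only if
`c²(ρ) Π_{e⊥} Σ(ρ) Π_{e⊥}` converges to a matrix injective on `span(e)⊥`.
Here `Π_{e⊥} = I - e eᵀ` for the normalized vector `e`. -/
theorem stmt6 {n : ℕ} (hn : 2 ≤ n) (a : ℝ) (ha : 0 < a)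
    (Sig : ℝ → Matrix (Fin n) (Fin n) ℝ)
    (hpd : ∀ ρ ∈ Set.Ico (0:ℝ) a, (Sig ρ).PosDef)
    (c : ℝ → ℝ) (hc : ∀ ρ ∈ Set.Ico (0:ℝ) a, 0 < c ρ)
    (e : Fin n → ℝ) (he : ∑ i, e i ^ 2 = 1) :
    (∃ (L : ℝ → Matrix (Fin n) (Fin n) ℝ) (Lam : Matrix (Fin n) (Fin n) ℝ),
        (∀ ρ ∈ Set.Ico (0:ℝ) a, L ρ * (L ρ)ᵀ = Sig ρ) ∧
        Tendsto (fun ρ => c ρ • ((1 - Matrix.vecMulVec e e) * L ρ))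
          (nhdsWithin a (Set.Ico 0 a)) (nhds Lam) ∧
        (∀ h : Fin n → ℝ, h ⬝ᵥ e = 0 → Lam.mulVec h = 0 → h = 0)) ↔
    (∃ V : Matrix (Fin n) (Fin n) ℝ,
        Tendsto
          (fun ρ => (c ρ) ^ 2 •
            ((1 - Matrix.vecMulVec e e) * Sig ρ * (1 - Matrix.vecMulVec e e)))
          (nhdsWithin a (Set.Ico 0 a)) (nhds V) ∧
        (∀ h : Fin n → ℝ, h ⬝ᵥ e = 0 → V.mulVec h = 0 → h = 0)) := by
  classical
  have he1 : e ⬝ᵥ e = 1 := by simpa [dotProduct, pow_two] using he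
  haveI hne : (nhdsWithin a (Set.Ico (0:ℝ) a)).NeBot := by
    refine mem_closure_iff_nhdsWithin_neBot.mp ?_
    rw [closure_Ico ha.ne]
    exact right_mem_Icc.mpr ha.le
  have hev : ∀ᶠ ρ in nhdsWithin a (Set.Ico (0:ℝ) a), ρ ∈ Set.Ico (0:ℝ) a :=
    eventually_mem_nhdsWithin
  constructor
  · rintro ⟨L, Lam, hL, htend, hinj⟩
    have httr : Tendsto (fun ρ => (c ρ • ((1 - Matrix.vecMulVec e e) * L ρ))ᵀ)
        (nhdsWithin a (Set.Ico 0 a)) (nhds Lamᵀ) :=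
      ((continuous_id.matrix_transpose).tendsto Lam).comp htend
    refine ⟨Lam * Lamᵀ, ?_, ?_⟩
    · refine (htend.mul httr).congr' ?_
      filter_upwards [hev] with ρ hρ
      rw [transpose_smul, transpose_mul, P_transpose, smul_mul_assoc, mul_smul_comm, smul_smul,
        ← pow_two]
      congr 1
      rw [mul_assoc, ← mul_assoc (L ρ), hL ρ hρ, ← mul_assoc]
    · have hPL : (1 - Matrix.vecMulVec e e) * Lam = Lam := by
        have h1 : Tendsto (fun ρ => (1 - Matrix.vecMulVec e e) *
            (c ρ • ((1 - Matrix.vecMulVec e e) * L ρ)))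
            (nhdsWithin a (Set.Ico 0 a)) (nhds ((1 - Matrix.vecMulVec e e) * Lam)) :=
          tendsto_const_nhds.mul htend
        have h2 : (fun ρ => (1 - Matrix.vecMulVec e e) *
            (c ρ • ((1 - Matrix.vecMulVec e e) * L ρ)))
            = fun ρ => c ρ • ((1 - Matrix.vecMulVec e e) * L ρ) := by
          funext ρ
          rw [mul_smul_comm, ← Matrix.mul_assoc, P_mul_P he1]
        rw [h2] at h1
        exact tendsto_nhds_unique h1 htend
      intro h hdot hV0
      have hw : Lamᵀ *ᵥ h = 0 := by
        have h0 : (Lamᵀ *ᵥ h) ⬝ᵥ (Lamᵀ *ᵥ h) = 0 := by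
          calc (Lamᵀ *ᵥ h) ⬝ᵥ (Lamᵀ *ᵥ h) = (h ᵥ* Lam) ⬝ᵥ (Lamᵀ *ᵥ h) := by
                rw [mulVec_transpose]
            _ = h ⬝ᵥ (Lam *ᵥ (Lamᵀ *ᵥ h)) := (dotProduct_mulVec _ _ _).symm
            _ = h ⬝ᵥ ((Lam * Lamᵀ) *ᵥ h) := by rw [mulVec_mulVec]
            _ = 0 := by rw [hV0, dotProduct_zero]
        exact dotProduct_self_eq_zero.mp h0
      have hrange : ∀ x : Fin n → ℝ, x ⬝ᵥ e = 0 → (Lam *ᵥ x) ⬝ᵥ e = 0 := by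
        intro x _
        have hx : Lam *ᵥ x = (1 - Matrix.vecMulVec e e) *ᵥ (Lam *ᵥ x) := by
          rw [mulVec_mulVec, hPL]
        rw [hx]
        exact P_dot he1 _
      obtain ⟨x, hx, hLx⟩ := surj_on_perp e Lam hrange hinj hdot
      have hh : h ⬝ᵥ h = 0 := by
        calc h ⬝ᵥ h = h ⬝ᵥ (Lam *ᵥ x) := by rw [hLx]
          _ = (h ᵥ* Lam) ⬝ᵥ x := dotProduct_mulVec _ _ _
          _ = (Lamᵀ *ᵥ h) ⬝ᵥ x := by rw [mulVec_transpose]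
          _ = 0 := by rw [hw, zero_dotProduct]
      exact dotProduct_self_eq_zero.mp hh
  · rintro ⟨V, htendV, hinjV⟩
    have hNpsd : ∀ᶠ ρ in nhdsWithin a (Set.Ico (0:ℝ) a),
        ((c ρ)^2 • ((1 - Matrix.vecMulVec e e) * Sig ρ * (1 - Matrix.vecMulVec e e))).PosSemidef := by
      filter_upwards [hev] with ρ hρ
      exact N_posSemidef (hpd ρ hρ) (sq_nonneg _)
    have hVpsd : V.PosSemidef := by
      refine .of_dotProduct_mulVec_nonneg ?_ ?_
      · show Vᴴ = V
        rw [ctr]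
        have h1 : Tendsto (fun ρ => ((c ρ)^2 • ((1 - Matrix.vecMulVec e e) * Sig ρ *
            (1 - Matrix.vecMulVec e e)))ᵀ) (nhdsWithin a (Set.Ico 0 a)) (nhds Vᵀ) :=
          ((continuous_id.matrix_transpose).tendsto V).comp htendV
        have h2 : Tendsto (fun ρ => ((c ρ)^2 • ((1 - Matrix.vecMulVec e e) * Sig ρ *
            (1 - Matrix.vecMulVec e e)))ᵀ) (nhdsWithin a (Set.Ico 0 a)) (nhds V) := by
          refine htendV.congr' ?_
          filter_upwards [hNpsd] with ρ hρ
          rw [← ctr]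
          exact hρ.1.symm
        exact tendsto_nhds_unique h1 h2
      · intro x
        have hcont : Continuous (fun M : Matrix (Fin n) (Fin n) ℝ => star x ⬝ᵥ M *ᵥ x) :=
          continuous_const.dotProduct (continuous_id.matrix_mulVec continuous_const)
        refine ge_of_tendsto ((hcont.tendsto V).comp htendV) ?_
        filter_upwards [hNpsd] with ρ hρ
        exact hρ.dotProduct_mulVec_nonneg x
    have key : ∀ ρ, ρ ∈ Set.Ico (0:ℝ) a → ∃ L : Matrix (Fin n) (Fin n) ℝ,
        L * Lᵀ = Sig ρ ∧ c ρ • ((1 - Matrix.vecMulVec e e) * L)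
          = msqrt ((c ρ)^2 • ((1 - Matrix.vecMulVec e e) * Sig ρ * (1 - Matrix.vecMulVec e e))) :=
      fun ρ hρ => exists_sqrt_factor he1 (hpd ρ hρ) (hc ρ hρ)
    choose! L hL1 hL2 using key
    refine ⟨L, msqrt V, hL1, ?_, ?_⟩
    · have hmt : Tendsto (fun ρ => msqrt ((c ρ)^2 • ((1 - Matrix.vecMulVec e e) * Sig ρ *
          (1 - Matrix.vecMulVec e e)))) (nhdsWithin a (Set.Ico 0 a)) (nhds (msqrt V)) :=
        tendsto_msqrt hNpsd htendV hVpsd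
      refine hmt.congr' ?_
      filter_upwards [hev] with ρ hρ
      exact (hL2 ρ hρ).symm
    · intro h hdot h0
      apply hinjV h hdot
      show V *ᵥ h = 0
      rw [← msqrt_mul_self hVpsd, ← mulVec_mulVec]
      rw [show msqrt V *ᵥ h = 0 from h0, mulVec_zero]
end

section
/- Suppose Assumptions hold: $\lambda_n^{-1}(\Sigma(\rho))\Sigma(\rho) \to e e'$ as $\rho \to a$, and $c^2(\rho)\Pi_{\mathrm{span}(e^*)^{\perp}}\Sigma(\rho)\Pi_{\mathrm{span}(e^*)^{\perp}} \to V$ where $V$ restricted to $\mathrm{span}(e^*)^{\perp}$ is a bijection onto $\mathrm{span}(e^*)^{\perp}$, for normalized vectors $e, e^* \in \mathbb{R}^n$. If $n > 2$, then $\mathrm{span}(e) = \mathrm{span}(e^*)$. -/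
open Matrix Filter Set

lemma aux_vecMulVec_mulVec {n : ℕ} (u v x : Fin n → ℝ) :
    (vecMulVec u v) *ᵥ x = (v ⬝ᵥ x) • u := by
  ext i
  simp only [mulVec, dotProduct, vecMulVec_apply, Pi.smul_apply, smul_eq_mul,
    Finset.sum_mul]
  exact Finset.sum_congr rfl fun j _ => by ring

lemma aux_mul_vecMulVec_mul {n : ℕ} (A B : Matrix (Fin n) (Fin n) ℝ) (u v : Fin n → ℝ) :
    A * vecMulVec u v * B = vecMulVec (A *ᵥ u) (v ᵥ* B) := by
  ext i j
  simp only [mul_apply, vecMulVec_apply, mulVec, vecMul, dotProduct, Finset.sum_mul,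
    Finset.mul_sum]
  exact Finset.sum_congr rfl fun k _ => Finset.sum_congr rfl fun l _ => by ring

/-- If Assumption ASC holds with concentration direction `e` and Assumption ASCII (in the
equivalent form of Lemma AR1) holds with vector `e⋆`, and `n > 2`, then
`span(e) = span(e⋆)`. -/
theorem stmt7 {n : ℕ} (hn : 2 < n) (a : ℝ) (ha : 0 < a)
    (Sig : ℝ → Matrix (Fin n) (Fin n) ℝ)
    (hpd : ∀ ρ ∈ Set.Ico (0:ℝ) a, (Sig ρ).PosDef)
    (c : ℝ → ℝ) (hc : ∀ ρ ∈ Set.Ico (0:ℝ) a, 0 < c ρ)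
    (e estar : Fin n → ℝ) (he : ∑ i, e i ^ 2 = 1) (hestar : ∑ i, estar i ^ 2 = 1)
    (lam : ℝ → ℝ)
    (hlam : ∀ ρ ∈ Set.Ico (0:ℝ) a,
      IsGreatest {t : ℝ | ∃ v ≠ 0, (Sig ρ).mulVec v = t • v} (lam ρ))
    (hconc : Tendsto (fun ρ => (lam ρ)⁻¹ • Sig ρ) (nhdsWithin a (Set.Ico 0 a))
      (nhds (Matrix.vecMulVec e e)))
    (V : Matrix (Fin n) (Fin n) ℝ)
    (hV : Tendsto
      (fun ρ => (c ρ) ^ 2 •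
        ((1 - Matrix.vecMulVec estar estar) * Sig ρ * (1 - Matrix.vecMulVec estar estar)))
      (nhdsWithin a (Set.Ico 0 a)) (nhds V))
    (hVinj : ∀ h : Fin n → ℝ, h ⬝ᵥ estar = 0 → V.mulVec h = 0 → h = 0)
    (hVsurj : ∀ w : Fin n → ℝ, w ⬝ᵥ estar = 0 →
      ∃ h : Fin n → ℝ, h ⬝ᵥ estar = 0 ∧ V.mulVec h = w) :
    Submodule.span ℝ {e} = Submodule.span ℝ {estar} := by
  classical
  -- basic dot products
  have hee : e ⬝ᵥ e = 1 := by
    simpa [dotProduct, sq] using he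
  have hss : estar ⬝ᵥ estar = 1 := by
    simpa [dotProduct, sq] using hestar
  set P : Matrix (Fin n) (Fin n) ℝ := 1 - vecMulVec estar estar with hP
  set w : Fin n → ℝ := e - (estar ⬝ᵥ e) • estar with hw
  have hPmulVec : ∀ x : Fin n → ℝ, P *ᵥ x = x - (estar ⬝ᵥ x) • estar := by
    intro x
    rw [hP, sub_mulVec, one_mulVec, aux_vecMulVec_mulVec]
  have hwe : P *ᵥ e = w := by rw [hPmulVec]
  have hPsymm : Pᵀ = P := by
    rw [hP, transpose_sub, transpose_one]
    congr 1
    ext i j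
    simp [vecMulVec_apply, mul_comm]
  have hvecMulP : e ᵥ* P = w := by
    rw [← hPsymm, vecMul_transpose, hwe]
  have hws : w ⬝ᵥ estar = 0 := by
    rw [hw, sub_dotProduct, smul_dotProduct, hss, smul_eq_mul, mul_one,
      dotProduct_comm, sub_self]
  by_cases hw0 : w = 0
  · -- e is a multiple of estar
    have het : e = (estar ⬝ᵥ e) • estar := by
      have := hw0
      rw [hw, sub_eq_zero] at this
      exact this
    have ht : IsUnit (estar ⬝ᵥ e) := by
      rw [isUnit_iff_ne_zero]
      intro h0
      rw [h0, zero_smul] at het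
      rw [het] at hee
      simp at hee
    calc Submodule.span ℝ {e} = Submodule.span ℝ {(estar ⬝ᵥ e) • estar} := by rw [← het]
      _ = Submodule.span ℝ {estar} := Submodule.span_singleton_smul_eq ht estar
  · -- main case: contradiction
    exfalso
    set l := nhdsWithin a (Set.Ico 0 a) with hl
    haveI : l.NeBot := by
      rw [hl, ← mem_closure_iff_nhdsWithin_neBot, closure_Ico ha.ne]
      exact ⟨ha.le, le_rfl⟩
    have hmem : ∀ᶠ ρ in l, ρ ∈ Set.Ico (0:ℝ) a := self_mem_nhdsWithin
    have hlampos : ∀ ρ ∈ Set.Ico (0:ℝ) a, 0 < lam ρ := by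
      intro ρ hρ
      obtain ⟨v, hv0, hveq⟩ := (hlam ρ hρ).1
      have hpos : 0 < v ⬝ᵥ (Sig ρ *ᵥ v) := by
        have := (hpd ρ hρ).dotProduct_mulVec_pos hv0
        simpa using this
      rw [hveq, dotProduct_smul, smul_eq_mul] at hpos
      have hvv : 0 < v ⬝ᵥ v := by
        rcases lt_or_eq_of_le (Finset.sum_nonneg fun i _ => mul_self_nonneg (v i)) with h | h
        · simpa [dotProduct] using h
        · exact absurd (dotProduct_self_eq_zero.mp (by simpa [dotProduct] using h.symm)) hv0
      nlinarith
    -- the projected rescaled matrices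
    have contPP : Continuous fun M : Matrix (Fin n) (Fin n) ℝ => P * M * P :=
      (continuous_const.matrix_mul continuous_id).matrix_mul continuous_const
    set W : Matrix (Fin n) (Fin n) ℝ := vecMulVec w w with hW
    have hPeP : P * vecMulVec e e * P = W := by
      rw [aux_mul_vecMulVec_mul, hwe, hvecMulP]
    have hF : Tendsto (fun ρ => P * ((lam ρ)⁻¹ • Sig ρ) * P) l (nhds W) := by
      rw [← hPeP]
      exact (contPP.tendsto _).comp hconc
    -- quadratic form
    set φ : Matrix (Fin n) (Fin n) ℝ → ℝ := fun M => w ⬝ᵥ (M *ᵥ w) with hφ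
    have contφ : Continuous φ :=
      continuous_const.dotProduct (continuous_id.matrix_mulVec continuous_const)
    have hs : 0 < w ⬝ᵥ w := by
      rcases lt_or_eq_of_le (Finset.sum_nonneg fun i _ => mul_self_nonneg (w i)) with h | h
      · simpa [dotProduct] using h
      · exact absurd (dotProduct_self_eq_zero.mp (by simpa [dotProduct] using h.symm)) hw0
    have hφW : φ W = (w ⬝ᵥ w) ^ 2 := by
      rw [hφ]
      simp only [hW, aux_vecMulVec_mulVec, dotProduct_smul, smul_eq_mul, sq]
    have hq : Tendsto (fun ρ => φ (P * ((lam ρ)⁻¹ • Sig ρ) * P)) l (nhds ((w ⬝ᵥ w) ^ 2)) := by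
      rw [← hφW]
      exact (contφ.tendsto _).comp hF
    -- rewrite hV through φ
    have key : ∀ ρ ∈ Set.Ico (0:ℝ) a,
        (c ρ) ^ 2 • (P * Sig ρ * P) =
          (c ρ ^ 2 * lam ρ) • (P * ((lam ρ)⁻¹ • Sig ρ) * P) := by
      intro ρ hρ
      have hl0 : lam ρ ≠ 0 := (hlampos ρ hρ).ne'
      rw [Matrix.mul_smul, Matrix.smul_mul, smul_smul, mul_assoc (c ρ ^ 2) (lam ρ) (lam ρ)⁻¹, mul_inv_cancel₀ hl0, mul_one]

    set m : ℝ → ℝ := fun ρ => c ρ ^ 2 * lam ρ with hm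
    have hVm : Tendsto (fun ρ => m ρ • (P * ((lam ρ)⁻¹ • Sig ρ) * P)) l (nhds V) := by
      apply hV.congr'
      filter_upwards [hmem] with ρ hρ
      exact key ρ hρ
    have hprod : Tendsto (fun ρ => m ρ * φ (P * ((lam ρ)⁻¹ • Sig ρ) * P)) l (nhds (φ V)) := by
      have := (contφ.tendsto V).comp hVm
      apply this.congr
      intro ρ
      simp [hφ, Matrix.smul_mulVec, dotProduct_smul]
    have hs2 : (w ⬝ᵥ w) ^ 2 ≠ 0 := by positivity
    have hmt : Tendsto m l (nhds (φ V / (w ⬝ᵥ w) ^ 2)) := by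
      have hdiv := hprod.div hq hs2
      apply hdiv.congr'
      filter_upwards [hq.eventually_ne hs2] with ρ hρ
      exact mul_div_cancel_right₀ _ hρ
    set L : ℝ := φ V / (w ⬝ᵥ w) ^ 2 with hL
    have hlim2 : Tendsto (fun ρ => m ρ • (P * ((lam ρ)⁻¹ • Sig ρ) * P)) l (nhds (L • W)) :=
      hmt.smul hF
    have hVLW : V = L • W := tendsto_nhds_unique hVm hlim2
    -- find h orthogonal to both estar and w
    set f : (Fin n → ℝ) →ₗ[ℝ] ℝ × ℝ :=
      { toFun := fun h => (h ⬝ᵥ estar, h ⬝ᵥ w)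
        map_add' := fun x y => by simp [add_dotProduct, Prod.ext_iff]
        map_smul' := fun r x => by simp [smul_dotProduct, Prod.ext_iff] } with hf
    have hker : LinearMap.ker f ≠ ⊥ := by
      intro hk
      have hinj : Function.Injective f := LinearMap.ker_eq_bot.mp hk
      have := LinearMap.finrank_le_finrank_of_injective hinj
      rw [Module.finrank_fin_fun, Module.finrank_prod, Module.finrank_self] at this
      omega
    obtain ⟨h, hhk, hh0⟩ := Submodule.exists_mem_ne_zero_of_ne_bot hker
    have hfh0 : f h = 0 := LinearMap.mem_ker.mp hhk
    have hfh : h ⬝ᵥ estar = 0 ∧ h ⬝ᵥ w = 0 :=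
      ⟨congrArg Prod.fst hfh0, congrArg Prod.snd hfh0⟩
    have hVh : V *ᵥ h = 0 := by
      rw [hVLW, Matrix.smul_mulVec, hW, aux_vecMulVec_mulVec,
        dotProduct_comm, hfh.2, zero_smul, smul_zero]
    exact hh0 (hVinj h hfh.1 hVh)
end

section
/- Let $T: \mathbb{R}^n \to \mathbb{R}$ be invariant under $G_X$ (i.e., $T(\gamma y + X\theta) = T(y)$ for all $\gamma \neq 0$, $\theta \in \mathbb{R}^k$), let $e$ be a normalized vector, $q$ a positive integer, and $D: \mathbb{R}^n \to \mathbb{R}$ a homogeneous polynomial of degree $q$ such that $T(e+h) = T(e) + D(h) + R(h)$ for all $h$, where $R(h)/\|h\|^q \to 0$ as $h \to 0$, $h \neq 0$. Then $D(h) = D(\Pi_{\mathrm{span}(e)^{\perp}} h)$ holds for every $h \in \mathbb{R}^n$; in particular, $D$ vanishes on all of $\mathrm{span}(e)$. -/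
open Matrix Filter Set
open Topology

private lemma eval_smul_homog {σ : Type*} {q : ℕ} {p : MvPolynomial σ ℝ}
    (hp : p.IsHomogeneous q) (c : ℝ) (x : σ → ℝ) :
    MvPolynomial.eval (c • x) p = c ^ q * MvPolynomial.eval x p := by
  rw [MvPolynomial.eval_eq, MvPolynomial.eval_eq, Finset.mul_sum]
  refine Finset.sum_congr rfl fun d hd => ?_
  have hdeg : ∑ i ∈ d.support, d i = q := by
    have h := hp (MvPolynomial.mem_support_iff.mp hd)
    rw [← h, Finsupp.weight_apply]
    simp [Finsupp.sum]
  calc p.coeff d * ∏ i ∈ d.support, (c • x) i ^ d i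
      = p.coeff d * ((∏ i ∈ d.support, c ^ d i) * ∏ i ∈ d.support, x i ^ d i) := by
        rw [← Finset.prod_mul_distrib]
        simp [mul_pow]
    _ = c ^ q * (p.coeff d * ∏ i ∈ d.support, x i ^ d i) := by
        rw [Finset.prod_pow_eq_pow_sum, hdeg]; ring

/-- If a `G_X`-invariant test statistic `T` admits the quasi-Taylor expansion
`T(e+h) = T(e) + D(h) + R(h)` with `D` a homogeneous polynomial of degree `q` and
`R(h)/‖h‖^q → 0`, then `D(h) = D(Π_{span(e)⊥} h)` for every `h`; in particular `D`
vanishes on `span(e)`. -/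
theorem stmt8 {n k : ℕ} (hn : 2 ≤ n) (hk : k < n)
    (X : Matrix (Fin n) (Fin k) ℝ)
    (T : (Fin n → ℝ) → ℝ)
    (hTinv : ∀ γ : ℝ, γ ≠ 0 → ∀ (θ : Fin k → ℝ) (y : Fin n → ℝ),
      T (γ • y + X.mulVec θ) = T y)
    (e : Fin n → ℝ) (he : ∑ i, e i ^ 2 = 1)
    (q : ℕ) (hq : 0 < q)
    (D : (Fin n → ℝ) → ℝ)
    (p : MvPolynomial (Fin n) ℝ) (hp : p.IsHomogeneous q)
    (hD : ∀ h : Fin n → ℝ, D h = MvPolynomial.eval h p)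
    (R : (Fin n → ℝ) → ℝ)
    (hTay : ∀ h : Fin n → ℝ, T (e + h) = T e + D h + R h)
    (hR : Tendsto (fun h : Fin n → ℝ => R h / (Real.sqrt (∑ i, h i ^ 2)) ^ q)
      (nhdsWithin 0 {(0 : Fin n → ℝ)}ᶜ) (nhds 0)) :
    (∀ h : Fin n → ℝ, D h = D (h - (h ⬝ᵥ e) • e)) ∧ (∀ t : ℝ, D (t • e) = 0) := by
  -- preliminaries
  have hD0 : D 0 = 0 := by
    have h0 := eval_smul_homog hp 0 (0 : Fin n → ℝ)
    rw [zero_smul] at h0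
    rw [hD, h0, zero_pow hq.ne', zero_mul]
  have hR0 : R 0 = 0 := by
    have h0 := hTay 0
    rw [add_zero] at h0
    linarith
  set N : (Fin n → ℝ) → ℝ := fun x => Real.sqrt (∑ i, x i ^ 2) with hNdef
  have hR' : Tendsto (fun h : Fin n → ℝ => R h / N h ^ q)
      (nhdsWithin 0 {(0 : Fin n → ℝ)}ᶜ) (nhds 0) := hR
  have hNpos : ∀ x : Fin n → ℝ, x ≠ 0 → 0 < N x := by
    intro x hx
    apply Real.sqrt_pos.mpr
    obtain ⟨i, hi⟩ := Function.ne_iff.mp hx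
    exact Finset.sum_pos' (fun j _ => sq_nonneg _) ⟨i, Finset.mem_univ i, (sq_nonneg (x i)).lt_of_ne' (pow_ne_zero 2 hi)⟩
  have hNsmul : ∀ s : ℝ, 0 ≤ s → ∀ x : Fin n → ℝ, N (s • x) = s * N x := by
    intro s hs x
    have h1 : ∀ i, (s • x) i ^ 2 = s ^ 2 * x i ^ 2 := by
      intro i; simp [mul_pow]
    simp only [hNdef, h1, ← Finset.mul_sum]
    rw [Real.sqrt_mul (sq_nonneg s), Real.sqrt_sq hs]
  -- key limit lemma
  have Rlim : ∀ x : Fin n → ℝ,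
      Tendsto (fun s : ℝ => R (s • x) / s ^ q) (𝓝[>] (0:ℝ)) (𝓝 0) := by
    intro x
    rcases eq_or_ne x 0 with rfl | hx
    · simp only [smul_zero, hR0, zero_div]
      exact tendsto_const_nhds
    · have hNx : 0 < N x := hNpos x hx
      have hg : Tendsto (fun s : ℝ => s • x) (𝓝[>] (0:ℝ))
          (nhdsWithin 0 {(0 : Fin n → ℝ)}ᶜ) := by
        rw [tendsto_nhdsWithin_iff]
        constructor
        · have h1 : Tendsto (fun s : ℝ => s • x) (𝓝 0) (𝓝 ((0:ℝ) • x)) :=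
            (continuous_id.smul continuous_const).tendsto 0
          rw [zero_smul] at h1
          exact h1.mono_left nhdsWithin_le_nhds
        · filter_upwards [self_mem_nhdsWithin] with s hs
          exact smul_ne_zero (ne_of_gt hs) hx
      have h1 : Tendsto (fun s : ℝ => R (s • x) / N (s • x) ^ q) (𝓝[>] (0:ℝ)) (𝓝 0) :=
        hR'.comp hg
      have h2 := h1.mul_const ((N x) ^ q)
      rw [zero_mul] at h2
      refine h2.congr' ?_
      filter_upwards [self_mem_nhdsWithin] with s hs
      have hs' : (0:ℝ) < s := hs
      rw [hNsmul s hs'.le x, mul_pow]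
      field_simp
  have key : ∀ h : Fin n → ℝ, D h = D (h - (h ⬝ᵥ e) • e) := by
    intro h
    set t : ℝ := h ⬝ᵥ e with ht
    set v : Fin n → ℝ := h - t • e with hv
    set c : ℝ → ℝ := fun s => s / (1 + s * t) with hc
    have denomT : Tendsto (fun s : ℝ => 1 + s * t) (𝓝[>] (0:ℝ)) (𝓝 1) := by
      have hcont : Continuous fun s : ℝ => 1 + s * t := by continuity
      have h1 : Tendsto (fun s : ℝ => 1 + s * t) (𝓝 (0:ℝ)) (𝓝 (1 + 0 * t)) := hcont.tendsto 0
      rw [zero_mul, add_zero] at h1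
      exact h1.mono_left nhdsWithin_le_nhds
    have Ev2 : ∀ᶠ s in 𝓝[>] (0:ℝ), 0 < 1 + s * t :=
      denomT.eventually (eventually_gt_nhds zero_lt_one)
    have base : Tendsto (fun s : ℝ => s) (𝓝[>] (0:ℝ)) (𝓝 0) :=
      tendsto_id.mono_left nhdsWithin_le_nhds
    have cT0 : Tendsto c (𝓝[>] (0:ℝ)) (𝓝 0) := by
      have h1 := base.div denomT one_ne_zero
      rw [zero_div] at h1
      exact h1
    have cTin : Tendsto c (𝓝[>] (0:ℝ)) (𝓝[>] (0:ℝ)) := by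
      refine tendsto_nhdsWithin_iff.mpr ⟨cT0, ?_⟩
      filter_upwards [self_mem_nhdsWithin, Ev2] with s hs hden
      exact div_pos hs hden
    have invcT : Tendsto (fun s : ℝ => ((1 + s * t)⁻¹) ^ q) (𝓝[>] (0:ℝ)) (𝓝 1) := by
      have h1 := (denomT.inv₀ one_ne_zero).pow q
      simpa using h1
    have Term2lim : Tendsto (fun s : ℝ => R (c s • v) / (c s) ^ q) (𝓝[>] (0:ℝ)) (𝓝 0) :=
      (Rlim v).comp cTin
    set F : ℝ → ℝ := fun s =>
      ((1 + s * t)⁻¹) ^ q * D v + (R (c s • v) / (c s) ^ q) * ((1 + s * t)⁻¹) ^ q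
        - R (s • h) / s ^ q with hF
    have FT : Tendsto F (𝓝[>] (0:ℝ)) (𝓝 (1 * D v + 0 * 1 - 0)) :=
      ((invcT.mul_const (D v)).add (Term2lim.mul invcT)).sub (Rlim h)
    rw [show (1:ℝ) * D v + 0 * 1 - 0 = D v by ring] at FT
    have Feq : F =ᶠ[𝓝[>] (0:ℝ)] fun _ => D h := by
      filter_upwards [self_mem_nhdsWithin, Ev2] with s hs hden
      have hs' : (0:ℝ) < s := hs
      have hcs : (0:ℝ) < c s := div_pos hs' hden
      have hTid : T (e + s • h) = T (e + c s • v) := by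
        have h1 := hTinv (1 + s * t) hden.ne' 0 (e + c s • v)
        rw [Matrix.mulVec_zero, add_zero] at h1
        rw [← h1]
        congr 1
        have h2 : (1 + s * t) * c s = s := mul_div_cancel₀ s hden.ne'
        rw [smul_add, smul_smul, h2, hv]
        module
      have h1 := hTay (s • h)
      have h2 := hTay (c s • v)
      rw [hTid, h2] at h1
      have hDs : D (s • h) = s ^ q * D h := by
        rw [hD, hD]; exact eval_smul_homog hp s h
      have hDc : D (c s • v) = (c s) ^ q * D v := by
        rw [hD, hD]; exact eval_smul_homog hp (c s) v
      have h3 : s ^ q * D h + R (s • h) = (c s) ^ q * D v + R (c s • v) := by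
        rw [← hDs, ← hDc]; linarith
      have hexp : (c s) ^ q = s ^ q * ((1 + s * t)⁻¹) ^ q := by
        show (s / (1 + s * t)) ^ q = _
        rw [div_pow, inv_pow, div_eq_mul_inv]
      have hsq : s ^ q ≠ 0 := pow_ne_zero q hs'.ne'
      have hiq : ((1 + s * t)⁻¹) ^ q ≠ 0 := pow_ne_zero q (inv_ne_zero hden.ne')
      have hcq : (c s) ^ q ≠ 0 := pow_ne_zero q hcs.ne'
      show ((1 + s * t)⁻¹) ^ q * D v + (R (c s • v) / (c s) ^ q) * ((1 + s * t)⁻¹) ^ q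
        - R (s • h) / s ^ q = D h
      rw [hexp] at h3 hcq ⊢
      generalize hI : ((1 + s * t)⁻¹) ^ q = I at h3 hiq hcq ⊢
      field_simp
      linear_combination -h3
    exact tendsto_nhds_unique tendsto_const_nhds (Tendsto.congr' Feq FT)
  refine ⟨key, fun t => ?_⟩
  have h1 := key (t • e)
  have hee : e ⬝ᵥ e = 1 := by
    rw [dotProduct, ← he]
    exact Finset.sum_congr rfl fun i _ => (sq (e i)).symm
  have hdot : (t • e) ⬝ᵥ e = t := by
    rw [smul_dotProduct, hee, smul_eq_mul, mul_one]
  rw [hdot, sub_self] at h1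
  rw [h1, hD0]
end

section
/- Let $T_B(y) = y' C_X' B C_X y / \|C_X y\|^2$ for $y \notin \mathrm{span}(X)$, and let $e \notin \mathrm{span}(X)$ be a normalized vector such that $C_X e$ is an eigenvector of $B$ with eigenvalue $\lambda$. Then for every $h \in \mathbb{R}^n$, $T_B(e+h) = T_B(e) + D(h) + R(h)$ with $D(h) = \|C_X e\|^{-2} h'(C_X' B C_X - \lambda C_X' C_X)h$ and $R(h)/\|h\|^2 \to 0$ as $h \to 0$; moreover $T_B(e) = \lambda$. -/
open Matrix Filter Set Topology

private lemma quadEq {m' n' : ℕ} (C : Matrix (Fin m') (Fin n') ℝ) (v : Fin n' → ℝ) :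
    v ⬝ᵥ (Cᵀ * C).mulVec v = ∑ i, (C.mulVec v) i ^ 2 := by
  rw [← Matrix.mulVec_mulVec, Matrix.dotProduct_mulVec, Matrix.vecMul_transpose]
  simp [dotProduct, sq]

private lemma quadBound {n' : ℕ} (A : Matrix (Fin n') (Fin n') ℝ) (h : Fin n' → ℝ) :
    |h ⬝ᵥ A.mulVec h| ≤ (∑ i, ∑ j, |A i j|) * ∑ i, h i ^ 2 := by
  set S := ∑ i, h i ^ 2 with hS
  have hS0 : 0 ≤ S := Finset.sum_nonneg fun i _ => sq_nonneg _
  have hle : ∀ i, h i ^ 2 ≤ S := fun i =>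
    Finset.single_le_sum (fun j _ => sq_nonneg (h j)) (Finset.mem_univ i)
  have key : ∀ i j, |h i| * |h j| ≤ S := by
    intro i j
    have h2 : (|h i| * |h j|) ^ 2 ≤ S ^ 2 := by
      calc (|h i| * |h j|) ^ 2 = h i ^ 2 * h j ^ 2 := by rw [mul_pow, sq_abs, sq_abs]
        _ ≤ S * S := mul_le_mul (hle i) (hle j) (sq_nonneg _) hS0
        _ = S ^ 2 := (sq S).symm
    exact (pow_le_pow_iff_left₀ (by positivity) hS0 (by norm_num)).mp h2
  have expand : h ⬝ᵥ A.mulVec h = ∑ i, ∑ j, h i * (A i j * h j) := by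
    simp [dotProduct, Matrix.mulVec, Finset.mul_sum]
  rw [expand, Finset.sum_mul]
  refine (Finset.abs_sum_le_sum_abs _ _).trans (Finset.sum_le_sum fun i _ => ?_)
  refine (Finset.abs_sum_le_sum_abs _ _).trans ?_
  rw [Finset.sum_mul]
  refine Finset.sum_le_sum fun j _ => ?_
  rw [abs_mul, abs_mul]
  calc |h i| * (|A i j| * |h j|) = |A i j| * (|h i| * |h j|) := by ring
    _ ≤ |A i j| * S := mul_le_mul_of_nonneg_left (key i j) (abs_nonneg _)

/-- Quasi-Taylor expansion of `T_B` at a normalized vector `e ∉ span(X)` such that `C_X e` is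
an eigenvector of `B` with eigenvalue `λ`: then `T_B(e) = λ` and
`T_B(e+h) = T_B(e) + D(h) + R(h)` with
`D(h) = ‖C_X e‖⁻² h'(C_X' B C_X − λ C_X' C_X)h` and `R(h)/‖h‖² → 0`. -/
theorem stmt10 {n k : ℕ} (hn : 2 ≤ n) (hk : k < n)
    (X : Matrix (Fin n) (Fin k) ℝ) (hX : X.rank = k)
    (C : Matrix (Fin (n - k)) (Fin n) ℝ)
    (hC1 : C * Cᵀ = 1)
    (hC2 : ∀ v : Fin n → ℝ, (Cᵀ * C).mulVec v = 0 ↔ v ∈ Set.range X.mulVec)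
    (B : Matrix (Fin (n - k)) (Fin (n - k)) ℝ) (hB : B.IsSymm)
    (T : (Fin n → ℝ) → ℝ)
    (hT : ∀ y ∉ Set.range X.mulVec,
      T y = (y ⬝ᵥ (Cᵀ * B * C).mulVec y) / (∑ i, (C.mulVec y) i ^ 2))
    (e : Fin n → ℝ) (he : ∑ i, e i ^ 2 = 1) (heX : e ∉ Set.range X.mulVec)
    (lam : ℝ) (heig : B.mulVec (C.mulVec e) = lam • C.mulVec e) :
    T e = lam ∧
    Tendsto
      (fun h : Fin n → ℝ =>
        (T (e + h) - T e -
            (∑ i, (C.mulVec e) i ^ 2)⁻¹ *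
              (h ⬝ᵥ (Cᵀ * B * C - lam • (Cᵀ * C)).mulVec h)) /
          (∑ i, h i ^ 2))
      (nhdsWithin 0 {(0 : Fin n → ℝ)}ᶜ) (nhds 0) := by
  set Q := Cᵀ * C with hQdef
  set M := Cᵀ * B * C with hMdef
  set a := ∑ i, (C.mulVec e) i ^ 2 with hadef
  have hae : e ⬝ᵥ Q.mulVec e = a := quadEq C e
  -- a > 0
  have ha0 : 0 < a := by
    rcases (Finset.sum_nonneg fun i _ => sq_nonneg ((C.mulVec e) i)).lt_or_eq with h | h
    · exact h
    · exfalso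
      apply heX
      rw [← hC2]
      have hc : C.mulVec e = 0 := by
        funext i
        have := (Finset.sum_eq_zero_iff_of_nonneg
          (fun j _ => sq_nonneg ((C.mulVec e) j))).mp h.symm i (Finset.mem_univ i)
        exact (pow_eq_zero_iff two_ne_zero).mp this
      rw [hQdef, ← Matrix.mulVec_mulVec, hc, Matrix.mulVec_zero]
  -- M e = lam • Q e
  have hMe : M.mulVec e = lam • Q.mulVec e := by
    have step : M.mulVec e = Cᵀ.mulVec (B.mulVec (C.mulVec e)) := by
      rw [hMdef, ← Matrix.mulVec_mulVec, ← Matrix.mulVec_mulVec]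
    rw [step, heig, Matrix.mulVec_smul, hQdef, Matrix.mulVec_mulVec]
  have hQsymm : Qᵀ = Q := by rw [hQdef, Matrix.transpose_mul, Matrix.transpose_transpose]
  have hMsymm : Mᵀ = M := by
    rw [hMdef, Matrix.transpose_mul, Matrix.transpose_mul, Matrix.transpose_transpose,
      hB.eq, Matrix.mul_assoc]
  -- abbreviations
  set s : (Fin n → ℝ) → ℝ := fun h => e ⬝ᵥ Q.mulVec h with hsdef
  set t : (Fin n → ℝ) → ℝ := fun h => h ⬝ᵥ Q.mulVec h with htdef
  set mm : (Fin n → ℝ) → ℝ := fun h => h ⬝ᵥ M.mulVec h with hmmdef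
  have hsymm_dot : ∀ (A : Matrix (Fin n) (Fin n) ℝ), Aᵀ = A →
      ∀ v w : Fin n → ℝ, v ⬝ᵥ A.mulVec w = w ⬝ᵥ A.mulVec v := by
    intro A hA v w
    rw [Matrix.dotProduct_mulVec, ← Matrix.mulVec_transpose, hA, dotProduct_comm]
  have heMh : ∀ h, e ⬝ᵥ M.mulVec h = lam * s h := by
    intro h
    rw [hsymm_dot M hMsymm, hMe, dotProduct_smul, smul_eq_mul, hsymm_dot Q hQsymm]
  have heMe : e ⬝ᵥ M.mulVec e = lam * a := by
    rw [hMe, dotProduct_smul, smul_eq_mul, hae]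
  have hexpM : ∀ h, (e + h) ⬝ᵥ M.mulVec (e + h) = lam * a + 2 * (lam * s h) + mm h := by
    intro h
    rw [Matrix.mulVec_add, dotProduct_add, add_dotProduct,
      add_dotProduct, heMe, heMh, hsymm_dot M hMsymm h e, heMh]
    ring
  have hexpQ : ∀ h, (e + h) ⬝ᵥ Q.mulVec (e + h) = a + 2 * s h + t h := by
    intro h
    rw [Matrix.mulVec_add, dotProduct_add, add_dotProduct,
      add_dotProduct, hae, hsymm_dot Q hQsymm h e]
    ring
  -- T e = lam
  have hTe : T e = lam := by
    rw [hT e heX, heMe, mul_div_assoc, div_self (ne_of_gt ha0), mul_one]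
  refine ⟨hTe, ?_⟩
  -- continuity of s and t
  have hs_cont : Continuous s := by
    simp only [hsdef, dotProduct, Matrix.mulVec]
    exact continuous_finset_sum _ fun i _ => continuous_const.mul
      (continuous_finset_sum _ fun j _ => continuous_const.mul (continuous_apply j))
  have ht_cont : Continuous t := by
    simp only [htdef, dotProduct, Matrix.mulVec]
    exact continuous_finset_sum _ fun i _ => (continuous_apply i).mul
      (continuous_finset_sum _ fun j _ => continuous_const.mul (continuous_apply j))
  have hs0 : s 0 = 0 := by simp [hsdef]
  have ht0 : t 0 = 0 := by simp [htdef]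
  set F : (Fin n → ℝ) → ℝ := fun h => a + 2 * s h + t h with hFdef
  have hF_cont : Continuous F := by
    exact (continuous_const.add (continuous_const.mul hs_cont)).add ht_cont
  have hF0 : F 0 = a := by simp [hFdef, hs0, ht0]
  have hFpos : ∀ᶠ h in 𝓝 (0 : Fin n → ℝ), 0 < F h := by
    have := hF_cont.continuousAt (x := 0)
    rw [ContinuousAt, hF0] at this
    exact this.eventually (eventually_gt_nhds ha0)
  -- the first (tendsto-zero) factor
  set G : (Fin n → ℝ) → ℝ := fun h => -(2 * s h + t h) / (a * F h) with hGdef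
  have hG_tendsto : Tendsto G (𝓝 0) (𝓝 0) := by
    have hnum : Tendsto (fun h : Fin n → ℝ => -(2 * s h + t h)) (𝓝 0) (𝓝 0) := by
      have hc : Continuous fun h : Fin n → ℝ => -(2 * s h + t h) :=
        ((continuous_const.mul hs_cont).add ht_cont).neg
      have := hc.tendsto 0
      simpa [hs0, ht0] using this
    have hden : Tendsto (fun h : Fin n → ℝ => a * F h) (𝓝 0) (𝓝 (a * a)) := by
      have hc : Continuous fun h : Fin n → ℝ => a * F h := continuous_const.mul hF_cont
      have := hc.tendsto 0
      simpa [hF0] using this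
    have := hnum.div hden (mul_pos ha0 ha0).ne'
    rw [zero_div] at this
    exact this
  -- eventual equality
  set A := M - lam • Q with hAdef
  have hquadA : ∀ h, h ⬝ᵥ A.mulVec h = mm h - lam * t h := by
    intro h
    rw [hAdef, Matrix.sub_mulVec, dotProduct_sub, Matrix.smul_mulVec,
      dotProduct_smul, smul_eq_mul]
  have heq : ∀ᶠ h in nhdsWithin (0 : Fin n → ℝ) {(0 : Fin n → ℝ)}ᶜ,
      (T (e + h) - T e - a⁻¹ * (h ⬝ᵥ A.mulVec h)) / (∑ i, h i ^ 2)
        = G h * ((h ⬝ᵥ A.mulVec h) / (∑ i, h i ^ 2)) := by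
    filter_upwards [nhdsWithin_le_nhds hFpos, self_mem_nhdsWithin] with h hF hne
    have hSpos : 0 < ∑ i, h i ^ 2 := by
      rcases (Finset.sum_nonneg fun i _ => sq_nonneg (h i)).lt_or_eq with h' | h'
      · exact h'
      · exfalso
        apply hne
        funext i
        have := (Finset.sum_eq_zero_iff_of_nonneg
          (fun j _ => sq_nonneg (h j))).mp h'.symm i (Finset.mem_univ i)
        exact (pow_eq_zero_iff two_ne_zero).mp this
    have hq : ∑ i, (C.mulVec (e + h)) i ^ 2 = F h := by
      rw [← quadEq, ← hQdef, hexpQ]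
    have hmem : e + h ∉ Set.range X.mulVec := by
      intro hmem
      have h0 : Q.mulVec (e + h) = 0 := (hC2 _).mpr hmem
      have h1 : F h = 0 := by
        show a + 2 * s h + t h = 0
        rw [← hexpQ, h0, dotProduct_zero]
      exact absurd h1 (ne_of_gt hF)
    rw [hT _ hmem, hq, hexpM, hTe, hquadA, hGdef]
    have hFne : F h ≠ 0 := ne_of_gt hF
    have hane : a ≠ 0 := ne_of_gt ha0
    have hSne : (∑ i, h i ^ 2) ≠ 0 := ne_of_gt hSpos
    field_simp
    rw [hFdef]
    ring
  -- boundedness of second factor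
  have hbdd : IsBoundedUnder (· ≤ ·) (nhdsWithin (0 : Fin n → ℝ) {(0 : Fin n → ℝ)}ᶜ)
      ((‖·‖) ∘ fun h => (h ⬝ᵥ A.mulVec h) / (∑ i, h i ^ 2)) := by
    refine ⟨∑ i, ∑ j, |A i j|, ?_⟩
    rw [eventually_map]
    filter_upwards [self_mem_nhdsWithin] with h hne
    have hSpos : 0 < ∑ i, h i ^ 2 := by
      rcases (Finset.sum_nonneg fun i _ => sq_nonneg (h i)).lt_or_eq with h' | h'
      · exact h'
      · exfalso
        apply hne
        funext i
        have := (Finset.sum_eq_zero_iff_of_nonneg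
          (fun j _ => sq_nonneg (h j))).mp h'.symm i (Finset.mem_univ i)
        exact (pow_eq_zero_iff two_ne_zero).mp this
    simp only [Function.comp_apply, Real.norm_eq_abs, abs_div, abs_of_pos hSpos]
    rw [div_le_iff₀ hSpos]
    exact quadBound A h
  have hmain : Tendsto (fun h => G h * ((h ⬝ᵥ A.mulVec h) / (∑ i, h i ^ 2)))
      (nhdsWithin (0 : Fin n → ℝ) {(0 : Fin n → ℝ)}ᶜ) (𝓝 0) :=
    (hG_tendsto.mono_left nhdsWithin_le_nhds).zero_mul_isBoundedUnder_le hbdd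
  exact hmain.congr' (heq.mono fun x hx => hx.symm)
end

section
/- Let $Q$ be a probability measure on $\mathbb{R}^n$ absolutely continuous w.r.t. Lebesgue measure, and let $T_B$ be as defined (with $B$ symmetric, $C_X$ as usual, $T_B = \lambda_1(B)$ on $\mathrm{span}(X)$). Then the support of the pushforward $Q \circ T_B^{-1}$ is contained in $[\lambda_1(B), \lambda_{n-k}(B)]$, and if $\lambda_1(B) < \lambda_{n-k}(B)$, then $Q(\{y : T_B(y) = c\}) = 0$ for every $c \in \mathbb{R}$, i.e., the cumulative distribution function of $T_B$ under $Q$ is continuous. -/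
open Matrix Set MeasureTheory


lemma dot_conj {p q : Type*} [Fintype p] [Fintype q]
    (C : Matrix p q ℝ) (N : Matrix p p ℝ) (y : q → ℝ) :
    y ⬝ᵥ (Cᵀ * N * C) *ᵥ y = (C *ᵥ y) ⬝ᵥ N *ᵥ (C *ᵥ y) := by
  rw [Matrix.mul_assoc, ← Matrix.mulVec_mulVec, Matrix.dotProduct_mulVec y,
    Matrix.vecMul_transpose, Matrix.mulVec_mulVec]

lemma rayleigh_lower {m : ℕ} (B : Matrix (Fin m) (Fin m) ℝ) (hB : B.IsHermitian) (lam : ℝ)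
    (hlo : ∀ t ∈ {t : ℝ | ∃ v ≠ 0, B.mulVec v = t • v}, lam ≤ t) :
    ∀ v : Fin m → ℝ, lam * (v ⬝ᵥ v) ≤ v ⬝ᵥ B *ᵥ v := by
  intro v
  set M : Matrix (Fin m) (Fin m) ℝ := B - lam • 1 with hMdef
  have hBt : Bᵀ = B := by simpa [Matrix.conjTranspose_eq_transpose_of_trivial] using hB.eq
  have hM : M.IsHermitian := by
    simp [Matrix.IsHermitian, hMdef, Matrix.conjTranspose_sub, Matrix.conjTranspose_smul, hBt]
  have hnn : ∀ i, 0 ≤ hM.eigenvalues i := by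
    intro i
    obtain ⟨w, hw0, hw⟩ : ∃ w : Fin m → ℝ, w ≠ 0 ∧ M *ᵥ w = hM.eigenvalues i • w := by
      refine ⟨_, ?_, hM.mulVec_eigenvectorBasis i⟩
      exact fun h => hM.eigenvectorBasis.orthonormal.ne_zero i
        ((WithLp.equiv 2 _).injective (by simpa using h))
    have hsub : M *ᵥ w = B *ᵥ w - lam • w := by
      rw [hMdef, Matrix.sub_mulVec, Matrix.smul_mulVec, Matrix.one_mulVec]
    have hBw : B *ᵥ w = (hM.eigenvalues i + lam) • w := by
      rw [add_smul, ← hw, hsub]; abel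
    have := hlo _ ⟨_, hw0, hBw⟩
    linarith
  have psd := hM.posSemidef_iff_eigenvalues_nonneg.mpr hnn
  have h0 := psd.dotProduct_mulVec_nonneg v
  rw [star_trivial] at h0
  have : v ⬝ᵥ M *ᵥ v = v ⬝ᵥ B *ᵥ v - lam * (v ⬝ᵥ v) := by
    rw [hMdef, Matrix.sub_mulVec, dotProduct_sub, Matrix.smul_mulVec,
      Matrix.one_mulVec, dotProduct_smul, smul_eq_mul]
  linarith


lemma quad_slice_finite (a r : ℝ) (ha : a ≠ 0) : {x : ℝ | a * x ^ 2 + r = 0}.Finite := by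
  have hp : (Polynomial.C a * Polynomial.X ^ 2 + Polynomial.C r : Polynomial ℝ) ≠ 0 := by
    intro h
    have h2 := congrArg (fun p : Polynomial ℝ => p.coeff 2) h
    simp [Polynomial.coeff_C] at h2
    exact ha h2
  have hfin := Polynomial.finite_setOf_isRoot hp
  convert hfin using 1
  ext x
  simp [Polynomial.IsRoot]

lemma diag_null {m : ℕ} (d : Fin (m + 1) → ℝ) (i : Fin (m + 1)) (hi : d i ≠ 0) :
    volume {z : Fin (m + 1) → ℝ | ∑ j, d j * z j ^ 2 = 0} = 0 := by
  set s : Set (ℝ × (Fin m → ℝ)) :=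
    {p | d i * p.1 ^ 2 + ∑ j, d (i.succAbove j) * p.2 j ^ 2 = 0} with hsdef
  have hcont : Continuous fun p : ℝ × (Fin m → ℝ) =>
      d i * p.1 ^ 2 + ∑ j, d (i.succAbove j) * p.2 j ^ 2 := by fun_prop
  have hs : MeasurableSet s := (isClosed_eq hcont continuous_const).measurableSet
  have hpre : {z : Fin (m + 1) → ℝ | ∑ j, d j * z j ^ 2 = 0}
      = (MeasurableEquiv.piFinSuccAbove (fun _ => ℝ) i) ⁻¹' s := by
    ext z
    simp only [mem_setOf_eq, mem_preimage, hsdef]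
    rw [Fin.sum_univ_succAbove (fun j => d j * z j ^ 2) i]
    exact Iff.rfl
  rw [hpre, volume_pi,
    (measurePreserving_piFinSuccAbove (fun _ : Fin (m + 1) => (volume : Measure ℝ)) i).measure_preimage
      hs.nullMeasurableSet,
    Measure.prod_apply_symm hs]
  have hz : ∀ y : Fin m → ℝ, (volume : Measure ℝ) ((fun x => (x, y)) ⁻¹' s) = 0 := by
    intro y
    have hfin : ((fun x : ℝ => (x, y)) ⁻¹' s).Finite :=
      quad_slice_finite (d i) (∑ j, d (i.succAbove j) * y j ^ 2) hi
    exact hfin.measure_zero _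
  simp [hz]

lemma quadric_null {m : ℕ} (A : Matrix (Fin (m + 1)) (Fin (m + 1)) ℝ) (hA : A.IsHermitian)
    (hA0 : A ≠ 0) : volume {y : Fin (m + 1) → ℝ | y ⬝ᵥ A *ᵥ y = 0} = 0 := by
  set U : Matrix (Fin (m + 1)) (Fin (m + 1)) ℝ := (hA.eigenvectorUnitary : Matrix (Fin (m + 1)) (Fin (m + 1)) ℝ) with hUdef
  set d := hA.eigenvalues with hddef
  have hspec : A = U * Matrix.diagonal d * star U := by
    have h := hA.spectral_theorem
    have : (RCLike.ofReal ∘ d : Fin (m + 1) → ℝ) = d := funext fun j => rfl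
    rwa [this] at h
  obtain ⟨i, hi⟩ : ∃ i, d i ≠ 0 := by
    by_contra h; push_neg at h
    apply hA0
    have hd0 : Matrix.diagonal d = 0 := by
      ext j k; by_cases h' : j = k <;> simp [Matrix.diagonal, h', h]
    rw [hspec, hd0]; simp
  have hUt : (star U)ᵀ = U := by
    rw [Matrix.star_eq_conjTranspose, Matrix.conjTranspose_eq_transpose_of_trivial,
      Matrix.transpose_transpose]
  have h1 : star U * U = 1 := Unitary.coe_star_mul_self hA.eigenvectorUnitary
  have hdet : (star U).det ≠ 0 := by
    have := congrArg Matrix.det h1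
    rw [Matrix.det_mul, Matrix.det_one] at this
    exact left_ne_zero_of_mul_eq_one this
  have detL : LinearMap.det (Matrix.toLin' (star U)) ≠ 0 := by
    rwa [LinearMap.det_toLin']
  have hset : {y : Fin (m + 1) → ℝ | y ⬝ᵥ A *ᵥ y = 0}
      = (Matrix.toLin' (star U)) ⁻¹' {z | z ⬝ᵥ Matrix.diagonal d *ᵥ z = 0} := by
    ext y
    simp only [mem_preimage, mem_setOf_eq, Matrix.toLin'_apply]
    have hc : (star U *ᵥ y) ⬝ᵥ (Matrix.diagonal d) *ᵥ (star U *ᵥ y)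
        = y ⬝ᵥ ((star U)ᵀ * Matrix.diagonal d * star U) *ᵥ y := by
      rw [dot_conj]
    rw [hc, hUt, ← hspec]
  rw [hset, Measure.addHaar_preimage_linearMap volume detL]
  have hdiag : {z : Fin (m + 1) → ℝ | z ⬝ᵥ Matrix.diagonal d *ᵥ z = 0}
      = {z | ∑ j, d j * z j ^ 2 = 0} := by
    ext z
    have : z ⬝ᵥ Matrix.diagonal d *ᵥ z = ∑ j, d j * z j ^ 2 := by
      simp only [dotProduct, Matrix.mulVec_diagonal]
      exact Finset.sum_congr rfl fun j _ => by ring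
    simp [this]
  rw [hdiag, diag_null d i hi, mul_zero]

/-- Lemma DT, Part 1: for an absolutely continuous probability measure `Q` on `ℝⁿ`, the
distribution of `T_B` under `Q` is supported in `[λ₁(B), λ_{n-k}(B)]`, and if
`λ₁(B) < λ_{n-k}(B)` its cumulative distribution function is continuous, i.e.
`Q{T_B = c} = 0` for every `c`. -/
theorem stmt11 {n k : ℕ} (hn : 2 ≤ n) (hk : k < n)
    (X : Matrix (Fin n) (Fin k) ℝ) (hX : X.rank = k)
    (C : Matrix (Fin (n - k)) (Fin n) ℝ)
    (hC1 : C * Cᵀ = 1)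
    (hC2 : ∀ v : Fin n → ℝ, (Cᵀ * C).mulVec v = 0 ↔ v ∈ Set.range X.mulVec)
    (B : Matrix (Fin (n - k)) (Fin (n - k)) ℝ) (hB : B.IsSymm)
    (lam1 lamN : ℝ)
    (hlam1 : IsLeast {t : ℝ | ∃ v ≠ 0, B.mulVec v = t • v} lam1)
    (hlamN : IsGreatest {t : ℝ | ∃ v ≠ 0, B.mulVec v = t • v} lamN)
    (T : (Fin n → ℝ) → ℝ)
    (hT1 : ∀ y ∉ Set.range X.mulVec,
      T y = (y ⬝ᵥ (Cᵀ * B * C).mulVec y) / (∑ i, (C.mulVec y) i ^ 2))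
    (hT2 : ∀ y ∈ Set.range X.mulVec, T y = lam1)
    (Q : Measure (Fin n → ℝ)) [IsProbabilityMeasure Q]
    (hac : Q ≪ (volume : Measure (Fin n → ℝ))) :
    Q {y : Fin n → ℝ | T y ∉ Set.Icc lam1 lamN} = 0 ∧
    (lam1 < lamN → ∀ c : ℝ, Q {y : Fin n → ℝ | T y = c} = 0) := by
  have hBh : B.IsHermitian := by
    rw [Matrix.IsHermitian, Matrix.conjTranspose_eq_transpose_of_trivial]; exact hB
  have hle : lam1 ≤ lamN := hlamN.2 hlam1.1
  have hlow := rayleigh_lower B hBh lam1 (fun t ht => hlam1.2 ht)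
  have hup : ∀ v : Fin (n - k) → ℝ, v ⬝ᵥ B *ᵥ v ≤ lamN * (v ⬝ᵥ v) := by
    have hBh' : (-B).IsHermitian := by
      rw [Matrix.IsHermitian, Matrix.conjTranspose_neg, hBh.eq]
    have h := rayleigh_lower (-B) hBh' (-lamN) ?_
    · intro v
      have := h v
      rw [Matrix.neg_mulVec, dotProduct_neg] at this
      linarith
    · rintro t ⟨v, hv, hvt⟩
      rw [Matrix.neg_mulVec, neg_eq_iff_eq_neg, ← neg_smul] at hvt
      have : -t ≤ lamN := hlamN.2 ⟨v, hv, hvt⟩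
      linarith
  -- facts about points outside the span
  have hvne : ∀ y ∉ Set.range X.mulVec, C *ᵥ y ≠ 0 := by
    intro y hy h
    apply hy
    rw [← hC2 y, ← Matrix.mulVec_mulVec, h, Matrix.mulVec_zero]
  have hpos : ∀ v : Fin (n - k) → ℝ, v ≠ 0 → 0 < v ⬝ᵥ v := by
    intro v hv
    obtain ⟨i, hi⟩ := Function.ne_iff.mp hv
    exact Finset.sum_pos' (fun j _ => mul_self_nonneg _)
      ⟨i, Finset.mem_univ i, mul_self_pos.mpr hi⟩
  have hden2 : ∀ y : Fin n → ℝ, (∑ i, (C *ᵥ y) i ^ 2) = (C *ᵥ y) ⬝ᵥ (C *ᵥ y) := by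
    intro y; simp [dotProduct, pow_two]
  have hIcc : ∀ y, T y ∈ Set.Icc lam1 lamN := by
    intro y
    by_cases hy : y ∈ Set.range X.mulVec
    · rw [hT2 y hy]; exact ⟨le_refl _, hle⟩
    · rw [hT1 y hy]
      have hv := hvne y hy
      have hd := hpos _ hv
      constructor
      · rw [hden2 y, le_div_iff₀ hd, dot_conj]
        exact hlow _
      · rw [hden2 y, div_le_iff₀ hd, dot_conj]
        exact hup _
  constructor
  · exact measure_mono_null (fun y hy => absurd (hIcc y) hy) measure_empty
  · intro hlt c
    obtain ⟨m, rfl⟩ : ∃ m, n = m + 1 := ⟨n - 1, by omega⟩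
    set A : Matrix (Fin (m + 1)) (Fin (m + 1)) ℝ := Cᵀ * (B - c • 1) * C with hAdef
    have hMt : (B - c • (1 : Matrix (Fin (m + 1 - k)) (Fin (m + 1 - k)) ℝ))ᵀ = B - c • 1 := by
      rw [Matrix.transpose_sub, Matrix.transpose_smul, Matrix.transpose_one, hB]
    have hAh : A.IsHermitian := by
      rw [Matrix.IsHermitian, Matrix.conjTranspose_eq_transpose_of_trivial, hAdef,
        Matrix.transpose_mul, Matrix.transpose_mul, Matrix.transpose_transpose, hMt,
        Matrix.mul_assoc]
    have hA0 : A ≠ 0 := by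
      intro h0
      have hB1 : B - c • 1 = 0 := by
        have e1 : C * A * Cᵀ = B - c • 1 := by
          calc C * (Cᵀ * (B - c • 1) * C) * Cᵀ
              = (C * Cᵀ) * (B - c • 1) * (C * Cᵀ) := by simp only [Matrix.mul_assoc]
            _ = B - c • 1 := by rw [hC1, Matrix.one_mul, Matrix.mul_one]
        rw [h0, Matrix.mul_zero, Matrix.zero_mul] at e1
        exact e1.symm
      have hBc : B = c • 1 := by rwa [sub_eq_zero] at hB1
      obtain ⟨v1, hv1, he1⟩ := hlam1.1
      obtain ⟨v2, hv2, he2⟩ := hlamN.1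
      rw [hBc, Matrix.smul_mulVec, Matrix.one_mulVec] at he1 he2
      have hc1 : c = lam1 := by
        have := sub_eq_zero.mpr he1
        rw [← sub_smul] at this
        rcases smul_eq_zero.mp this with h | h
        · exact sub_eq_zero.mp h
        · exact absurd h hv1
      have hc2 : c = lamN := by
        have := sub_eq_zero.mpr he2
        rw [← sub_smul] at this
        rcases smul_eq_zero.mp this with h | h
        · exact sub_eq_zero.mp h
        · exact absurd h hv2
      rw [← hc1, ← hc2] at hlt
      exact lt_irrefl c hlt
    have hne : LinearMap.range X.mulVecLin ≠ ⊤ := by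
      intro h
      have hr : Module.finrank ℝ (LinearMap.range X.mulVecLin) = k := hX
      rw [h, finrank_top] at hr
      rw [Module.finrank_pi] at hr
      simp at hr
      omega
    have hrangeset : Set.range X.mulVec = ↑(LinearMap.range X.mulVecLin) := by
      rw [LinearMap.coe_range]; rfl
    have hsub : {y : Fin (m + 1) → ℝ | T y = c}
        ⊆ ↑(LinearMap.range X.mulVecLin) ∪ {y | y ⬝ᵥ A *ᵥ y = 0} := by
      intro y hy
      by_cases hmem : y ∈ Set.range X.mulVec
      · left; rwa [← hrangeset]
      · right
        rw [Set.mem_setOf_eq, hT1 y hmem] at hy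
        have hv := hvne y hmem
        have hd := hpos _ hv
        rw [hden2 y] at hy
        have hnum : y ⬝ᵥ (Cᵀ * B * C) *ᵥ y = c * ((C *ᵥ y) ⬝ᵥ (C *ᵥ y)) :=
          (div_eq_iff (ne_of_gt hd)).mp hy
        show y ⬝ᵥ A *ᵥ y = 0
        rw [hAdef, dot_conj, Matrix.sub_mulVec, dotProduct_sub,
          Matrix.smul_mulVec, Matrix.one_mulVec, dotProduct_smul, smul_eq_mul,
          ← dot_conj C B y, hnum, sub_self]
    have h1 : Q ↑(LinearMap.range X.mulVecLin) = 0 :=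
      hac (Measure.addHaar_submodule volume _ hne)
    have h2 : Q {y : Fin (m + 1) → ℝ | y ⬝ᵥ A *ᵥ y = 0} = 0 :=
      hac (quadric_null A hAh hA0)
    exact measure_mono_null hsub (measure_union_null h1 h2)
end

section
/- Let $A \in \mathbb{R}^{n\times n}$ be symmetric positive definite and $\delta \geq 0$. The following are equivalent: (i) $C_X A C_X' = \delta I_{n-k}$ for some matrix $C_X$ with $C_X C_X' = I_{n-k}$ and $C_X' C_X = \Pi_{\mathrm{span}(X)^{\perp}}$; (ii) the same holds for every such $C_X$; (iii) $\Pi_{\mathrm{span}(X)^{\perp}} A \Pi_{\mathrm{span}(X)^{\perp}} = \delta \Pi_{\mathrm{span}(X)^{\perp}}$; (iv) there exists a matrix $D$ with $DD' = A$ and $\Pi_{\mathrm{span}(X)^{\perp}} D = \delta^{1/2} \Pi_{\mathrm{span}(X)^{\perp}}$. -/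
open Matrix Set


lemma exists_projC {n k : ℕ} (X : Matrix (Fin n) (Fin k) ℝ) (hX : X.rank = k)
    (P : Matrix (Fin n) (Fin n) ℝ) (hPt : Pᵀ = P) (hPidem : P * P = P)
    (hPker : ∀ v : Fin n → ℝ, P.mulVec v = 0 ↔ v ∈ Set.range X.mulVec) :
    ∃ C : Matrix (Fin (n - k)) (Fin n) ℝ, C * Cᵀ = 1 ∧ Cᵀ * C = P := by
  classical
  let toE : (Fin n → ℝ) → EuclideanSpace ℝ (Fin n) := fun v => WithLp.toLp 2 v
  let ofE : EuclideanSpace ℝ (Fin n) → (Fin n → ℝ) := fun v => v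
  set W : Submodule ℝ (EuclideanSpace ℝ (Fin n)) :=
    Submodule.map ((WithLp.linearEquiv 2 ℝ (Fin n → ℝ)).symm :
      (Fin n → ℝ) →ₗ[ℝ] EuclideanSpace ℝ (Fin n)) (LinearMap.range X.mulVecLin) with hW
  have hinner : ∀ x y : EuclideanSpace ℝ (Fin n), (inner ℝ x y : ℝ) = ofE x ⬝ᵥ ofE y := by
    intro x y; simp [PiLp.inner_apply, RCLike.inner_apply, dotProduct, ofE, mul_comm]
  have hWmem : ∀ v : EuclideanSpace ℝ (Fin n), v ∈ W ↔ ofE v ∈ Set.range X.mulVec := by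
    intro v
    constructor
    · rintro ⟨w, ⟨u, rfl⟩, rfl⟩; exact ⟨u, rfl⟩
    · rintro ⟨u, hu⟩; exact ⟨_, ⟨u, rfl⟩, congrArg (WithLp.toLp 2) hu⟩
  have hfinW : Module.finrank ℝ W = k := (LinearEquiv.finrank_map_eq _ _).trans hX
  have hfinV : Module.finrank ℝ (Wᗮ : Submodule ℝ (EuclideanSpace ℝ (Fin n))) = n - k := by
    have h := Submodule.finrank_add_finrank_orthogonal W
    rw [hfinW, finrank_euclideanSpace_fin] at h
    omega
  let b : OrthonormalBasis (Fin (n - k)) ℝ (Wᗮ : Submodule ℝ (EuclideanSpace ℝ (Fin n))) :=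
    (stdOrthonormalBasis ℝ _).reindex (finCongr hfinV)
  set C : Matrix (Fin (n - k)) (Fin n) ℝ := Matrix.of (fun i j => ofE (b i) j) with hC
  have hCdot : ∀ (i : Fin (n-k)) (v : Fin n → ℝ), (∑ l, C i l * v l) = (inner ℝ ((b i : EuclideanSpace ℝ (Fin n))) (toE v) : ℝ) := by
    intro i v; rw [hinner]; rfl
  have hCCt : C * Cᵀ = 1 := by
    ext i i'
    have := (orthonormal_iff_ite.mp b.orthonormal) i i'
    rw [Submodule.coe_inner, hinner] at this
    simp only [Matrix.mul_apply, transpose_apply, Matrix.one_apply]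
    simpa [dotProduct, hC] using this
  refine ⟨C, hCCt, ?_⟩
  -- P maps into Wᗮ
  have hPmem : ∀ v : Fin n → ℝ, toE (P.mulVec v) ∈ Wᗮ := by
    intro v
    rw [Submodule.mem_orthogonal]
    intro u hu
    rw [hinner]
    have hu0 : P.mulVec (ofE u) = 0 := (hPker _).mpr ((hWmem u).mp hu)
    show ofE u ⬝ᵥ P.mulVec v = 0
    rw [dotProduct_mulVec]
    have h1 : ofE u ᵥ* P = P.mulVec (ofE u) := by conv_lhs => rw [← hPt, vecMul_transpose]
    rw [h1, hu0, zero_dotProduct]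
  -- P is identity on Wᗮ
  have hPfix : ∀ v : EuclideanSpace ℝ (Fin n), v ∈ Wᗮ → P.mulVec (ofE v) = ofE v := by
    intro v hv
    have hd : P.mulVec (ofE v - P.mulVec (ofE v)) = 0 := by
      rw [Matrix.mulVec_sub, mulVec_mulVec, hPidem, sub_self]
    have hdW : toE (ofE v - P.mulVec (ofE v)) ∈ W := (hWmem _).mpr ((hPker _).mp hd)
    have hdV : toE (ofE v - P.mulVec (ofE v)) ∈ Wᗮ := by
      have : toE (ofE v - P.mulVec (ofE v)) = v - toE (P.mulVec (ofE v)) := rfl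
      rw [this]
      exact Submodule.sub_mem _ hv (hPmem (ofE v))
    have h0 : toE (ofE v - P.mulVec (ofE v)) = 0 := by
      rw [← inner_self_eq_zero (𝕜 := ℝ)]
      exact (Submodule.mem_orthogonal _ _).mp hdV _ hdW
    have h0' : ofE v - P.mulVec (ofE v) = 0 := congrArg WithLp.ofLp h0
    have := sub_eq_zero.mp h0'
    exact this.symm
  -- compute action of CᵀC
  have hCtC : ∀ v : Fin n → ℝ, (Cᵀ * C).mulVec v =
      fun j => ∑ i, (inner ℝ ((b i : EuclideanSpace ℝ (Fin n))) (toE v) : ℝ) * ofE (b i) j := by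
    intro v
    funext j
    simp only [Matrix.mulVec, Matrix.mul_apply, transpose_apply, dotProduct, Finset.sum_mul]
    rw [Finset.sum_comm]
    refine Finset.sum_congr rfl fun i _ => ?_
    rw [← hCdot i v, Finset.sum_mul]
    refine Finset.sum_congr rfl fun l _ => ?_
    simp [hC]; ring
  -- final: mulVec equality
  have hmv : ∀ v : Fin n → ℝ, (Cᵀ * C).mulVec v = P.mulVec v := by
    intro v
    set x : Fin n → ℝ := P.mulVec v with hx
    have hxV : toE x ∈ Wᗮ := hPmem v
    set d : Fin n → ℝ := v - P.mulVec v with hdd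
    have hPd : P.mulVec d = 0 := by
      rw [hdd, Matrix.mulVec_sub, mulVec_mulVec, hPidem, sub_self]
    have hdW : toE d ∈ W := (hWmem _).mpr ((hPker _).mp hPd)
    have hvsplit : v = x + d := by rw [hx, hdd]; funext j; simp
    have hPx : P.mulVec x = x := hPfix (toE x) hxV
    have hCd : (Cᵀ * C).mulVec d = 0 := by
      rw [hCtC]
      funext j
      have hz : ∀ i : Fin (n-k), (inner ℝ ((b i : EuclideanSpace ℝ (Fin n))) (toE d) : ℝ) = 0 := by
        intro i
        exact (Submodule.mem_orthogonal' _ _).mp (b i).2 _ hdW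
      simp [hz]
    have hCx : (Cᵀ * C).mulVec x = x := by
      rw [hCtC]
      have hrepr := b.sum_repr ⟨toE x, hxV⟩
      have hcoe : ((∑ i, b.repr ⟨toE x, hxV⟩ i • b i : (Wᗮ : Submodule ℝ (EuclideanSpace ℝ (Fin n)))) : EuclideanSpace ℝ (Fin n)) = toE x := by rw [hrepr]
      funext j
      have h2 : ofE ((∑ i, b.repr ⟨toE x, hxV⟩ i • b i : (Wᗮ : Submodule ℝ (EuclideanSpace ℝ (Fin n)))) : EuclideanSpace ℝ (Fin n)) j = x j := by
        rw [hcoe]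
      rw [← h2]
      rw [Submodule.coe_sum]
      show ∑ i, (inner ℝ ((b i : EuclideanSpace ℝ (Fin n))) (toE x) : ℝ) * ofE (b i) j
        = ofE (∑ i, ((b.repr ⟨toE x, hxV⟩ i • b i : (Wᗮ : Submodule ℝ (EuclideanSpace ℝ (Fin n)))) : EuclideanSpace ℝ (Fin n))) j
      have h3 : ∀ i : Fin (n-k), b.repr ⟨toE x, hxV⟩ i = (inner ℝ ((b i : EuclideanSpace ℝ (Fin n))) (toE x) : ℝ) := by
        intro i
        rw [b.repr_apply_apply, Submodule.coe_inner]
      have h4 : ofE (∑ i, ((b.repr ⟨toE x, hxV⟩ i • b i : (Wᗮ : Submodule ℝ (EuclideanSpace ℝ (Fin n)))) : EuclideanSpace ℝ (Fin n))) j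
          = ∑ i, b.repr ⟨toE x, hxV⟩ i * ofE (b i) j := by
        show (∑ i, ((b.repr ⟨toE x, hxV⟩ i • b i : (Wᗮ : Submodule ℝ (EuclideanSpace ℝ (Fin n)))) : EuclideanSpace ℝ (Fin n))) j = _
        rw [WithLp.ofLp_sum, Finset.sum_apply]
        refine Finset.sum_congr rfl fun i _ => ?_
        rfl
      rw [h4]
      exact Finset.sum_congr rfl fun i _ => by rw [h3]
    rw [hvsplit, Matrix.mulVec_add, hCd, hCx, add_zero]
  have : Matrix.toLin' (Cᵀ * C) = Matrix.toLin' P :=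
    LinearMap.ext fun v => by rw [Matrix.toLin'_apply, Matrix.toLin'_apply]; exact hmv v
  exact Matrix.toLin'.injective this


lemma sqrt_exists {n : ℕ} {N : Matrix (Fin n) (Fin n) ℝ} (hN : N.PosSemidef) :
    ∃ R : Matrix (Fin n) (Fin n) ℝ, R * R = N ∧ Rᵀ = R := by
  open scoped MatrixOrder in
  refine ⟨CFC.sqrt N, CFC.sqrt_mul_sqrt_self N hN.nonneg, ?_⟩
  open scoped MatrixOrder in
  have h := (CFC.sqrt_nonneg N).posSemidef.1
  rw [← conjTranspose_eq_transpose_of_trivial]; exact h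

lemma psd_smul {n : ℕ} {N : Matrix (Fin n) (Fin n) ℝ} (hN : N.PosSemidef) {c : ℝ}
    (hc : 0 ≤ c) : (c • N).PosSemidef := by
  exact hN.smul hc

lemma three_to_four {n : ℕ} {P A : Matrix (Fin n) (Fin n) ℝ} (hPt : Pᵀ = P)
    (hPidem : P * P = P) (hA : A.PosDef) {δ : ℝ} (hpos : 0 < δ)
    (h3 : P * A * P = δ • P) :
    ∃ D : Matrix (Fin n) (Fin n) ℝ, D * Dᵀ = A ∧ P * D = Real.sqrt δ • P := by
  have hδ : (0:ℝ) ≤ δ := le_of_lt hpos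
  have hδne : δ ≠ 0 := ne_of_gt hpos
  have hAt : Aᵀ = A := by
    have h := hA.isHermitian; rw [← conjTranspose_eq_transpose_of_trivial]; exact h
  obtain ⟨R, hRR, hRt⟩ := sqrt_exists hA.posSemidef
  obtain ⟨s, hs⟩ : ∃ s : ℝ, s = Real.sqrt δ := ⟨_, rfl⟩
  have hs2 : s * s = δ := by rw [hs]; exact Real.mul_self_sqrt hδ
  have hsne : s ≠ 0 := by rw [hs]; positivity
  have hss : s⁻¹ * s⁻¹ = δ⁻¹ := by rw [← mul_inv, hs2]
  obtain ⟨Q, hQ⟩ : ∃ Q' : Matrix (Fin n) (Fin n) ℝ, Q' = 1 - P := ⟨_, rfl⟩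
  have hQt : Qᵀ = Q := by rw [hQ, transpose_sub, transpose_one, hPt]
  have hPQ : P * Q = 0 := by rw [hQ, mul_sub, mul_one, hPidem, sub_self]
  have hQP : Q * P = 0 := by rw [hQ, sub_mul, one_mul, hPidem, sub_self]
  have hPQ1 : P + Q = 1 := by rw [hQ]; abel
  obtain ⟨T, hT⟩ : ∃ T' : Matrix (Fin n) (Fin n) ℝ, T' = R * P * R := ⟨_, rfl⟩
  have hTt : Tᵀ = T := by rw [hT, transpose_mul, transpose_mul, hRt, hPt, Matrix.mul_assoc]
  have hTT : T * T = δ • T := by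
    have h1 : T * T = R * (P * A * P) * R := by rw [hT, ← hRR]; noncomm_ring
    rw [h1, h3, Matrix.mul_smul, Matrix.smul_mul, ← hT]
  obtain ⟨S, hS⟩ : ∃ S' : Matrix (Fin n) (Fin n) ℝ,
      S' = δ • (1 : Matrix (Fin n) (Fin n) ℝ) - T := ⟨_, rfl⟩
  have hSt : Sᵀ = S := by rw [hS, transpose_sub, transpose_smul, transpose_one, hTt]
  have hSS : S * S = δ • S := by
    rw [hS, sub_mul, mul_sub, mul_sub, hTT]
    simp only [Matrix.smul_mul, Matrix.mul_smul, one_mul, mul_one, smul_sub, smul_smul]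
    abel
  have hSpsd : S.PosSemidef := by
    have h1 : S = δ⁻¹ • (Sᴴ * S) := by
      rw [conjTranspose_eq_transpose_of_trivial, hSt, hSS, smul_smul,
        inv_mul_cancel₀ hδne, one_smul]
    rw [h1]
    exact psd_smul (posSemidef_conjTranspose_mul_self S) (by positivity)
  obtain ⟨N, hN⟩ : ∃ N' : Matrix (Fin n) (Fin n) ℝ, N' = Q * (Rᵀ * (δ⁻¹ • S) * R) * Q :=
    ⟨_, rfl⟩
  have hNpsd : N.PosSemidef := by
    rw [hN]
    have h1 : (Rᵀ * (δ⁻¹ • S) * R).PosSemidef := by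
      have := (psd_smul hSpsd (by positivity : (0:ℝ) ≤ δ⁻¹)).conjTranspose_mul_mul_same R
      rwa [conjTranspose_eq_transpose_of_trivial] at this
    have := h1.conjTranspose_mul_mul_same Q
    rwa [conjTranspose_eq_transpose_of_trivial, hQt] at this
  -- explicit form of N
  have hMexp : Rᵀ * (δ⁻¹ • S) * R = A - δ⁻¹ • (A * P * A) := by
    rw [hRt, Matrix.mul_smul, Matrix.smul_mul, hS]
    have h1 : R * (δ • (1:Matrix (Fin n) (Fin n) ℝ) - T) * R
        = δ • A - A * P * A := by
      rw [mul_sub, sub_mul, Matrix.mul_smul, mul_one, Matrix.smul_mul, hRR]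
      congr 1
      rw [hT, ← hRR]; noncomm_ring
    rw [h1, smul_sub, smul_smul, inv_mul_cancel₀ hδne, one_smul]
  have hNexp : N = Q * A * Q - δ⁻¹ • (Q * A * P * A * Q) := by
    rw [hN, hMexp, mul_sub, sub_mul, Matrix.mul_smul, Matrix.smul_mul]
    congr 2
    noncomm_ring
  obtain ⟨Wm, hWW, hWt⟩ := sqrt_exists hNpsd
  have hPN : P * N = 0 := by
    rw [hN, ← Matrix.mul_assoc, ← Matrix.mul_assoc, hPQ, Matrix.zero_mul, Matrix.zero_mul]
  have hWP : Wm * P = 0 := by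
    have h1 : (Wm * P)ᴴ * (Wm * P) = 0 := by
      rw [conjTranspose_eq_transpose_of_trivial, transpose_mul, hPt, hWt]
      calc P * Wm * (Wm * P) = P * (Wm * Wm) * P := by noncomm_ring
      _ = P * N * P := by rw [hWW]
      _ = 0 := by rw [hPN, Matrix.zero_mul]
    exact conjTranspose_mul_self_eq_zero.mp h1
  have hPW : P * Wm = 0 := by
    have := congrArg Matrix.transpose hWP
    rwa [transpose_mul, hPt, hWt, transpose_zero] at this
  -- the candidate
  obtain ⟨E, hE⟩ : ∃ E' : Matrix (Fin n) (Fin n) ℝ,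
      E' = s • P + s⁻¹ • (P * A * Q) + Wm := ⟨_, rfl⟩
  have hEt : Eᵀ = s • P + s⁻¹ • (Q * A * P) + Wm := by
    rw [hE, transpose_add, transpose_add, transpose_smul, transpose_smul, hPt, hWt,
      transpose_mul, transpose_mul, hQt, hAt, hPt, Matrix.mul_assoc]
  refine ⟨Eᵀ, ?_, ?_⟩
  · rw [transpose_transpose, hEt, hE]
    have f1 : P * (P * A * Q) = P * A * Q := by
      calc P * (P * A * Q) = (P * P) * A * Q := by noncomm_ring
      _ = P * A * Q := by rw [hPidem]
    have f2 : Wm * (P * A * Q) = 0 := by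
      calc Wm * (P * A * Q) = (Wm * P) * (A * Q) := by noncomm_ring
      _ = 0 := by rw [hWP, Matrix.zero_mul]
    have g1 : Q * A * P * P = Q * A * P := by rw [Matrix.mul_assoc, hPidem]
    have g2 : Q * A * P * (P * A * Q) = Q * A * P * A * Q := by
      calc Q * A * P * (P * A * Q) = Q * A * (P * P) * A * Q := by noncomm_ring
      _ = Q * A * P * A * Q := by rw [hPidem]
    have g3 : Q * A * P * Wm = 0 := by rw [Matrix.mul_assoc, hPW, Matrix.mul_zero]
    have hdecomp : A = δ • P + P * A * Q + Q * A * P + Q * A * Q := by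
      have h1 : A = (P + Q) * A * (P + Q) := by rw [hPQ1]; rw [one_mul, mul_one]
      rw [← h3]
      rw (occs := .pos [1]) [h1]
      noncomm_ring
    have expand : (s • P + s⁻¹ • (Q * A * P) + Wm) * (s • P + s⁻¹ • (P * A * Q) + Wm)
        = (s*s) • (P * P) + (s⁻¹ * s) • (P * (P * A * Q)) + s • (P * Wm)
          + (s * s⁻¹) • (Q * A * P * P) + (s⁻¹ * s⁻¹) • (Q * A * P * (P * A * Q))
          + s⁻¹ • (Q * A * P * Wm) + s • (Wm * P) + s⁻¹ • (Wm * (P * A * Q)) + Wm * Wm := by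
      simp only [Matrix.add_mul, Matrix.mul_add, Matrix.smul_mul, Matrix.mul_smul,
        smul_smul, smul_add]
      abel
    rw [expand, hPidem, f1, hPW, g1, g2, g3, hWP, f2, hWW, hNexp, hs2,
      mul_inv_cancel₀ hsne, inv_mul_cancel₀ hsne, hss, one_smul, one_smul]
    conv_rhs => rw [hdecomp]
    simp only [smul_zero]
    abel
  · have hEP : E * P = s • P := by
      rw [hE, Matrix.add_mul, Matrix.add_mul, Matrix.smul_mul, Matrix.smul_mul, hPidem,
        Matrix.mul_assoc, hQP, Matrix.mul_zero, smul_zero, add_zero, hWP, add_zero]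
    rw [hs] at hEP
    calc P * Eᵀ = (E * P)ᵀ := by rw [transpose_mul, hPt]
    _ = Real.sqrt δ • P := by rw [hEP, transpose_smul, hPt]

/-- Lemma auxid: for a symmetric positive definite `A` and `δ ≥ 0`, the conditions
(i) `C_X A C_X' = δ I` for some `C_X`, (ii) the same for every `C_X`,
(iii) `Π A Π = δ Π`, and (iv) `∃ D, D D' = A ∧ Π D = √δ Π` are equivalent, where
`Π = Π_{span(X)⊥}` is the orthogonal projection onto `span(X)⊥`. -/
theorem stmt12 {n k : ℕ} (hn : 2 ≤ n) (hk : k < n)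
    (X : Matrix (Fin n) (Fin k) ℝ) (hX : X.rank = k)
    (P : Matrix (Fin n) (Fin n) ℝ) (hPsymm : P.IsSymm) (hPidem : P * P = P)
    (hPker : ∀ v : Fin n → ℝ, P.mulVec v = 0 ↔ v ∈ Set.range X.mulVec)
    (A : Matrix (Fin n) (Fin n) ℝ) (hA : A.PosDef)
    (δ : ℝ) (hδ : 0 ≤ δ) :
    List.TFAE
      [ ∃ C : Matrix (Fin (n - k)) (Fin n) ℝ,
          C * Cᵀ = 1 ∧ Cᵀ * C = P ∧ C * A * Cᵀ = δ • (1 : Matrix (Fin (n - k)) (Fin (n - k)) ℝ),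
        ∀ C : Matrix (Fin (n - k)) (Fin n) ℝ,
          C * Cᵀ = 1 → Cᵀ * C = P → C * A * Cᵀ = δ • (1 : Matrix (Fin (n - k)) (Fin (n - k)) ℝ),
        P * A * P = δ • P,
        ∃ D : Matrix (Fin n) (Fin n) ℝ, D * Dᵀ = A ∧ P * D = Real.sqrt δ • P ] := by
  have hPt : Pᵀ = P := hPsymm
  tfae_have 1 → 3 := by
    rintro ⟨C, h1, h2, h3⟩
    calc P * A * P = (Cᵀ * C) * A * (Cᵀ * C) := by rw [h2]
    _ = Cᵀ * (C * A * Cᵀ) * C := by simp only [Matrix.mul_assoc]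
    _ = Cᵀ * (δ • (1 : Matrix (Fin (n - k)) (Fin (n - k)) ℝ)) * C := by rw [h3]
    _ = δ • (Cᵀ * C) := by rw [Matrix.mul_smul, Matrix.mul_one, Matrix.smul_mul]
    _ = δ • P := by rw [h2]
  tfae_have 3 → 2 := by
    intro h3 C h1 h2
    have hc : C * P = C := by rw [← h2, ← Matrix.mul_assoc, h1, Matrix.one_mul]
    have hc2 : P * Cᵀ = Cᵀ := by rw [← h2, Matrix.mul_assoc, h1, Matrix.mul_one]
    calc C * A * Cᵀ = (C * P) * A * (P * Cᵀ) := by rw [hc, hc2]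
    _ = C * (P * A * P) * Cᵀ := by simp only [Matrix.mul_assoc]
    _ = C * (δ • P) * Cᵀ := by rw [h3]
    _ = δ • (C * P * Cᵀ) := by rw [Matrix.mul_smul, Matrix.smul_mul]
    _ = δ • (1 : Matrix (Fin (n - k)) (Fin (n - k)) ℝ) := by rw [hc, h1]
  tfae_have 2 → 1 := by
    intro h2
    obtain ⟨C, hC1, hC2⟩ := exists_projC X hX P hPt hPidem hPker
    exact ⟨C, hC1, hC2, h2 C hC1 hC2⟩
  tfae_have 3 → 4 := by
    intro h3
    rcases hδ.lt_or_eq with hpos | heq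
    · exact three_to_four hPt hPidem hA hpos h3
    · exfalso
      rw [← heq, zero_smul] at h3
      have hex : ∃ v, P.mulVec v ≠ 0 := by
        by_contra h
        push_neg at h
        have htop : LinearMap.range X.mulVecLin = ⊤ := by
          rw [LinearMap.range_eq_top]
          intro v
          obtain ⟨u, hu⟩ := (hPker v).mp (h v)
          exact ⟨u, hu⟩
        have hrk : X.rank = n := by
          show Module.finrank ℝ (LinearMap.range X.mulVecLin) = n
          rw [htop, finrank_top]
          simp
        omega
      obtain ⟨v, hv⟩ := hex
      have hq := hA.dotProduct_mulVec_pos hv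
      rw [star_trivial] at hq
      have hvp : v ᵥ* P = P *ᵥ v := by conv_lhs => rw [← hPt, vecMul_transpose]
      have hcalc : P.mulVec v ⬝ᵥ A.mulVec (P.mulVec v) = v ⬝ᵥ (P * A * P).mulVec v := by
        calc P.mulVec v ⬝ᵥ A.mulVec (P.mulVec v) = (P.mulVec v) ⬝ᵥ ((A * P).mulVec v) := by
              rw [mulVec_mulVec]
        _ = (v ᵥ* P) ⬝ᵥ ((A * P).mulVec v) := by rw [hvp]
        _ = v ⬝ᵥ P.mulVec ((A * P).mulVec v) := (dotProduct_mulVec _ _ _).symm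
        _ = v ⬝ᵥ (P * A * P).mulVec v := by rw [mulVec_mulVec, Matrix.mul_assoc]
      rw [hcalc, h3, Matrix.zero_mulVec, dotProduct_zero] at hq
      exact lt_irrefl 0 hq
  tfae_have 4 → 3 := by
    rintro ⟨D, hDD, hPD⟩
    calc P * A * P = P * (D * Dᵀ) * P := by rw [hDD]
    _ = (P * D) * (P * D)ᵀ := by rw [transpose_mul, hPt]; noncomm_ring
    _ = (Real.sqrt δ • P) * (Real.sqrt δ • P)ᵀ := by rw [hPD]
    _ = (Real.sqrt δ * Real.sqrt δ) • (P * Pᵀ) := by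
          rw [transpose_smul, Matrix.smul_mul, Matrix.mul_smul, smul_smul]
    _ = δ • P := by rw [Real.mul_self_sqrt hδ, hPt, hPidem]
  tfae_finish
end

section
/- Let $W$ be an $n \times n$ real matrix with a positive real eigenvalue $\lambda_{\max}$ of algebraic multiplicity one dominating in absolute value all other eigenvalues, with zero diagonal and $W$ not the zero matrix, and let $\Sigma_{SEM}(\rho) = [(I_n - \rho W')(I_n - \rho W)]^{-1}$ for $\rho \in [0, \lambda_{\max}^{-1})$. If $\sigma_1^2 \Sigma_{SEM}(\rho_1) = \sigma_2^2 \Sigma_{SEM}(\rho_2)$ for $\rho_1, \rho_2 \in [0, \lambda_{\max}^{-1})$ and $\sigma_1, \sigma_2 \in (0, \infty)$, then $\rho_1 = \rho_2$ and $\sigma_1 = \sigma_2$. -/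
open Matrix Set

set_option maxHeartbeats 1000000

/-- Identifiability in the spatial error model: if
`σ₁² Σ_SEM(ρ₁) = σ₂² Σ_SEM(ρ₂)` with `Σ_SEM(ρ) = [(I - ρW')(I - ρW)]⁻¹`, then
`ρ₁ = ρ₂` and `σ₁ = σ₂`. -/
theorem stmt13 {n : ℕ} (hn : 2 ≤ n)
    (W : Matrix (Fin n) (Fin n) ℝ) (hdiag : ∀ i, W i i = 0) (hW0 : W ≠ 0)
    (lmax : ℝ) (hl : 0 < lmax)
    (f : Fin n → ℝ) (hf : f ≠ 0) (hWf : W.mulVec f = lmax • f)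
    (hmult : (Matrix.charpoly W).rootMultiplicity lmax = 1)
    (hdom : ∀ μ : ℂ, μ ∈ spectrum ℂ (W.map (Complex.ofReal)) → ‖μ‖ ≤ lmax)
    (σ₁ σ₂ ρ₁ ρ₂ : ℝ) (hσ₁ : 0 < σ₁) (hσ₂ : 0 < σ₂)
    (hρ₁ : ρ₁ ∈ Set.Ico (0:ℝ) lmax⁻¹) (hρ₂ : ρ₂ ∈ Set.Ico (0:ℝ) lmax⁻¹)
    (heq : σ₁ ^ 2 • ((1 - ρ₁ • W)ᵀ * (1 - ρ₁ • W))⁻¹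
         = σ₂ ^ 2 • ((1 - ρ₂ • W)ᵀ * (1 - ρ₂ • W))⁻¹) :
    ρ₁ = ρ₂ ∧ σ₁ = σ₂ := by
  obtain ⟨hρ₁0, hρ₁l⟩ := hρ₁
  obtain ⟨hρ₂0, hρ₂l⟩ := hρ₂
  -- basic bounds
  have hL : ∀ ρ : ℝ, 0 ≤ ρ → ρ < lmax⁻¹ → ρ * lmax < 1 := by
    intro ρ h0 hlt
    have := mul_lt_mul_of_pos_right hlt hl
    rwa [inv_mul_cancel₀ hl.ne'] at this
  have hL₁ : 0 < 1 - ρ₁ * lmax := by have := hL ρ₁ hρ₁0 hρ₁l; linarith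
  have hL₂ : 0 < 1 - ρ₂ * lmax := by have := hL ρ₂ hρ₂0 hρ₂l; linarith
  -- invertibility of 1 - ρ • W
  have hinv : ∀ ρ : ℝ, 0 ≤ ρ → ρ < lmax⁻¹ → IsUnit (1 - ρ • W).det := by
    intro ρ h0 hlt
    rw [isUnit_iff_ne_zero]
    intro hdet
    rcases eq_or_lt_of_le h0 with h0' | h0'
    · rw [← h0'] at hdet; simp at hdet
    · have hρne : ρ ≠ 0 := h0'.ne'
      have hmem : ((ρ⁻¹ : ℝ) : ℂ) ∈ spectrum ℂ (W.map Complex.ofReal) := by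
        rw [spectrum.mem_iff]
        intro hu
        rw [Matrix.isUnit_iff_isUnit_det] at hu
        have hkey : algebraMap ℂ (Matrix (Fin n) (Fin n) ℂ) ((ρ⁻¹ : ℝ) : ℂ)
              - W.map Complex.ofReal = Complex.ofRealHom.mapMatrix (ρ⁻¹ • (1 - ρ • W)) := by
          rw [Algebra.algebraMap_eq_smul_one]
          ext i j
          simp [Matrix.one_apply, smul_sub, smul_smul, inv_mul_cancel₀ hρne,
            Matrix.map_apply, Matrix.sub_apply, Matrix.smul_apply, RingHom.mapMatrix_apply]
          split_ifs <;> push_cast <;> ring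
        have hdet0 : (Complex.ofRealHom.mapMatrix (ρ⁻¹ • (1 - ρ • W))).det = 0 := by
          rw [← RingHom.map_det, Matrix.det_smul, hdet]
          simp
        rw [hkey, hdet0] at hu
        simp at hu
      have habs := hdom _ hmem
      rw [Complex.norm_real, Real.norm_eq_abs, abs_of_pos (inv_pos.mpr h0')] at habs
      have hmul : ρ⁻¹ * ρ = 1 := inv_mul_cancel₀ hρne
      have hml := mul_le_mul_of_nonneg_right habs h0'.le
      have := hL ρ h0 hlt
      nlinarith
  have hd₁ := hinv ρ₁ hρ₁0 hρ₁l
  have hd₂ := hinv ρ₂ hρ₂0 hρ₂l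
  have hB₁ : IsUnit ((1 - ρ₁ • W)ᵀ * (1 - ρ₁ • W)).det := by
    rw [Matrix.det_mul, Matrix.det_transpose]; exact hd₁.mul hd₁
  have hB₂ : IsUnit ((1 - ρ₂ • W)ᵀ * (1 - ρ₂ • W)).det := by
    rw [Matrix.det_mul, Matrix.det_transpose]; exact hd₂.mul hd₂
  -- matrix equation without inverses
  haveI i1 : Invertible (σ₁ ^ 2 : ℝ) := invertibleOfNonzero (by positivity)
  haveI i2 : Invertible (σ₂ ^ 2 : ℝ) := invertibleOfNonzero (by positivity)
  have h1 : (σ₁ ^ 2 • ((1 - ρ₁ • W)ᵀ * (1 - ρ₁ • W))⁻¹)⁻¹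
      = (σ₁ ^ 2)⁻¹ • ((1 - ρ₁ • W)ᵀ * (1 - ρ₁ • W)) := by
    rw [Matrix.inv_smul _ _ (Matrix.isUnit_nonsing_inv_det _ hB₁),
      Matrix.nonsing_inv_nonsing_inv _ hB₁, invOf_eq_inv]
  have h2 : (σ₂ ^ 2 • ((1 - ρ₂ • W)ᵀ * (1 - ρ₂ • W))⁻¹)⁻¹
      = (σ₂ ^ 2)⁻¹ • ((1 - ρ₂ • W)ᵀ * (1 - ρ₂ • W)) := by
    rw [Matrix.inv_smul _ _ (Matrix.isUnit_nonsing_inv_det _ hB₂),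
      Matrix.nonsing_inv_nonsing_inv _ hB₂, invOf_eq_inv]
  have hMeq : σ₂ ^ 2 • ((1 - ρ₁ • W)ᵀ * (1 - ρ₁ • W))
      = σ₁ ^ 2 • ((1 - ρ₂ • W)ᵀ * (1 - ρ₂ • W)) := by
    have h3 : (σ₁ ^ 2)⁻¹ • ((1 - ρ₁ • W)ᵀ * (1 - ρ₁ • W))
        = (σ₂ ^ 2)⁻¹ • ((1 - ρ₂ • W)ᵀ * (1 - ρ₂ • W)) := by
      rw [← h1, ← h2, heq]
    have h4 := congrArg (fun M => (σ₁ ^ 2 * σ₂ ^ 2) • M) h3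
    simp only [smul_smul] at h4
    have c1 : σ₁ ^ 2 * σ₂ ^ 2 * (σ₁ ^ 2)⁻¹ = σ₂ ^ 2 := by field_simp
    have c2 : σ₁ ^ 2 * σ₂ ^ 2 * (σ₂ ^ 2)⁻¹ = σ₁ ^ 2 := by field_simp
    rwa [c1, c2] at h4
  -- quadratic form with eigenvector
  have hAf : ∀ ρ : ℝ, (1 - ρ • W) *ᵥ f = (1 - ρ * lmax) • f := by
    intro ρ
    rw [Matrix.sub_mulVec, Matrix.one_mulVec, Matrix.smul_mulVec, hWf,
      sub_smul, one_smul, smul_smul]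
  have hquad : ∀ ρ : ℝ, f ⬝ᵥ ((1 - ρ • W)ᵀ * (1 - ρ • W)) *ᵥ f
      = (1 - ρ * lmax) ^ 2 * (f ⬝ᵥ f) := by
    intro ρ
    rw [← Matrix.mulVec_mulVec, Matrix.dotProduct_mulVec, Matrix.vecMul_transpose, hAf ρ]
    simp [smul_dotProduct, dotProduct_smul, smul_eq_mul]
    ring
  have hff : 0 < f ⬝ᵥ f := by
    rcases (Finset.sum_nonneg fun i _ => mul_self_nonneg (f i)).lt_or_eq with h | h
    · exact h
    · exact absurd (dotProduct_self_eq_zero.mp h.symm) hf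
  have hraw1 := congrArg (fun M => f ⬝ᵥ M *ᵥ f) hMeq
  simp only [Matrix.smul_mulVec, dotProduct_smul, smul_eq_mul, hquad] at hraw1
  have e1 : σ₂ ^ 2 * (1 - ρ₁ * lmax) ^ 2 = σ₁ ^ 2 * (1 - ρ₂ * lmax) ^ 2 :=
    mul_right_cancel₀ hff.ne' (by linear_combination hraw1)
  -- trace equation
  have htrW : Matrix.trace W = 0 := by simp [Matrix.trace, Matrix.diag, hdiag]
  have hexp : ∀ ρ : ℝ, (1 - ρ • W)ᵀ * (1 - ρ • W)
      = 1 - ρ • W - ρ • Wᵀ + (ρ * ρ) • (Wᵀ * W) := by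
    intro ρ
    simp only [Matrix.transpose_sub, Matrix.transpose_smul, Matrix.transpose_one,
      sub_mul, mul_sub, one_mul, mul_one, Matrix.smul_mul, Matrix.mul_smul, smul_smul]
    abel
  have htr : ∀ ρ : ℝ, Matrix.trace ((1 - ρ • W)ᵀ * (1 - ρ • W))
      = n + ρ ^ 2 * Matrix.trace (Wᵀ * W) := by
    intro ρ
    rw [hexp, Matrix.trace_add, Matrix.trace_sub, Matrix.trace_sub, Matrix.trace_one,
      Matrix.trace_smul, Matrix.trace_smul, Matrix.trace_smul, Matrix.trace_transpose, htrW]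
    simp only [smul_eq_mul, Fintype.card_fin]
    ring
  have ht0 : Matrix.trace (Wᵀ * W) = ∑ j, ∑ i, (W i j) * (W i j) := by
    simp [Matrix.trace, Matrix.diag, Matrix.mul_apply]
  have ht : 0 < Matrix.trace (Wᵀ * W) := by
    rw [ht0]
    have hnn : ∀ j ∈ Finset.univ, (0:ℝ) ≤ ∑ i, (W i j) * (W i j) :=
      fun j _ => Finset.sum_nonneg fun i _ => mul_self_nonneg _
    rcases (Finset.sum_nonneg hnn).lt_or_eq with h | h
    · exact h
    · exfalso
      apply hW0
      ext i j
      have hj := (Finset.sum_eq_zero_iff_of_nonneg hnn).mp h.symm j (Finset.mem_univ j)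
      have hi := (Finset.sum_eq_zero_iff_of_nonneg
        (fun i _ => mul_self_nonneg (W i j))).mp hj i (Finset.mem_univ i)
      simpa [mul_self_eq_zero] using hi
  have hraw2 := congrArg Matrix.trace hMeq
  simp only [Matrix.trace_smul, smul_eq_mul, htr] at hraw2
  -- final algebra
  set t := Matrix.trace (Wᵀ * W) with htdef
  have hD : ((n:ℝ) + ρ₁ ^ 2 * t) * (1 - ρ₂ * lmax) ^ 2
      = ((n:ℝ) + ρ₂ ^ 2 * t) * (1 - ρ₁ * lmax) ^ 2 := by
    apply mul_left_cancel₀ (pow_ne_zero 2 hσ₂.ne' : σ₂ ^ 2 ≠ 0)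
    linear_combination (1 - ρ₂ * lmax) ^ 2 * hraw2 - ((n:ℝ) + ρ₂ ^ 2 * t) * e1
  have hfac : (ρ₁ - ρ₂) * ((n:ℝ) * lmax * (2 - (ρ₁ + ρ₂) * lmax)
      + t * (ρ₁ + ρ₂ - 2 * ρ₁ * ρ₂ * lmax)) = 0 := by linear_combination hD
  have hnR : (2:ℝ) ≤ n := by exact_mod_cast hn
  have hK : 0 < (n:ℝ) * lmax * (2 - (ρ₁ + ρ₂) * lmax)
      + t * (ρ₁ + ρ₂ - 2 * ρ₁ * ρ₂ * lmax) := by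
    have h1 : 0 < (n:ℝ) * lmax * ((1 - ρ₁ * lmax) + (1 - ρ₂ * lmax)) :=
      mul_pos (mul_pos (by linarith : (0:ℝ) < n) hl) (by linarith)
    have h2 : 0 ≤ t * (ρ₁ * (1 - ρ₂ * lmax) + ρ₂ * (1 - ρ₁ * lmax)) :=
      mul_nonneg ht.le (add_nonneg (mul_nonneg hρ₁0 hL₂.le) (mul_nonneg hρ₂0 hL₁.le))
    have h3 : (n:ℝ) * lmax * (2 - (ρ₁ + ρ₂) * lmax) + t * (ρ₁ + ρ₂ - 2 * ρ₁ * ρ₂ * lmax)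
        = (n:ℝ) * lmax * ((1 - ρ₁ * lmax) + (1 - ρ₂ * lmax))
          + t * (ρ₁ * (1 - ρ₂ * lmax) + ρ₂ * (1 - ρ₁ * lmax)) := by ring
    rw [h3]
    linarith
  have hρeq : ρ₁ = ρ₂ := by
    rcases mul_eq_zero.mp hfac with h | h
    · linarith
    · linarith
  refine ⟨hρeq, ?_⟩
  rw [hρeq] at hraw2
  have hP : (0:ℝ) < (n:ℝ) + ρ₂ ^ 2 * t := by positivity
  have hσsq : σ₂ ^ 2 = σ₁ ^ 2 := mul_right_cancel₀ hP.ne' hraw2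
  nlinarith [hσ₁, hσ₂, hσsq]
end

section
/- Let $W$ be as in the SEM assumptions with dominant eigenvalue $\lambda_{\max} > 0$ of algebraic multiplicity one and normalized eigenvector $f_{\max}$. Then for every $\rho \in [0, \lambda_{\max}^{-1})$ the matrix $(I_n - \rho W)^{-1}$ equals the norm-convergent series $\sum_{j=0}^{\infty} \rho^j W^j$, and $\Pi_{\mathrm{span}(f_{\max})^{\perp}} (I_n - \rho W)^{-1} = (I_n - \rho \Pi_{\mathrm{span}(f_{\max})^{\perp}} W)^{-1} - \Pi_{\mathrm{span}(f_{\max})}$; moreover this converges as $\rho \to \lambda_{\max}^{-1}$ to $\Lambda = (I_n - \lambda_{\max}^{-1}\Pi_{\mathrm{span}(f_{\max})^{\perp}} W)^{-1} - \Pi_{\mathrm{span}(f_{\max})}$, which is well-defined and injective when restricted to $\mathrm{span}(f_{\max})^{\perp}$. -/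
open Matrix Filter Set

section Aux
open Polynomial
open scoped ENNReal NNReal Topology

private lemma eval_charpoly_aux {n : ℕ} (M : Matrix (Fin n) (Fin n) ℝ) (t : ℝ) :
    M.charpoly.eval t = (t • (1 : Matrix (Fin n) (Fin n) ℝ) - M).det := by
  rw [Matrix.charpoly, show Polynomial.eval t = ⇑(Polynomial.evalRingHom t) from rfl,
    RingHom.map_det]
  congr 1
  ext i j
  by_cases h : i = j
  · subst h
    simp [Matrix.charmatrix_apply_eq, Matrix.one_apply_eq]
  · simp [Matrix.charmatrix_apply_ne _ _ _ h, Matrix.one_apply_ne h]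

private lemma key_polyid {n : ℕ} (W : Matrix (Fin n) (Fin n) ℝ) (lmax : ℝ)
    (f : Fin n → ℝ) (hf : ∑ i, f i ^ 2 = 1) (hWf : W.mulVec f = lmax • f) :
    (Polynomial.X - Polynomial.C lmax) * ((1 - Matrix.vecMulVec f f) * W).charpoly
      = Polynomial.X * W.charpoly := by
  have hfne : f ≠ 0 := by
    intro h
    rw [h] at hf
    simp at hf
  have hff : f ⬝ᵥ f = 1 := by simpa [dotProduct, pow_two] using hf
  have hroot : (lmax • (1 : Matrix (Fin n) (Fin n) ℝ) - W).det = 0 := by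
    rw [← Matrix.exists_mulVec_eq_zero_iff]
    exact ⟨f, hfne, by
      simp [Matrix.sub_mulVec, Matrix.smul_mulVec, Matrix.one_mulVec, hWf]⟩
  have hfin : {x : ℝ | W.charpoly.IsRoot x}.Finite :=
    Polynomial.finite_setOf_isRoot (W.charpoly_monic).ne_zero
  refine Polynomial.eq_of_infinite_eval_eq _ _ (hfin.infinite_compl.mono ?_)
  intro t ht
  have hdet : (t • (1 : Matrix (Fin n) (Fin n) ℝ) - W).det ≠ 0 := by
    rw [← eval_charpoly_aux]; exact ht
  have htl : t ≠ lmax := by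
    rintro rfl
    rw [hroot] at hdet
    exact hdet rfl
  have htl' : t - lmax ≠ 0 := sub_ne_zero.mpr htl
  set A := t • (1 : Matrix (Fin n) (Fin n) ℝ) - W with hA
  have hAdet : IsUnit A.det := isUnit_iff_ne_zero.mpr hdet
  have hAf : A *ᵥ f = (t - lmax) • f := by
    simp [hA, Matrix.sub_mulVec, Matrix.smul_mulVec, Matrix.one_mulVec, hWf, sub_smul]
  have hAinvf : A⁻¹ *ᵥ f = (t - lmax)⁻¹ • f := by
    have h1 : A⁻¹ *ᵥ (A *ᵥ f) = f := by
      rw [Matrix.mulVec_mulVec, Matrix.nonsing_inv_mul _ hAdet, Matrix.one_mulVec]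
    rw [hAf, Matrix.mulVec_smul] at h1
    have h2 : (t - lmax)⁻¹ • ((t - lmax) • (A⁻¹ *ᵥ f)) = (t - lmax)⁻¹ • f :=
      congrArg (fun v => (t - lmax)⁻¹ • v) h1
    rw [smul_smul, inv_mul_cancel₀ htl', one_smul] at h2
    exact h2
  have hPW : (Matrix.vecMulVec f f) * W
      = Matrix.replicateCol Unit f * Matrix.replicateRow Unit (f ᵥ* W) := by
    ext i j
    simp [Matrix.mul_apply, Matrix.vecMulVec_apply, Matrix.replicateCol_apply, Matrix.replicateRow_apply,
      Matrix.vecMul, dotProduct, Finset.mul_sum, mul_assoc]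
  have hstep : (t • (1 : Matrix (Fin n) (Fin n) ℝ) - (1 - Matrix.vecMulVec f f) * W)
      = A + Matrix.replicateCol Unit f * Matrix.replicateRow Unit (f ᵥ* W) := by
    rw [← hPW, hA, Matrix.sub_mul, Matrix.one_mul]
    abel
  have hgf : (f ᵥ* W) ⬝ᵥ (A⁻¹ *ᵥ f) = (t - lmax)⁻¹ * lmax := by
    rw [hAinvf, dotProduct_smul, ← Matrix.dotProduct_mulVec, hWf, dotProduct_smul,
      hff]
    simp [mul_comm]
  have hdetQ : (t • (1 : Matrix (Fin n) (Fin n) ℝ) - (1 - Matrix.vecMulVec f f) * W).det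
      = A.det * (1 + (t - lmax)⁻¹ * lmax) := by
    rw [hstep, Matrix.det_add_replicateCol_mul_replicateRow hAdet]
    congr 1
    rw [Matrix.mul_assoc, ← Matrix.replicateCol_mulVec, Matrix.det_unique]
    simp [Matrix.replicateRow_mul_replicateCol_apply, hgf, Matrix.one_apply_eq]
  simp only [Set.mem_setOf_eq]
  rw [Polynomial.eval_mul, Polynomial.eval_mul, Polynomial.eval_sub, Polynomial.eval_X,
    Polynomial.eval_C, eval_charpoly_aux, eval_charpoly_aux, hdetQ]
  field_simp
  ring

private lemma neumann {n : ℕ} (W : Matrix (Fin n) (Fin n) ℝ) (lmax : ℝ) (hl : 0 < lmax)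
    (hdom : ∀ μ : ℂ, μ ∈ spectrum ℂ (W.map (Complex.ofReal)) → ‖μ‖ ≤ lmax)
    {ρ : ℝ} (h0 : 0 ≤ ρ) (h1 : ρ < lmax⁻¹) :
    HasSum (fun j : ℕ => ρ ^ j • W ^ j) (1 - ρ • W)⁻¹ ∧ IsUnit (1 - ρ • W) := by
  rcases eq_or_lt_of_le h0 with rfl | hρ
  · constructor
    · have h := hasSum_single (f := fun j : ℕ => (0:ℝ) ^ j • W ^ j) 0
        (fun b hb => by simp [zero_pow hb])
      simpa using h
    · simp
  · letI : NormedRing (Matrix (Fin n) (Fin n) ℝ) := Matrix.linftyOpNormedRing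
    letI : NormedAlgebra ℝ (Matrix (Fin n) (Fin n) ℝ) := Matrix.linftyOpNormedAlgebra
    letI : NormedRing (Matrix (Fin n) (Fin n) ℂ) := Matrix.linftyOpNormedRing
    letI : NormedAlgebra ℂ (Matrix (Fin n) (Fin n) ℂ) := Matrix.linftyOpNormedAlgebra
    set x : Matrix (Fin n) (Fin n) ℝ := ρ • W with hx
    set xc : Matrix (Fin n) (Fin n) ℂ := Complex.ofRealHom.mapMatrix x with hxc
    have hρl : ρ * lmax < 1 := by
      have := mul_lt_mul_of_pos_right h1 hl
      rwa [inv_mul_cancel₀ hl.ne'] at this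
    have hsr : spectralRadius ℂ xc < 1 := by
      have hbound : ∀ z ∈ spectrum ℂ xc, ‖z‖ ≤ ρ * lmax := by
        intro z hz
        have hxceq : xc = ((ρ : ℂ)) • (Complex.ofRealHom.mapMatrix W) := by
          rw [hxc, hx]
          ext i j
          simp [Matrix.map_apply]
        have hune : (ρ : ℂ) ≠ 0 := by exact_mod_cast hρ.ne'
        rw [hxceq, show ((ρ:ℂ) • Complex.ofRealHom.mapMatrix W)
            = (Units.mk0 (ρ:ℂ) hune) • Complex.ofRealHom.mapMatrix W from rfl,
          spectrum.unit_smul_eq_smul _ (Units.mk0 (ρ:ℂ) hune)] at hz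
        obtain ⟨w, hw, rfl⟩ := hz
        have hwle : ‖w‖ ≤ lmax := by
          apply hdom
          exact hw
        show ‖(ρ:ℂ) • w‖ ≤ ρ * lmax
        rw [norm_smul, Complex.norm_real, Real.norm_of_nonneg hρ.le]
        exact mul_le_mul_of_nonneg_left hwle hρ.le
      refine lt_of_le_of_lt (?_ : spectralRadius ℂ xc ≤ ENNReal.ofReal (ρ * lmax)) ?_
      · rw [spectralRadius]
        refine iSup₂_le fun z hz => ?_
        rw [← ENNReal.ofReal_coe_nnreal, coe_nnnorm]
        exact ENNReal.ofReal_le_ofReal (hbound z hz)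
      · exact ENNReal.ofReal_lt_one.mpr hρl
    obtain ⟨r, hrlt, hr1⟩ := ENNReal.lt_iff_exists_nnreal_btwn.mp hsr
    have hr1' : (r : ℝ) < 1 := by exact_mod_cast hr1
    have hgel := spectrum.pow_nnnorm_pow_one_div_tendsto_nhds_spectralRadius xc
    have hev : ∀ᶠ k : ℕ in atTop, (‖xc ^ k‖₊ : ℝ≥0∞) ^ (1/(k:ℝ)) < (r : ℝ≥0∞) :=
      hgel.eventually_lt_const hrlt
    have hmapnorm : ∀ M : Matrix (Fin n) (Fin n) ℝ, ‖Complex.ofRealHom.mapMatrix M‖₊ = ‖M‖₊ := by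
      intro M
      rw [Matrix.linfty_opNNNorm_def, Matrix.linfty_opNNNorm_def]
      refine congrArg _ (funext fun i => ?_)
      refine Finset.sum_congr rfl fun j _ => ?_
      simp [RingHom.mapMatrix_apply, Matrix.map_apply]
    have hev2 : ∀ᶠ k : ℕ in atTop, ‖x ^ k‖ ≤ (r : ℝ) ^ k := by
      filter_upwards [hev, Filter.eventually_ge_atTop 1] with k hk hk1
      have hk0 : (k : ℝ) ≠ 0 := Nat.cast_ne_zero.mpr (by omega)
      have h2 : (‖xc ^ k‖₊ : ℝ≥0∞) ≤ (r : ℝ≥0∞) ^ (k : ℝ) := by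
        calc (‖xc ^ k‖₊ : ℝ≥0∞) = ((‖xc ^ k‖₊ : ℝ≥0∞) ^ (1/(k:ℝ))) ^ (k:ℝ) := by
              rw [← ENNReal.rpow_mul, one_div, inv_mul_cancel₀ hk0, ENNReal.rpow_one]
          _ ≤ (r : ℝ≥0∞) ^ (k : ℝ) := ENNReal.rpow_le_rpow hk.le (Nat.cast_nonneg k)
      have h3 : (‖xc ^ k‖₊ : ℝ≥0∞) ≤ ((r ^ k : ℝ≥0) : ℝ≥0∞) := by
        rwa [ENNReal.coe_pow, ← ENNReal.rpow_natCast (r : ℝ≥0∞) k]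
      have h4 : ‖xc ^ k‖₊ ≤ r ^ k := by exact_mod_cast h3
      have h5 : ‖x ^ k‖₊ ≤ r ^ k := by
        rwa [← map_pow, hmapnorm] at h4
      exact_mod_cast h5
    have hsum : Summable (fun k : ℕ => x ^ k) := by
      refine Summable.of_norm_bounded_eventually_nat (g := fun k => (r : ℝ) ^ k)
        (summable_geometric_of_lt_one r.coe_nonneg hr1') ?_
      exact hev2
    have hx0 : Tendsto (fun k : ℕ => x ^ k) atTop (nhds 0) :=
      squeeze_zero_norm' hev2 (tendsto_pow_atTop_nhds_zero_of_lt_one r.coe_nonneg hr1')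
    obtain ⟨S, hS⟩ := hsum
    have hmul : (1 - x) * S = 1 := by
      have hh1 := hS.mul_left (1 - x)
      have hh2 : (fun k : ℕ => (1 - x) * x ^ k) = (fun k => x ^ k - x ^ (k+1)) := by
        funext k
        rw [sub_mul, one_mul, pow_succ']
      rw [hh2] at hh1
      have hh3 := hh1.tendsto_sum_nat
      rw [show (fun m : ℕ => ∑ k ∈ Finset.range m, (x ^ k - x ^ (k+1)))
          = fun m => x ^ 0 - x ^ m from funext fun m => Finset.sum_range_sub' _ m] at hh3
      have hh4 : Tendsto (fun m : ℕ => x ^ 0 - x ^ m) atTop (nhds (x ^ 0 - 0)) :=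
        tendsto_const_nhds.sub hx0
      have := tendsto_nhds_unique hh3 hh4
      simpa using this
    have hmul2 : S * (1 - x) = 1 := by
      have hh1 := hS.mul_right (1 - x)
      have hh2 : (fun k : ℕ => x ^ k * (1 - x)) = (fun k => x ^ k - x ^ (k+1)) := by
        funext k
        rw [mul_sub, mul_one, pow_succ]
      rw [hh2] at hh1
      have hh3 := hh1.tendsto_sum_nat
      rw [show (fun m : ℕ => ∑ k ∈ Finset.range m, (x ^ k - x ^ (k+1)))
          = fun m => x ^ 0 - x ^ m from funext fun m => Finset.sum_range_sub' _ m] at hh3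
      have hh4 : Tendsto (fun m : ℕ => x ^ 0 - x ^ m) atTop (nhds (x ^ 0 - 0)) :=
        tendsto_const_nhds.sub hx0
      have := tendsto_nhds_unique hh3 hh4
      simpa using this
    have hinv : (1 - x)⁻¹ = S := Matrix.inv_eq_right_inv hmul
    refine ⟨?_, ⟨⟨1 - x, S, hmul, hmul2⟩, rfl⟩⟩
    have hfe : (fun j : ℕ => ρ ^ j • W ^ j) = fun j => x ^ j :=
      funext fun j => (smul_pow ρ W j).symm
    rw [hfe, hinv]
    exact hS

end Aux

/-- Lemma SARL (key computations): for `ρ ∈ [0, λmax⁻¹)` the matrix `(I - ρW)⁻¹` equals the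
norm-convergent Neumann series `∑ ρʲ Wʲ`, and
`Π_{f⊥}(I-ρW)⁻¹ = (I - ρ Π_{f⊥} W)⁻¹ - Π_f` where `Π_f = f fᵀ`; moreover
`I - λmax⁻¹ Π_{f⊥} W` is invertible and `Π_{f⊥}(I-ρW)⁻¹` converges, as `ρ → λmax⁻¹`, to
`Λ = (I - λmax⁻¹ Π_{f⊥} W)⁻¹ - Π_f`, which is injective on `span(f)⊥`. -/
theorem stmt14 {n : ℕ} (hn : 2 ≤ n)
    (W : Matrix (Fin n) (Fin n) ℝ) (hdiag : ∀ i, W i i = 0)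
    (lmax : ℝ) (hl : 0 < lmax)
    (f : Fin n → ℝ) (hf : ∑ i, f i ^ 2 = 1) (hWf : W.mulVec f = lmax • f)
    (hmult : (Matrix.charpoly W).rootMultiplicity lmax = 1)
    (hdom : ∀ μ : ℂ, μ ∈ spectrum ℂ (W.map (Complex.ofReal)) → ‖μ‖ ≤ lmax) :
    (∀ ρ ∈ Set.Ico (0:ℝ) lmax⁻¹,
        HasSum (fun j : ℕ => ρ ^ j • W ^ j) (1 - ρ • W)⁻¹ ∧
        (1 - Matrix.vecMulVec f f) * (1 - ρ • W)⁻¹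
          = (1 - ρ • ((1 - Matrix.vecMulVec f f) * W))⁻¹ - Matrix.vecMulVec f f) ∧
    IsUnit (1 - lmax⁻¹ • ((1 - Matrix.vecMulVec f f) * W)) ∧
    Tendsto (fun ρ => (1 - Matrix.vecMulVec f f) * (1 - ρ • W)⁻¹)
      (nhdsWithin lmax⁻¹ (Set.Ico 0 lmax⁻¹))
      (nhds ((1 - lmax⁻¹ • ((1 - Matrix.vecMulVec f f) * W))⁻¹ - Matrix.vecMulVec f f)) ∧
    (∀ h : Fin n → ℝ, h ⬝ᵥ f = 0 →
      ((1 - lmax⁻¹ • ((1 - Matrix.vecMulVec f f) * W))⁻¹ - Matrix.vecMulVec f f).mulVec h = 0 →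
      h = 0) := by
  set P : Matrix (Fin n) (Fin n) ℝ := Matrix.vecMulVec f f with hP
  have hff : f ⬝ᵥ f = 1 := by simpa [dotProduct, pow_two] using hf
  have hPP : P * P = P := by
    ext i j
    simp only [hP, Matrix.mul_apply, Matrix.vecMulVec_apply]
    calc ∑ k, (f i * f k) * (f k * f j) = (f i * f j) * ∑ k, f k ^ 2 := by
          rw [Finset.mul_sum]; exact Finset.sum_congr rfl fun k _ => by ring
      _ = f i * f j := by rw [hf, mul_one]
  have hWP : W * P = lmax • P := by
    ext i j
    simp only [Matrix.mul_apply, Matrix.vecMulVec_apply, Matrix.smul_apply, hP, smul_eq_mul]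
    calc ∑ k, W i k * (f k * f j) = (∑ k, W i k * f k) * f j := by
          rw [Finset.sum_mul]; exact Finset.sum_congr rfl fun k _ => by ring
      _ = lmax * (f i * f j) := by
          have h2 : (W *ᵥ f) i = lmax * f i := by rw [hWf]; simp
          rw [show ∑ k, W i k * f k = (W *ᵥ f) i from rfl, h2]; ring
  have hQWP : ((1 - P) * W) * P = 0 := by
    rw [Matrix.mul_assoc, hWP, Matrix.mul_smul, Matrix.sub_mul, Matrix.one_mul, hPP,
      sub_self, smul_zero]
  have hQWQ : ((1 - P) * W) * (1 - P) = (1 - P) * W := by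
    rw [Matrix.mul_sub, Matrix.mul_one, hQWP, sub_zero]
  have hpart1 : ∀ ρ ∈ Set.Ico (0:ℝ) lmax⁻¹,
      HasSum (fun j : ℕ => ρ ^ j • W ^ j) (1 - ρ • W)⁻¹ ∧
      (1 - P) * (1 - ρ • W)⁻¹ = (1 - ρ • ((1 - P) * W))⁻¹ - P := by
    intro ρ hρ
    obtain ⟨hsum, hU⟩ := neumann W lmax hl hdom hρ.1 hρ.2
    refine ⟨hsum, ?_⟩
    have hdetU : IsUnit (1 - ρ • W).det := (Matrix.isUnit_iff_isUnit_det _).mp hU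
    have hinv : (1 - ρ • W) * (1 - ρ • W)⁻¹ = 1 := Matrix.mul_nonsing_inv _ hdetU
    have hXQ : (1 - ρ • ((1 - P) * W)) * (1 - P) = (1 - P) * (1 - ρ • W) := by
      rw [Matrix.sub_mul, Matrix.one_mul, Matrix.smul_mul, hQWQ, Matrix.mul_sub,
        Matrix.mul_one, Matrix.mul_smul]
    have h1 : (1 - ρ • ((1 - P) * W)) * ((1 - P) * (1 - ρ • W)⁻¹) = (1 - P) := by
      rw [← Matrix.mul_assoc, hXQ, Matrix.mul_assoc, hinv, Matrix.mul_one]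
    have h2 : (1 - ρ • ((1 - P) * W)) * P = P := by
      rw [Matrix.sub_mul, Matrix.one_mul, Matrix.smul_mul, hQWP, smul_zero, sub_zero]
    have hXB : (1 - ρ • ((1 - P) * W)) * ((1 - P) * (1 - ρ • W)⁻¹ + P) = 1 := by
      rw [Matrix.mul_add, h1, h2, sub_add_cancel]
    rw [Matrix.inv_eq_right_inv hXB, add_sub_cancel_right]
  -- invertibility at the limit
  have hid := key_polyid W lmax f hf hWf
  have hqne : ((1 - P) * W).charpoly ≠ 0 := (Matrix.charpoly_monic _).ne_zero
  have hpne : W.charpoly ≠ 0 := (Matrix.charpoly_monic _).ne_zero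
  have hrm : Polynomial.rootMultiplicity lmax
        ((Polynomial.X - Polynomial.C lmax) * ((1 - P) * W).charpoly)
      = 1 + Polynomial.rootMultiplicity lmax ((1 - P) * W).charpoly := by
    rw [Polynomial.rootMultiplicity_mul (mul_ne_zero (Polynomial.X_sub_C_ne_zero lmax) hqne),
      Polynomial.rootMultiplicity_X_sub_C_self]
  have hrm2 : Polynomial.rootMultiplicity lmax (Polynomial.X * W.charpoly) = 1 := by
    rw [Polynomial.rootMultiplicity_mul (mul_ne_zero Polynomial.X_ne_zero hpne),
      Polynomial.rootMultiplicity_eq_zero (by simpa [Polynomial.IsRoot] using hl.ne'), hmult,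
      zero_add]
  have hq0 : Polynomial.rootMultiplicity lmax ((1 - P) * W).charpoly = 0 := by
    have h3 : 1 + Polynomial.rootMultiplicity lmax ((1 - P) * W).charpoly = 1 := by
      rw [← hrm, hid, hrm2]
    omega
  have hqeval : Polynomial.eval lmax ((1 - P) * W).charpoly ≠ 0 := by
    intro h
    exact hqne (Polynomial.rootMultiplicity_eq_zero_iff.mp hq0 h)
  have hdetQl : (lmax • (1 : Matrix (Fin n) (Fin n) ℝ) - (1 - P) * W).det ≠ 0 := by
    rw [← eval_charpoly_aux]; exact hqeval
  have hX0eq : (1 - lmax⁻¹ • ((1 - P) * W))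
      = lmax⁻¹ • (lmax • (1 : Matrix (Fin n) (Fin n) ℝ) - (1 - P) * W) := by
    rw [smul_sub, smul_smul, inv_mul_cancel₀ hl.ne', one_smul]
  have hdetX0 : (1 - lmax⁻¹ • ((1 - P) * W)).det ≠ 0 := by
    rw [hX0eq, Matrix.det_smul]
    exact mul_ne_zero (pow_ne_zero _ (inv_ne_zero hl.ne')) hdetQl
  have hUX0 : IsUnit (1 - lmax⁻¹ • ((1 - P) * W)) :=
    (Matrix.isUnit_iff_isUnit_det _).mpr (isUnit_iff_ne_zero.mpr hdetX0)
  have hcont : ContinuousAt (fun ρ : ℝ => (1 - ρ • ((1 - P) * W))⁻¹) lmax⁻¹ := by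
    have hM : Continuous (fun ρ : ℝ => (1 : Matrix (Fin n) (Fin n) ℝ) - ρ • ((1 - P) * W)) :=
      continuous_const.sub (continuous_id.smul continuous_const)
    have hdetc : Continuous fun ρ : ℝ =>
        ((1 : Matrix (Fin n) (Fin n) ℝ) - ρ • ((1 - P) * W)).det := hM.matrix_det
    have hadjc : Continuous fun ρ : ℝ =>
        ((1 : Matrix (Fin n) (Fin n) ℝ) - ρ • ((1 - P) * W)).adjugate := hM.matrix_adjugate
    have hca := ((hdetc.continuousAt.inv₀ hdetX0).smul hadjc.continuousAt)
    have heq : (fun ρ : ℝ => (1 - ρ • ((1 - P) * W))⁻¹)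
        = fun ρ : ℝ => (((1 : Matrix (Fin n) (Fin n) ℝ) - ρ • ((1 - P) * W)).det)⁻¹
            • ((1 : Matrix (Fin n) (Fin n) ℝ) - ρ • ((1 - P) * W)).adjugate := by
      funext ρ
      rw [Matrix.inv_def, Ring.inverse_eq_inv]
    rw [heq]
    exact hca
  have htend : Tendsto (fun ρ : ℝ => (1 - P) * (1 - ρ • W)⁻¹)
      (nhdsWithin lmax⁻¹ (Set.Ico 0 lmax⁻¹))
      (nhds ((1 - lmax⁻¹ • ((1 - P) * W))⁻¹ - P)) := by
    have h1 : Tendsto (fun ρ : ℝ => (1 - ρ • ((1 - P) * W))⁻¹ - P)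
        (nhdsWithin lmax⁻¹ (Set.Ico 0 lmax⁻¹))
        (nhds ((1 - lmax⁻¹ • ((1 - P) * W))⁻¹ - P)) :=
      (hcont.tendsto.mono_left nhdsWithin_le_nhds).sub tendsto_const_nhds
    refine h1.congr' ?_
    filter_upwards [self_mem_nhdsWithin] with ρ hρ
    exact ((hpart1 ρ hρ).2).symm
  refine ⟨hpart1, hUX0, htend, ?_⟩
  intro h hhf hΛ
  have hfh : f ⬝ᵥ h = 0 := by rw [dotProduct_comm]; exact hhf
  have hPh : P *ᵥ h = 0 := by
    funext i
    have h2 : (P *ᵥ h) i = f i * (f ⬝ᵥ h) := by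
      simp [hP, Matrix.mulVec, Matrix.vecMulVec_apply, dotProduct, Finset.mul_sum,
        mul_assoc]
    rw [h2, hfh, mul_zero]
    rfl
  have hX0h : (1 - lmax⁻¹ • ((1 - P) * W))⁻¹ *ᵥ h = 0 := by
    have h3 := hΛ
    rw [Matrix.sub_mulVec, hPh, sub_zero] at h3
    exact h3
  have h1 : (1 - lmax⁻¹ • ((1 - P) * W)) *ᵥ ((1 - lmax⁻¹ • ((1 - P) * W))⁻¹ *ᵥ h) = h := by
    rw [Matrix.mulVec_mulVec, Matrix.mul_nonsing_inv _ (isUnit_iff_ne_zero.mpr hdetX0),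
      Matrix.one_mulVec]
  rw [hX0h, Matrix.mulVec_zero] at h1
  exact h1.symm
end

section
/- Let $W$ be a matrix as in the SEM assumptions with dominant eigenvalue $\lambda_{\max}$ (algebraic multiplicity one) and normalized eigenvector $f_{\max}$, and let $X \in \mathbb{R}^{n\times k}$ ($n > k$) be such that $\mathrm{span}(X)^{\perp} \subseteq \mathrm{Eig}(W', \lambda)$ for some real eigenvalue $\lambda$ of $W'$. Then for every $0 \leq \rho < \lambda_{\max}^{-1}$: $\Pi_{\mathrm{span}(X)^{\perp}} (I_n - \rho W)^{-1} = (1 - \rho\lambda)^{-1} \Pi_{\mathrm{span}(X)^{\perp}}$, and $C_X \Sigma_{SEM}(\rho) C_X' = (1 - \rho\lambda)^{-2} I_{n-k}$, where $\Sigma_{SEM}(\rho) = [(I_n - \rho W')(I_n - \rho W)]^{-1}$. -/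
open Matrix Set

lemma aux_mem_spectrum {n : ℕ} (M : Matrix (Fin n) (Fin n) ℝ) (μ : ℝ)
    (h : (μ • (1 : Matrix (Fin n) (Fin n) ℝ) - M).det = 0) :
    (μ : ℂ) ∈ spectrum ℂ (M.map Complex.ofReal) := by
  rw [spectrum.mem_iff]
  intro hu
  rw [Matrix.isUnit_iff_isUnit_det] at hu
  have hmap : ((μ • (1 : Matrix (Fin n) (Fin n) ℝ) - M).map Complex.ofReal)
      = algebraMap ℂ (Matrix (Fin n) (Fin n) ℂ) (μ : ℂ) - M.map Complex.ofReal := by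
    rw [Algebra.algebraMap_eq_smul_one]
    ext i j
    by_cases hij : i = j <;>
      simp [Matrix.map_apply, Matrix.one_apply, hij]
  have hdet : (algebraMap ℂ (Matrix (Fin n) (Fin n) ℂ) (μ : ℂ) - M.map Complex.ofReal).det = 0 := by
    rw [← hmap]
    have := (Complex.ofRealHom.map_det (μ • (1 : Matrix (Fin n) (Fin n) ℝ) - M)).symm
    rw [RingHom.mapMatrix_apply] at this
    rw [show (Complex.ofReal : ℝ → ℂ) = ⇑Complex.ofRealHom from rfl, this, h, map_zero]
  rw [hdet] at hu
  exact hu.ne_zero rfl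

/-- Lemma SEMID: if `span(X)⊥ ⊆ Eig(W', λ)` then
`Π_{span(X)⊥}(I - ρW)⁻¹ = (1-ρλ)⁻¹ Π_{span(X)⊥}` and
`C_X Σ_SEM(ρ) C_X' = (1-ρλ)⁻² I` for every `ρ ∈ [0, λmax⁻¹)`, where
`Σ_SEM(ρ) = [(I-ρW')(I-ρW)]⁻¹`. -/
theorem stmt15 {n k : ℕ} (hn : 2 ≤ n) (hk : k < n)
    (W : Matrix (Fin n) (Fin n) ℝ) (hdiag : ∀ i, W i i = 0)
    (lmax : ℝ) (hl : 0 < lmax)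
    (f : Fin n → ℝ) (hf : ∑ i, f i ^ 2 = 1) (hWf : W.mulVec f = lmax • f)
    (hmult : (Matrix.charpoly W).rootMultiplicity lmax = 1)
    (hdom : ∀ μ : ℂ, μ ∈ spectrum ℂ (W.map (Complex.ofReal)) → ‖μ‖ ≤ lmax)
    (X : Matrix (Fin n) (Fin k) ℝ) (hX : X.rank = k)
    (C : Matrix (Fin (n - k)) (Fin n) ℝ)
    (hC1 : C * Cᵀ = 1)
    (hC2 : ∀ v : Fin n → ℝ, (Cᵀ * C).mulVec v = 0 ↔ v ∈ Set.range X.mulVec)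
    (lam : ℝ) (hlam : ∃ v ≠ 0, Wᵀ.mulVec v = lam • v)
    (heig : ∀ v : Fin n → ℝ, (∀ w ∈ Set.range X.mulVec, v ⬝ᵥ w = 0) →
      Wᵀ.mulVec v = lam • v) :
    ∀ ρ ∈ Set.Ico (0:ℝ) lmax⁻¹,
      (Cᵀ * C) * (1 - ρ • W)⁻¹ = (1 - ρ * lam)⁻¹ • (Cᵀ * C) ∧
      C * ((1 - ρ • W)ᵀ * (1 - ρ • W))⁻¹ * Cᵀ
        = ((1 - ρ * lam) ^ 2)⁻¹ • (1 : Matrix (Fin (n - k)) (Fin (n - k)) ℝ) := by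
  -- |lam| ≤ lmax
  have hlamb : |lam| ≤ lmax := by
    obtain ⟨v, hv0, hv⟩ := hlam
    have hz : (lam • (1 : Matrix (Fin n) (Fin n) ℝ) - Wᵀ).mulVec v = 0 := by
      simp [Matrix.sub_mulVec, Matrix.smul_mulVec, hv]
    have hdet : (lam • (1 : Matrix (Fin n) (Fin n) ℝ) - Wᵀ).det = 0 :=
      Matrix.exists_mulVec_eq_zero_iff.mp ⟨v, hv0, hz⟩
    have hdet' : (lam • (1 : Matrix (Fin n) (Fin n) ℝ) - W).det = 0 := by
      rw [← Matrix.det_transpose]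
      simpa [Matrix.transpose_sub, Matrix.transpose_smul] using hdet
    have := hdom lam (aux_mem_spectrum W lam hdet')
    simpa using this
  intro ρ hρ
  obtain ⟨hρ0, hρ1⟩ := hρ
  set A : Matrix (Fin n) (Fin n) ℝ := 1 - ρ • W with hA
  -- invertibility of A
  have hdetA : IsUnit A.det := by
    rcases eq_or_lt_of_le hρ0 with h0 | h0
    · simp [hA, ← h0]
    · by_contra hns
      have hdet0 : A.det = 0 := by
        by_contra hne
        exact hns (isUnit_iff_ne_zero.mpr hne)
      have hscal : ρ⁻¹ • (1 : Matrix (Fin n) (Fin n) ℝ) - W = ρ⁻¹ • A := by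
        rw [hA, smul_sub, smul_smul, inv_mul_cancel₀ (ne_of_gt h0), one_smul]
      have hdet2 : (ρ⁻¹ • (1 : Matrix (Fin n) (Fin n) ℝ) - W).det = 0 := by
        rw [hscal, Matrix.det_smul, hdet0, mul_zero]
      have := hdom (ρ⁻¹ : ℝ) (aux_mem_spectrum W ρ⁻¹ hdet2)
      have hrl : ρ * lmax < 1 := by
        calc ρ * lmax < lmax⁻¹ * lmax := by nlinarith
          _ = 1 := inv_mul_cancel₀ hl.ne'
      have hlt : lmax < ρ⁻¹ := by
        have h2 := mul_lt_mul_of_pos_left hrl (inv_pos.mpr h0)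
        rw [← mul_assoc, inv_mul_cancel₀ h0.ne', one_mul, mul_one] at h2
        exact h2
      simp only [Complex.norm_real, Real.norm_eq_abs] at this
      rw [abs_of_pos (inv_pos.mpr h0)] at this
      linarith
  -- c ≠ 0
  have hc : (1 - ρ * lam) ≠ 0 := by
    have habs : |ρ * lam| < 1 := by
      rcases eq_or_lt_of_le hρ0 with h0 | h0
      · simp [← h0]
      · rw [abs_mul, abs_of_pos h0]
        calc ρ * |lam| ≤ ρ * lmax := by nlinarith
          _ < lmax⁻¹ * lmax := by nlinarith
          _ = 1 := inv_mul_cancel₀ hl.ne'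
    have hlt : ρ * lam < 1 := lt_of_le_of_lt (le_abs_self _) habs
    intro h
    linarith
  set P : Matrix (Fin n) (Fin n) ℝ := Cᵀ * C with hP
  -- P symmetric
  have hPT : Pᵀ = P := by rw [hP, Matrix.transpose_mul, Matrix.transpose_transpose]
  -- P v is orthogonal to range X for any v
  have horth : ∀ v : Fin n → ℝ, ∀ w ∈ Set.range X.mulVec, (P.mulVec v) ⬝ᵥ w = 0 := by
    intro v w hw
    have hPw : P.mulVec w = 0 := (hC2 w).mpr hw
    calc (P.mulVec v) ⬝ᵥ w = v ⬝ᵥ (Pᵀ.mulVec w) := by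
          rw [Matrix.dotProduct_mulVec, Matrix.vecMul_transpose]
      _ = v ⬝ᵥ (P.mulVec w) := by rw [hPT]
      _ = 0 := by rw [hPw, dotProduct_zero]
  -- Wᵀ * P = lam • P
  have hWP : Wᵀ * P = lam • P := by
    ext i j
    have := heig (P.mulVec (Pi.single j 1)) (horth (Pi.single j 1))
    have h1 : (Wᵀ * P).mulVec (Pi.single j 1) = lam • P.mulVec (Pi.single j 1) := by
      rw [← Matrix.mulVec_mulVec, this]
    have h2 := congrFun h1 i
    simpa [Matrix.mulVec_single_one] using h2
  -- P * W = lam • P  (transpose)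
  have hPW : P * W = lam • P := by
    have := congrArg Matrix.transpose hWP
    rw [Matrix.transpose_mul, Matrix.transpose_transpose, hPT, Matrix.transpose_smul, hPT] at this
    exact this
  -- P * A = c • P
  have hPA : P * A = (1 - ρ * lam) • P := by
    rw [hA, Matrix.mul_sub, Matrix.mul_one, Matrix.mul_smul, hPW, sub_smul, one_smul,
      smul_smul]
  -- P * A⁻¹ = c⁻¹ • P
  have hPAinv : P * A⁻¹ = (1 - ρ * lam)⁻¹ • P := by
    have h1 : P * A * A⁻¹ = ((1 - ρ * lam) • P) * A⁻¹ := by rw [hPA]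
    rw [Matrix.mul_assoc, Matrix.mul_nonsing_inv A hdetA, Matrix.mul_one,
      Matrix.smul_mul] at h1
    calc P * A⁻¹ = (1 - ρ * lam)⁻¹ • ((1 - ρ * lam) • (P * A⁻¹)) := by
          rw [smul_smul, inv_mul_cancel₀ hc, one_smul]
      _ = (1 - ρ * lam)⁻¹ • P := by rw [← h1]
  refine ⟨hPAinv, ?_⟩
  -- C * P = C
  have hCP : C * P = C := by rw [hP, ← Matrix.mul_assoc, hC1, Matrix.one_mul]
  have hCAinv : C * A⁻¹ = (1 - ρ * lam)⁻¹ • C := by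
    rw [← hCP, Matrix.mul_assoc, hPAinv, Matrix.mul_smul, hCP]
  have hinvrev : (Aᵀ * A)⁻¹ = A⁻¹ * (Aᵀ)⁻¹ := Matrix.mul_inv_rev Aᵀ A
  have hCACT : C * A⁻¹ * Cᵀ = (1 - ρ * lam)⁻¹ • (1 : Matrix (Fin (n-k)) (Fin (n-k)) ℝ) := by
    rw [hCAinv, Matrix.smul_mul, hC1]
  calc C * (Aᵀ * A)⁻¹ * Cᵀ = C * (A⁻¹ * (Aᵀ)⁻¹) * Cᵀ := by rw [hinvrev]
    _ = (C * A⁻¹) * ((Aᵀ)⁻¹ * Cᵀ) := by simp only [Matrix.mul_assoc]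
    _ = ((1 - ρ * lam)⁻¹ • C) * ((A⁻¹)ᵀ * Cᵀ) := by rw [hCAinv, Matrix.transpose_nonsing_inv]
    _ = (1 - ρ * lam)⁻¹ • (C * ((A⁻¹)ᵀ * Cᵀ)) := by rw [Matrix.smul_mul]
    _ = (1 - ρ * lam)⁻¹ • ((C * A⁻¹ * Cᵀ)ᵀ) := by
        rw [Matrix.transpose_mul, Matrix.transpose_mul, Matrix.transpose_transpose]
    _ = ((1 - ρ * lam) ^ 2)⁻¹ • (1 : Matrix (Fin (n-k)) (Fin (n-k)) ℝ) := by
        rw [hCACT, Matrix.transpose_smul, Matrix.transpose_one, smul_smul, sq, mul_inv]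
end
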